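/- arXiv:1801.09478 — 9 statements merged into one kernel-verified Lean document; each statement's English description precedes it below -/
import Mathlib

section
/- Let 1 ≤ p ≤ q < ∞ and define r by 1/r = 1 - 1/p + 1/q. If f : ℕ → ℂ satisfies ∑_{n} |f(n)|^r < ∞, then the Dirichlet convolution operator x ↦ (n ↦ ∑_{d ∣ n} f(n/d) x_d) maps ℓ^p into ℓ^q, and ‖f ∗ x‖_q ≤ ‖f‖_r · ‖x‖_p for all x ∈ ℓ^p. -/
open scoped ENNReal NNReal
open MeasureTheory

/-- Three-function Hölder inequality for finite sums in `ℝ≥0∞`. -/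
lemma holder3_finset (s : Finset (ℕ × ℕ)) (g1 g2 g3 : ℕ × ℕ → ℝ≥0∞) {e1 e2 e3 : ℝ}
    (h1 : 0 < e1) (h2 : 0 ≤ e2) (h3 : 0 ≤ e3) (hsum : e1 + e2 + e3 = 1) :
    ∑ a ∈ s, g1 a ^ e1 * g2 a ^ e2 * g3 a ^ e3 ≤
      (∑ a ∈ s, g1 a) ^ e1 * (∑ a ∈ s, g2 a) ^ e2 * (∑ a ∈ s, g3 a) ^ e3 := by
  classical
  set h : Fin 3 → ℕ × ℕ → ℝ≥0∞ :=
    ![fun a => if a ∈ s then g1 a else 0, fun a => if a ∈ s then g2 a else 0,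
      fun a => if a ∈ s then g3 a else 0] with hh
  set e : Fin 3 → ℝ := ![e1, e2, e3] with he
  have key := ENNReal.lintegral_prod_norm_pow_le (μ := Measure.count) Finset.univ
      (f := h) (fun i _ => (measurable_of_countable (h i)).aemeasurable)
      (p := e) (by simp [he, Fin.sum_univ_three]; linarith) ?_
  · rw [lintegral_count] at key
    have hL : (∑' a : ℕ × ℕ, ∏ i, h i a ^ e i)
        = ∑ a ∈ s, g1 a ^ e1 * g2 a ^ e2 * g3 a ^ e3 := by
      rw [tsum_eq_sum (s := s) ?_]
      · refine Finset.sum_congr rfl fun a ha => ?_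
        simp [hh, he, Fin.prod_univ_three, ha, mul_assoc]
      · intro a ha
        have : h 0 a ^ e 0 = 0 := by
          simp [hh, he, ha, ENNReal.zero_rpow_of_pos h1]
        rw [Fin.prod_univ_three, this, zero_mul, zero_mul]
    have hR : ∀ (g : ℕ × ℕ → ℝ≥0∞), (∑' a : ℕ × ℕ, if a ∈ s then g a else 0) = ∑ a ∈ s, g a := by
      intro g
      rw [tsum_eq_sum (s := s) (fun a ha => by simp [ha])]
      exact Finset.sum_congr rfl fun a ha => by simp [ha]
    rw [hL] at key
    refine key.trans_eq ?_
    rw [Fin.prod_univ_three]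
    simp only [hh, he]
    rw [lintegral_count, lintegral_count, lintegral_count]
    simp [hR g1, hR g2, hR g3]
  · intro i _
    fin_cases i <;> simp [he, h1.le, h2, h3]

/-- Summing a product structure over divisorsAntidiagonal. -/
lemma tsum_antidiag (φ ψ : ℕ → ℝ≥0∞) (hφ : φ 0 = 0) (hψ : ψ 0 = 0) :
    ∑' n : ℕ, ∑ a ∈ n.divisorsAntidiagonal, φ a.1 * ψ a.2 = (∑' a, φ a) * ∑' b, ψ b := by
  have step1 : ∀ n : ℕ, ∑ a ∈ n.divisorsAntidiagonal, φ a.1 * ψ a.2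
      = ∑' a : ℕ × ℕ, if a ∈ n.divisorsAntidiagonal then φ a.1 * ψ a.2 else 0 := by
    intro n
    rw [tsum_eq_sum (s := n.divisorsAntidiagonal) (fun a ha => by simp [ha])]
    exact (Finset.sum_congr rfl fun a ha => by simp [ha]).symm
  calc ∑' n : ℕ, ∑ a ∈ n.divisorsAntidiagonal, φ a.1 * ψ a.2
      = ∑' (n : ℕ) (a : ℕ × ℕ), if a ∈ n.divisorsAntidiagonal then φ a.1 * ψ a.2 else 0 := by
        exact tsum_congr step1
    _ = ∑' (a : ℕ × ℕ) (n : ℕ), if a ∈ n.divisorsAntidiagonal then φ a.1 * ψ a.2 else 0 :=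
        ENNReal.tsum_comm
    _ = ∑' a : ℕ × ℕ, φ a.1 * ψ a.2 := by
        refine tsum_congr fun a => ?_
        rcases eq_or_ne (a.1 * a.2) 0 with h0 | h0
        · have : ∀ n : ℕ, (if a ∈ n.divisorsAntidiagonal then φ a.1 * ψ a.2 else 0) = 0 := by
            intro n
            rcases Nat.mul_eq_zero.mp h0 with h | h
            · simp [Nat.mem_divisorsAntidiagonal, h, hφ]
            · simp [Nat.mem_divisorsAntidiagonal, h, hψ]
          rw [tsum_congr this, tsum_zero]
          rcases Nat.mul_eq_zero.mp h0 with h | h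
          · simp [h, hφ]
          · simp [h, hψ]
        · rw [tsum_eq_single (a.1 * a.2)]
          · simp [Nat.mem_divisorsAntidiagonal, h0]
          · intro n hn
            simp only [Nat.mem_divisorsAntidiagonal, ite_eq_right_iff, and_imp]
            intro h1 _
            exact absurd h1.symm hn
    _ = (∑' a, φ a) * ∑' b, ψ b := by
        rw [ENNReal.tsum_prod']
        simp only
        rw [tsum_congr fun a => (ENNReal.tsum_mul_left : ∑' b, φ a * ψ b = _),
          ENNReal.tsum_mul_right]

/-- Partial criterion: for 1 ≤ p ≤ q < ∞ and 1/r = 1 - 1/p + 1/q, if f ∈ ℓ^r(ℕ)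
then the Dirichlet convolution operator maps ℓ^p into ℓ^q with
‖f ∗ x‖_q ≤ ‖f‖_r · ‖x‖_p. -/
theorem dirichlet_conv_bounded_lp_lq
    (p q r : ℝ) (hp : 1 ≤ p) (hpq : p ≤ q)
    (hr : 1 / r = 1 - 1 / p + 1 / q)
    (f : ℕ → ℂ) (hf0 : f 0 = 0)
    (hf : Summable fun n => ‖f n‖ ^ r)
    (x : ℕ → ℂ) (hx0 : x 0 = 0)
    (hx : Summable fun n => ‖x n‖ ^ p) :
    (Summable fun n => ‖∑ d ∈ n.divisors, f (n / d) * x d‖ ^ q) ∧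
      (∑' n : ℕ, ‖∑ d ∈ n.divisors, f (n / d) * x d‖ ^ q) ^ (1 / q) ≤
        (∑' n : ℕ, ‖f n‖ ^ r) ^ (1 / r) * (∑' n : ℕ, ‖x n‖ ^ p) ^ (1 / p) := by
  classical
  have hp0 : (0:ℝ) < p := lt_of_lt_of_le one_pos hp
  have hq1 : (1:ℝ) ≤ q := hp.trans hpq
  have hq0 : (0:ℝ) < q := lt_of_lt_of_le one_pos hq1
  have hp1 : 1 / p ≤ 1 := by rw [div_le_one hp0]; exact hp
  have hqp : 1 / q ≤ 1 / p := one_div_le_one_div_of_le hp0 hpq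
  have hrinv_pos : 0 < 1 / r := by
    rw [hr]; have : 0 < 1 / q := by positivity
    linarith
  have hr0 : (0:ℝ) < r := one_div_pos.mp hrinv_pos
  have e2nn : (0:ℝ) ≤ 1 / r - 1 / q := by rw [hr]; linarith
  have e3nn : (0:ℝ) ≤ 1 / p - 1 / q := by linarith
  have hrq : r ≤ q := by
    have h1 : 1 / q ≤ 1 / r := by linarith
    exact le_of_one_div_le_one_div hq0 h1
  set F : ℕ → ℝ≥0∞ := fun n => (‖f n‖₊ : ℝ≥0∞) with hF
  set X : ℕ → ℝ≥0∞ := fun n => (‖x n‖₊ : ℝ≥0∞) with hX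
  set A : ℝ≥0∞ := ∑' n, F n ^ r with hA
  set B : ℝ≥0∞ := ∑' n, X n ^ p with hB
  have hFcoe : ∀ n, F n ^ r = ((‖f n‖₊ ^ r : ℝ≥0) : ℝ≥0∞) := fun n =>
    (ENNReal.coe_rpow_of_nonneg _ hr0.le).symm
  have hXcoe : ∀ n, X n ^ p = ((‖x n‖₊ ^ p : ℝ≥0) : ℝ≥0∞) := fun n =>
    (ENNReal.coe_rpow_of_nonneg _ hp0.le).symm
  have hfs : Summable fun n => (‖f n‖₊ ^ r : ℝ≥0) := by
    rw [← NNReal.summable_coe]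
    simpa [NNReal.coe_rpow, coe_nnnorm] using hf
  have hxs : Summable fun n => (‖x n‖₊ ^ p : ℝ≥0) := by
    rw [← NNReal.summable_coe]
    simpa [NNReal.coe_rpow, coe_nnnorm] using hx
  have hAtop : A ≠ ⊤ := by
    rw [hA, tsum_congr hFcoe]
    exact ENNReal.tsum_coe_ne_top_iff_summable.mpr hfs
  have hBtop : B ≠ ⊤ := by
    rw [hB, tsum_congr hXcoe]
    exact ENNReal.tsum_coe_ne_top_iff_summable.mpr hxs
  have hAre : A.toReal = ∑' n, ‖f n‖ ^ r := by
    rw [hA, ENNReal.tsum_toReal_eq (fun n => by rw [hFcoe]; exact ENNReal.coe_ne_top)]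
    exact tsum_congr fun n => by
      rw [hFcoe]; simp [NNReal.coe_rpow, coe_nnnorm]
  have hBre : B.toReal = ∑' n, ‖x n‖ ^ p := by
    rw [hB, ENNReal.tsum_toReal_eq (fun n => by rw [hXcoe]; exact ENNReal.coe_ne_top)]
    exact tsum_congr fun n => by
      rw [hXcoe]; simp [NNReal.coe_rpow, coe_nnnorm]
  -- pointwise Hölder step
  set T : ℕ → ℝ≥0∞ := fun n => ∑ a ∈ n.divisorsAntidiagonal, F a.1 ^ r * X a.2 ^ p with hT
  set S : ℕ → ℝ≥0∞ := fun n => ∑ a ∈ n.divisorsAntidiagonal, F a.1 * X a.2 with hS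
  have hstep : ∀ n : ℕ, S n ≤ T n ^ (1/q) * A ^ (1/r - 1/q) * B ^ (1/p - 1/q) := by
    intro n
    have hterm : ∀ a ∈ n.divisorsAntidiagonal, F a.1 * X a.2 =
        (F a.1 ^ r * X a.2 ^ p) ^ (1/q) * (F a.1 ^ r) ^ (1/r - 1/q) *
          (X a.2 ^ p) ^ (1/p - 1/q) := by
      intro a _
      have hF1 : (F a.1 ^ r) ^ (1/q) * (F a.1 ^ r) ^ (1/r - 1/q) = F a.1 := by
        rw [← ENNReal.rpow_mul, ← ENNReal.rpow_mul,
          ← ENNReal.rpow_add_of_nonneg _ _ (by positivity) (mul_nonneg hr0.le e2nn)]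
        have : r * (1/q) + r * (1/r - 1/q) = r * (1/r) := by ring
        rw [this, mul_one_div, div_self hr0.ne', ENNReal.rpow_one]
      have hX1 : (X a.2 ^ p) ^ (1/q) * (X a.2 ^ p) ^ (1/p - 1/q) = X a.2 := by
        rw [← ENNReal.rpow_mul, ← ENNReal.rpow_mul,
          ← ENNReal.rpow_add_of_nonneg _ _ (by positivity) (mul_nonneg hp0.le e3nn)]
        have : p * (1/q) + p * (1/p - 1/q) = p * (1/p) := by ring
        rw [this, mul_one_div, div_self hp0.ne', ENNReal.rpow_one]
      rw [ENNReal.mul_rpow_of_nonneg _ _ (by positivity : (0:ℝ) ≤ 1/q)]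
      conv_lhs => rw [← hF1, ← hX1]
      ring
    rw [hS]
    simp only
    rw [Finset.sum_congr rfl hterm]
    refine (holder3_finset n.divisorsAntidiagonal _ _ _ (by positivity) e2nn e3nn
      (by rw [hr] at *; linarith)).trans ?_
    rw [hT]
    simp only
    gcongr
    · rw [Nat.sum_divisorsAntidiagonal (fun i j => F i ^ r)]
      exact ENNReal.sum_le_tsum _
    · rw [Nat.sum_divisorsAntidiagonal' (fun i j => X j ^ p)]
      exact ENNReal.sum_le_tsum _
  -- summed bound
  have hrq1 : (0:ℝ) ≤ q / r - 1 := by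
    rw [sub_nonneg, le_div_iff₀ hr0, one_mul]; exact hrq
  have hpq1 : (0:ℝ) ≤ q / p - 1 := by
    rw [sub_nonneg, le_div_iff₀ hp0, one_mul]; exact hpq
  have hmain : ∑' n, S n ^ q ≤ A ^ (q/r) * B ^ (q/p) := by
    calc ∑' n, S n ^ q
        ≤ ∑' n, T n * (A ^ ((1/r - 1/q) * q) * B ^ ((1/p - 1/q) * q)) := by
          refine ENNReal.tsum_le_tsum fun n => ?_
          refine (ENNReal.rpow_le_rpow (hstep n) hq0.le).trans_eq ?_
          rw [ENNReal.mul_rpow_of_nonneg _ _ hq0.le, ENNReal.mul_rpow_of_nonneg _ _ hq0.le,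
            ← ENNReal.rpow_mul, ← ENNReal.rpow_mul, ← ENNReal.rpow_mul,
            one_div_mul_cancel hq0.ne', ENNReal.rpow_one, mul_assoc]
      _ = (A * B) * (A ^ ((1/r - 1/q) * q) * B ^ ((1/p - 1/q) * q)) := by
          rw [ENNReal.tsum_mul_right]
          congr 1
          rw [hT]
          refine tsum_antidiag (fun m => F m ^ r) (fun m => X m ^ p) ?_ ?_
          · simp [hF, hf0, ENNReal.zero_rpow_of_pos hr0]
          · simp [hX, hx0, ENNReal.zero_rpow_of_pos hp0]
      _ = A ^ (q/r) * B ^ (q/p) := by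
          have h1 : (1/r - 1/q) * q = q/r - 1 := by field_simp
          have h2 : (1/p - 1/q) * q = q/p - 1 := by field_simp
          rw [h1, h2]
          rw [show A * B * (A ^ (q/r - 1) * B ^ (q/p - 1))
              = (A ^ (1:ℝ) * A ^ (q/r - 1)) * (B ^ (1:ℝ) * B ^ (q/p - 1)) by
            rw [ENNReal.rpow_one, ENNReal.rpow_one]; ring]
          rw [← ENNReal.rpow_add_of_nonneg _ _ zero_le_one hrq1,
            ← ENNReal.rpow_add_of_nonneg _ _ zero_le_one hpq1,
            show (1:ℝ) + (q/r - 1) = q/r by ring, show (1:ℝ) + (q/p - 1) = q/p by ring]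
  -- relate to the convolution
  have hconv : ∀ n : ℕ, ((‖∑ d ∈ n.divisors, f (n / d) * x d‖₊ : ℝ≥0∞)) ≤ S n := by
    intro n
    rw [← Nat.sum_divisorsAntidiagonal' (fun i j => f i * x j)]
    refine le_trans (ENNReal.coe_le_coe.mpr (nnnorm_sum_le _ _)) ?_
    rw [ENNReal.coe_finset_sum, hS]
    simp only
    exact Finset.sum_le_sum fun a _ => by rw [nnnorm_mul, ENNReal.coe_mul]
  set Sq : ℝ≥0∞ := ∑' n, (‖∑ d ∈ n.divisors, f (n / d) * x d‖₊ : ℝ≥0∞) ^ q with hSq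
  have hSqle : Sq ≤ A ^ (q/r) * B ^ (q/p) :=
    le_trans (ENNReal.tsum_le_tsum fun n => ENNReal.rpow_le_rpow (hconv n) hq0.le) hmain
  have hRtop : A ^ (q/r) * B ^ (q/p) ≠ ⊤ :=
    ENNReal.mul_ne_top (ENNReal.rpow_ne_top_of_nonneg (by positivity) hAtop)
      (ENNReal.rpow_ne_top_of_nonneg (by positivity) hBtop)
  have hSqtop : Sq ≠ ⊤ := ne_top_of_le_ne_top hRtop hSqle
  have hsummable : Summable fun n => ‖∑ d ∈ n.divisors, f (n / d) * x d‖ ^ q := by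
    have h1 : Summable fun n => (‖∑ d ∈ n.divisors, f (n / d) * x d‖₊ ^ q : ℝ≥0) := by
      apply ENNReal.tsum_coe_ne_top_iff_summable.mp
      rw [tsum_congr (fun n => ENNReal.coe_rpow_of_nonneg
        (‖∑ d ∈ n.divisors, f (n / d) * x d‖₊) hq0.le)]
      exact hSqtop
    rw [show (fun n => ‖∑ d ∈ n.divisors, f (n / d) * x d‖ ^ q)
        = fun n => ((‖∑ d ∈ n.divisors, f (n / d) * x d‖₊ ^ q : ℝ≥0) : ℝ) from
      funext fun n => by simp [NNReal.coe_rpow, coe_nnnorm]]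
    exact NNReal.summable_coe.mpr h1
  refine ⟨hsummable, ?_⟩
  have hineq : Sq ^ (1/q) ≤ A ^ (1/r) * B ^ (1/p) := by
    refine (ENNReal.rpow_le_rpow hSqle (by positivity)).trans_eq ?_
    rw [ENNReal.mul_rpow_of_nonneg _ _ (by positivity), ← ENNReal.rpow_mul,
      ← ENNReal.rpow_mul]
    have h1 : q / r * (1/q) = 1/r := by field_simp
    have h2 : q / p * (1/q) = 1/p := by field_simp
    rw [h1, h2]
  have hLtop : A ^ (1/r) * B ^ (1/p) ≠ ⊤ :=
    ENNReal.mul_ne_top (ENNReal.rpow_ne_top_of_nonneg (by positivity) hAtop)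
      (ENNReal.rpow_ne_top_of_nonneg (by positivity) hBtop)
  have final := ENNReal.toReal_mono hLtop hineq
  rw [ENNReal.toReal_mul, ← ENNReal.toReal_rpow, ← ENNReal.toReal_rpow,
    ← ENNReal.toReal_rpow] at final
  have hSqre : Sq.toReal = ∑' n, ‖∑ d ∈ n.divisors, f (n / d) * x d‖ ^ q := by
    rw [hSq, ENNReal.tsum_toReal_eq
      (fun n => ENNReal.rpow_ne_top_of_nonneg hq0.le ENNReal.coe_ne_top)]
    exact tsum_congr fun n => by
      rw [← ENNReal.toReal_rpow]; simp [coe_nnnorm]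
  rwa [hSqre, hAre, hBre] at final
end

section
/- Let f, g, h, j : ℕ → ℂ be completely multiplicative functions all belonging to ℓ^2(ℕ) (and with all relevant series absolutely convergent). Then ⟨f ∗ g, h ∗ j⟩ · ⟨f·g, h·j⟩ = ⟨g, j⟩ · ⟨f, h⟩ · ⟨f, j⟩ · ⟨g, h⟩, where ⟨a, b⟩ = ∑_{n≥1} a(n) · conj(b(n)), ∗ denotes Dirichlet convolution, and f·g denotes pointwise product. -/
open scoped ComplexConjugate

open Function Set

namespace RamanujanIdentityAux

/-- The "diagonal quadruple" function: value on `((a,b),(c,d))` is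
`f a * g b * H c * J d` when `a*b = c*d`, else `0`. -/
noncomputable def Kq (f g H J : ℕ → ℂ) : (ℕ × ℕ) × ℕ × ℕ → ℂ := fun p =>
  if p.1.1 * p.1.2 = p.2.1 * p.2.2 then f p.1.1 * g p.1.2 * H p.2.1 * J p.2.2 else 0

noncomputable def Dq (f g H J : ℕ → ℂ) : ℕ → ℂ := fun e => f e * g e * H e * J e

noncomputable def Lq (f g H J : ℕ → ℂ) : ((ℕ × ℕ) × ℕ × ℕ) × ℕ → ℂ := fun pe =>
  Kq f g H J pe.1 * Dq f g H J pe.2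

noncomputable def Gq (f g H J : ℕ → ℂ) : (ℕ × ℕ) × ℕ × ℕ → ℂ := fun q =>
  g q.1.1 * J q.1.1 * (f q.1.2 * H q.1.2) *
    (f q.2.1 * J q.2.1 * (g q.2.2 * H q.2.2))

/-- The bijection sending `((y,x),(U,V))` (with `e = gcd U V`, `u = U/e`, `v = V/e`)
to `(((x*u, y*v), (x*v, y*u)), e)`. -/
def bijMap : (ℕ × ℕ) × ℕ × ℕ → ((ℕ × ℕ) × ℕ × ℕ) × ℕ := fun q =>
  (((q.1.2 * (q.2.1 / Nat.gcd q.2.1 q.2.2), q.1.1 * (q.2.2 / Nat.gcd q.2.1 q.2.2)),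
    (q.1.2 * (q.2.2 / Nat.gcd q.2.1 q.2.2), q.1.1 * (q.2.1 / Nat.gcd q.2.1 q.2.2))),
   Nat.gcd q.2.1 q.2.2)

theorem Lq_bijMap {f g H J : ℕ → ℂ}
    (hfm : ∀ m n : ℕ, 0 < m → 0 < n → f (m * n) = f m * f n)
    (hgm : ∀ m n : ℕ, 0 < m → 0 < n → g (m * n) = g m * g n)
    (hHm : ∀ m n : ℕ, 0 < m → 0 < n → H (m * n) = H m * H n)
    (hJm : ∀ m n : ℕ, 0 < m → 0 < n → J (m * n) = J m * J n)
    {y x U V : ℕ} (hy : y ≠ 0) (hx : x ≠ 0) (hU : U ≠ 0) (hV : V ≠ 0) :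
    Lq f g H J (bijMap ((y, x), (U, V))) = Gq f g H J ((y, x), (U, V)) := by
  have heU : Nat.gcd U V ∣ U := Nat.gcd_dvd_left U V
  have heV : Nat.gcd U V ∣ V := Nat.gcd_dvd_right U V
  have he0 : Nat.gcd U V ≠ 0 := fun h0 => hU (Nat.eq_zero_of_gcd_eq_zero_left h0)
  have hue : U / Nat.gcd U V * Nat.gcd U V = U := Nat.div_mul_cancel heU
  have hve : V / Nat.gcd U V * Nat.gcd U V = V := Nat.div_mul_cancel heV
  have hu0 : U / Nat.gcd U V ≠ 0 := by
    intro h0; rw [h0, zero_mul] at hue; exact hU hue.symm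
  have hv0 : V / Nat.gcd U V ≠ 0 := by
    intro h0; rw [h0, zero_mul] at hve; exact hV hve.symm
  simp only [Lq, Kq, Dq, Gq, bijMap]
  erw [if_pos (show x * (U / U.gcd V) * (y * (V / U.gcd V)) = x * (V / U.gcd V) * (y * (U / U.gcd V)) by ring)]
  set e := Nat.gcd U V with he
  set u := U / e with hu
  set v := V / e with hv
  rw [hfm x u (Nat.pos_of_ne_zero hx) (Nat.pos_of_ne_zero hu0),
    hgm y v (Nat.pos_of_ne_zero hy) (Nat.pos_of_ne_zero hv0),
    hHm x v (Nat.pos_of_ne_zero hx) (Nat.pos_of_ne_zero hv0),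
    hJm y u (Nat.pos_of_ne_zero hy) (Nat.pos_of_ne_zero hu0),
    ← hue, ← hve,
    hfm u e (Nat.pos_of_ne_zero hu0) (Nat.pos_of_ne_zero he0),
    hJm u e (Nat.pos_of_ne_zero hu0) (Nat.pos_of_ne_zero he0),
    hgm v e (Nat.pos_of_ne_zero hv0) (Nat.pos_of_ne_zero he0),
    hHm v e (Nat.pos_of_ne_zero hv0) (Nat.pos_of_ne_zero he0)]
  ring

theorem bijMap_inj {q q' : (ℕ × ℕ) × ℕ × ℕ}
    (h1 : q.1.1 ≠ 0) (h2 : q.1.2 ≠ 0) (h3 : q.2.1 ≠ 0) (h4 : q.2.2 ≠ 0)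
    (h1' : q'.1.1 ≠ 0) (h2' : q'.1.2 ≠ 0) (h3' : q'.2.1 ≠ 0) (h4' : q'.2.2 ≠ 0)
    (heq : bijMap q = bijMap q') : q = q' := by
  obtain ⟨⟨y, x⟩, U, V⟩ := q
  obtain ⟨⟨y', x'⟩, U', V'⟩ := q'
  simp only at h1 h2 h3 h4 h1' h2' h3' h4'
  simp only [bijMap, Prod.mk.injEq] at heq
  obtain ⟨⟨⟨e1, e2⟩, e3, e4⟩, e5⟩ := heq
  set e := Nat.gcd U V with he
  set e' := Nat.gcd U' V' with he'
  have he0 : e ≠ 0 := fun h0 => h3 (Nat.eq_zero_of_gcd_eq_zero_left h0)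
  have he0' : e' ≠ 0 := fun h0 => h3' (Nat.eq_zero_of_gcd_eq_zero_left h0)
  set u := U / e with hu
  set v := V / e with hv
  set u' := U' / e' with hu'
  set v' := V' / e' with hv'
  have hue : u * e = U := Nat.div_mul_cancel (Nat.gcd_dvd_left U V)
  have hve : v * e = V := Nat.div_mul_cancel (Nat.gcd_dvd_right U V)
  have hue' : u' * e' = U' := Nat.div_mul_cancel (Nat.gcd_dvd_left U' V')
  have hve' : v' * e' = V' := Nat.div_mul_cancel (Nat.gcd_dvd_right U' V')
  have hu0 : u ≠ 0 := by intro h0; rw [h0, zero_mul] at hue; exact h3 hue.symm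
  have cop : Nat.Coprime u v := Nat.coprime_div_gcd_div_gcd (Nat.pos_of_ne_zero he0)
  have cop' : Nat.Coprime u' v' := Nat.coprime_div_gcd_div_gcd (Nat.pos_of_ne_zero he0')
  have hxx : x = x' := by
    have g1 : Nat.gcd (x * u) (x * v) = x := by
      rw [Nat.gcd_mul_left, Nat.Coprime.gcd_eq_one cop, mul_one]
    have g2 : Nat.gcd (x' * u') (x' * v') = x' := by
      rw [Nat.gcd_mul_left, Nat.Coprime.gcd_eq_one cop', mul_one]
    rw [← g1, e1, e3, g2]
  subst hxx
  have huu : u = u' := Nat.eq_of_mul_eq_mul_left (Nat.pos_of_ne_zero h2) e1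
  have hvv : v = v' := Nat.eq_of_mul_eq_mul_left (Nat.pos_of_ne_zero h2) e3
  have hyy : y = y' := by
    refine Nat.eq_of_mul_eq_mul_right (Nat.pos_of_ne_zero hu0) ?_
    rw [e4, huu]
  subst hyy
  have hUU : U = U' := by rw [← hue, ← hue', huu, e5]
  have hVV : V = V' := by rw [← hve, ← hve', hvv, e5]
  simp [hUU, hVV]

theorem Gq_ne_zero_comps {f g H J : ℕ → ℂ}
    (hf0 : f 0 = 0) (hg0 : g 0 = 0) (hH0 : H 0 = 0) (hJ0 : J 0 = 0)
    {q : (ℕ × ℕ) × ℕ × ℕ} (hG : Gq f g H J q ≠ 0) :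
    q.1.1 ≠ 0 ∧ q.1.2 ≠ 0 ∧ q.2.1 ≠ 0 ∧ q.2.2 ≠ 0 := by
  refine ⟨fun h0 => hG ?_, fun h0 => hG ?_, fun h0 => hG ?_, fun h0 => hG ?_⟩ <;>
    simp [Gq, h0, hf0, hg0, hH0, hJ0]

theorem bijMap_surj {f g H J : ℕ → ℂ}
    (hf0 : f 0 = 0) (hg0 : g 0 = 0) (hH0 : H 0 = 0) (hJ0 : J 0 = 0)
    (hfm : ∀ m n : ℕ, 0 < m → 0 < n → f (m * n) = f m * f n)
    (hgm : ∀ m n : ℕ, 0 < m → 0 < n → g (m * n) = g m * g n)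
    (hHm : ∀ m n : ℕ, 0 < m → 0 < n → H (m * n) = H m * H n)
    (hJm : ∀ m n : ℕ, 0 < m → 0 < n → J (m * n) = J m * J n)
    {p : ((ℕ × ℕ) × ℕ × ℕ) × ℕ} (hL : Lq f g H J p ≠ 0) :
    ∃ q, Gq f g H J q ≠ 0 ∧ bijMap q = p := by
  obtain ⟨⟨⟨a, b⟩, c, d⟩, e⟩ := p
  have hK : Kq f g H J ((a, b), (c, d)) ≠ 0 := fun h0 => hL (by simp [Lq, h0])
  have hD : Dq f g H J e ≠ 0 := fun h0 => hL (by simp [Lq, h0])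
  have habcd : a * b = c * d := by
    by_contra hcon
    exact hK (if_neg hcon)
  have hKv : f a * g b * H c * J d ≠ 0 := by
    rwa [Kq, if_pos habcd] at hK
  have ha : a ≠ 0 := fun h0 => hKv (by simp [h0, hf0])
  have hb : b ≠ 0 := fun h0 => hKv (by simp [h0, hg0])
  have hc : c ≠ 0 := fun h0 => hKv (by simp [h0, hH0])
  have hd : d ≠ 0 := fun h0 => hKv (by simp [h0, hJ0])
  have he : e ≠ 0 := fun h0 => hD (by simp [Dq, h0, hf0])
  set x := Nat.gcd a c with hxdef
  have hx0 : x ≠ 0 := fun h0 => ha (Nat.eq_zero_of_gcd_eq_zero_left h0)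
  set u := a / x with hudef
  set v := c / x with hvdef
  have hxu : x * u = a := Nat.mul_div_cancel' (Nat.gcd_dvd_left a c)
  have hxv : x * v = c := Nat.mul_div_cancel' (Nat.gcd_dvd_right a c)
  have hu0 : u ≠ 0 := by intro h0; rw [h0, mul_zero] at hxu; exact ha hxu.symm
  have hv0 : v ≠ 0 := by intro h0; rw [h0, mul_zero] at hxv; exact hc hxv.symm
  have cop : Nat.Coprime u v := Nat.coprime_div_gcd_div_gcd (Nat.pos_of_ne_zero hx0)
  have hub : u * b = v * d := by
    refine Nat.eq_of_mul_eq_mul_left (Nat.pos_of_ne_zero hx0) ?_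
    rw [← mul_assoc, ← mul_assoc, hxu, hxv, habcd]
  have hvb : v ∣ b := Nat.Coprime.dvd_of_dvd_mul_left cop.symm ⟨d, hub⟩
  set y := b / v with hydef
  have hvy : v * y = b := Nat.mul_div_cancel' hvb
  have hy0 : y ≠ 0 := by intro h0; rw [h0, mul_zero] at hvy; exact hb hvy.symm
  have hyu : y * u = d := by
    refine Nat.eq_of_mul_eq_mul_left (Nat.pos_of_ne_zero hv0) ?_
    rw [show v * (y * u) = u * (v * y) by ring, hvy, hub]
  have hgcd : Nat.gcd (u * e) (v * e) = e := by
    rw [Nat.gcd_mul_right, Nat.Coprime.gcd_eq_one cop, one_mul]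
  have hbij : bijMap ((y, x), (u * e, v * e)) = (((a, b), (c, d)), e) := by
    simp only [bijMap, hgcd, Nat.mul_div_cancel _ (Nat.pos_of_ne_zero he)]
    rw [hxu, hxv, hyu, mul_comm y v, hvy]
  refine ⟨((y, x), (u * e, v * e)), ?_, hbij⟩
  have hval := Lq_bijMap (f := f) (g := g) (H := H) (J := J) hfm hgm hHm hJm
    hy0 hx0 (mul_ne_zero hu0 he) (mul_ne_zero hv0 he)
  rw [hbij] at hval
  rw [← hval]
  exact hL

theorem fiber_sum {f g H J : ℕ → ℂ}
    (hf0 : f 0 = 0) (hg0 : g 0 = 0) (hH0 : H 0 = 0) (hJ0 : J 0 = 0) (nn : ℕ × ℕ) :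
    (∑' c : (fun p : (ℕ × ℕ) × ℕ × ℕ => (p.1.1 * p.1.2, p.2.1 * p.2.2)) ⁻¹' {nn},
      Kq f g H J c) =
    if nn.1 = nn.2 then
      (∑ p ∈ nn.1.divisorsAntidiagonal, f p.1 * g p.2) *
        (∑ p ∈ nn.2.divisorsAntidiagonal, H p.1 * J p.2)
    else 0 := by
  obtain ⟨n₁, n₂⟩ := nn
  by_cases h1 : n₁ = 0
  · subst h1
    have hz : ∀ c : (fun p : (ℕ × ℕ) × ℕ × ℕ =>
        (p.1.1 * p.1.2, p.2.1 * p.2.2)) ⁻¹' {((0 : ℕ), n₂)}, Kq f g H J c = 0 := by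
      rintro ⟨⟨⟨a, b⟩, c, d⟩, hmem⟩
      simp only [mem_preimage, mem_singleton_iff, Prod.mk.injEq] at hmem
      rcases Nat.mul_eq_zero.mp hmem.1 with h0 | h0 <;>
        simp [Kq, h0, hf0, hg0]
    rw [tsum_congr hz, tsum_zero]
    simp
  by_cases h2 : n₂ = 0
  · subst h2
    have hz : ∀ c : (fun p : (ℕ × ℕ) × ℕ × ℕ =>
        (p.1.1 * p.1.2, p.2.1 * p.2.2)) ⁻¹' {(n₁, (0 : ℕ))}, Kq f g H J c = 0 := by
      rintro ⟨⟨⟨a, b⟩, c, d⟩, hmem⟩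
      simp only [mem_preimage, mem_singleton_iff, Prod.mk.injEq] at hmem
      rcases Nat.mul_eq_zero.mp hmem.2 with h0 | h0 <;>
        simp [Kq, h0, hH0, hJ0]
    rw [tsum_congr hz, tsum_zero]
    simp [h1]
  have hset : (fun p : (ℕ × ℕ) × ℕ × ℕ => (p.1.1 * p.1.2, p.2.1 * p.2.2)) ⁻¹' {(n₁, n₂)} =
      ↑(n₁.divisorsAntidiagonal ×ˢ n₂.divisorsAntidiagonal) := by
    ext ⟨⟨a, b⟩, c, d⟩
    simp [Nat.mem_divisorsAntidiagonal, h1, h2, Prod.ext_iff]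
  rw [hset, Finset.tsum_subtype', Finset.sum_product]
  by_cases hnn : n₁ = n₂
  · subst hnn
    rw [if_pos rfl, Finset.sum_mul_sum]
    refine Finset.sum_congr rfl fun p₁ hp₁ => Finset.sum_congr rfl fun p₂ hp₂ => ?_
    have e₁ := (Nat.mem_divisorsAntidiagonal.mp hp₁).1
    have e₂ := (Nat.mem_divisorsAntidiagonal.mp hp₂).1
    simp only [Kq]
    rw [if_pos (e₁.trans e₂.symm)]
    ring
  · rw [if_neg hnn]
    refine Finset.sum_eq_zero fun p₁ hp₁ => Finset.sum_eq_zero fun p₂ hp₂ => ?_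
    have e₁ := (Nat.mem_divisorsAntidiagonal.mp hp₁).1
    have e₂ := (Nat.mem_divisorsAntidiagonal.mp hp₂).1
    simp only [Kq]
    rw [if_neg]
    intro hcon
    exact hnn (e₁.symm.trans (hcon.trans e₂))

theorem summable_norm_mul_of_sq {a b : ℕ → ℂ}
    (ha : Summable fun n => ‖a n‖ ^ 2) (hb : Summable fun n => ‖b n‖ ^ 2) :
    Summable fun n => ‖a n * b n‖ := by
  refine Summable.of_nonneg_of_le (fun n => norm_nonneg _)
    (fun n => ?_) (((ha.add hb).div_const 2))
  rw [norm_mul]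
  have h := two_mul_le_add_sq ‖a n‖ ‖b n‖
  nlinarith [norm_nonneg (a n), norm_nonneg (b n)]

/-- The main combinatorial identity, with `H, J` abstract (they stand for the
complex conjugates of `h, j`). -/
theorem key (f g H J : ℕ → ℂ)
    (hf0 : f 0 = 0) (hg0 : g 0 = 0) (hH0 : H 0 = 0) (hJ0 : J 0 = 0)
    (hf1 : f 1 = 1) (hg1 : g 1 = 1) (hH1 : H 1 = 1) (hJ1 : J 1 = 1)
    (hfm : ∀ m n : ℕ, 0 < m → 0 < n → f (m * n) = f m * f n)
    (hgm : ∀ m n : ℕ, 0 < m → 0 < n → g (m * n) = g m * g n)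
    (hHm : ∀ m n : ℕ, 0 < m → 0 < n → H (m * n) = H m * H n)
    (hJm : ∀ m n : ℕ, 0 < m → 0 < n → J (m * n) = J m * J n)
    (hf2 : Summable fun n => ‖f n‖ ^ 2) (hg2 : Summable fun n => ‖g n‖ ^ 2)
    (hH2 : Summable fun n => ‖H n‖ ^ 2) (hJ2 : Summable fun n => ‖J n‖ ^ 2) :
    (∑' n : ℕ, (∑ p ∈ n.divisorsAntidiagonal, f p.1 * g p.2) *
        (∑ p ∈ n.divisorsAntidiagonal, H p.1 * J p.2)) *
      (∑' n : ℕ, f n * g n * (H n * J n)) =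
    (∑' n : ℕ, g n * J n) * (∑' n : ℕ, f n * H n) *
      ((∑' n : ℕ, f n * J n) * (∑' n : ℕ, g n * H n)) := by
  -- ℓ¹ bounds for pointwise products
  have hgJ1 : Summable fun n => ‖g n * J n‖ := summable_norm_mul_of_sq hg2 hJ2
  have hfH1 : Summable fun n => ‖f n * H n‖ := summable_norm_mul_of_sq hf2 hH2
  have hfJ1 : Summable fun n => ‖f n * J n‖ := summable_norm_mul_of_sq hf2 hJ2
  have hgH1 : Summable fun n => ‖g n * H n‖ := summable_norm_mul_of_sq hg2 hH2
  -- the RHS as a single sum over quadruples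
  have hP1 : Summable fun p : ℕ × ℕ => ‖g p.1 * J p.1 * (f p.2 * H p.2)‖ := by
    refine ((hgJ1.mul_of_nonneg hfH1 (fun n => norm_nonneg _)
      (fun n => norm_nonneg _)).congr fun p => ?_)
    simp [norm_mul]
  have hP2 : Summable fun p : ℕ × ℕ => ‖f p.1 * J p.1 * (g p.2 * H p.2)‖ := by
    refine ((hfJ1.mul_of_nonneg hgH1 (fun n => norm_nonneg _)
      (fun n => norm_nonneg _)).congr fun p => ?_)
    simp [norm_mul]
  have hGnorm : Summable fun q => ‖Gq f g H J q‖ := by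
    refine ((hP1.mul_of_nonneg hP2 (fun p => norm_nonneg _)
      (fun p => norm_nonneg _)).congr fun q => ?_)
    simp [Gq, norm_mul]
  have hRHS : (∑' n : ℕ, g n * J n) * (∑' n : ℕ, f n * H n) *
      ((∑' n : ℕ, f n * J n) * (∑' n : ℕ, g n * H n)) = ∑' q, Gq f g H J q := by
    rw [tsum_mul_tsum_of_summable_norm hgJ1 hfH1,
      tsum_mul_tsum_of_summable_norm hfJ1 hgH1,
      tsum_mul_tsum_of_summable_norm hP1 hP2]
    rfl
  -- transfer of summability along the bijection
  have hcomps : ∀ q : ↑(support (Gq f g H J)),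
      q.val.1.1 ≠ 0 ∧ q.val.1.2 ≠ 0 ∧ q.val.2.1 ≠ 0 ∧ q.val.2.2 ≠ 0 :=
    fun q => Gq_ne_zero_comps hf0 hg0 hH0 hJ0 q.2
  have hval : ∀ q : ↑(support (Gq f g H J)),
      Lq f g H J (bijMap q.val) = Gq f g H J q.val := by
    rintro ⟨⟨⟨y, x⟩, U, V⟩, hq⟩
    obtain ⟨h1, h2, h3, h4⟩ := Gq_ne_zero_comps hf0 hg0 hH0 hJ0 hq
    exact Lq_bijMap hfm hgm hHm hJm h1 h2 h3 h4
  have hinj : Injective fun q : ↑(support (Gq f g H J)) => bijMap q.val := by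
    rintro q q' hqq
    obtain ⟨a1, a2, a3, a4⟩ := hcomps q
    obtain ⟨b1, b2, b3, b4⟩ := hcomps q'
    exact Subtype.ext (bijMap_inj a1 a2 a3 a4 b1 b2 b3 b4 hqq)
  have hrange : ∀ p, p ∉ range (fun q : ↑(support (Gq f g H J)) => bijMap q.val) →
      Lq f g H J p = 0 := by
    intro p hp
    by_contra hL
    obtain ⟨q, hGq, hbq⟩ := bijMap_surj hf0 hg0 hH0 hJ0 hfm hgm hHm hJm hL
    exact hp ⟨⟨q, hGq⟩, hbq⟩
  have hLnorm : Summable fun p => ‖Lq f g H J p‖ := by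
    refine (Function.Injective.summable_iff hinj ?_).mp ?_
    · intro p hp
      rw [hrange p hp, norm_zero]
    · refine ((hGnorm.subtype (support (Gq f g H J))).congr fun q => ?_)
      simp only [comp_apply]
      rw [hval q]
  have hLG : ∑' p, Lq f g H J p = ∑' q, Gq f g H J q :=
    tsum_eq_tsum_of_ne_zero_bij _ hinj
      (fun p hp => by by_contra hcon; exact hp (hrange p hcon)) hval
  -- summability of `Kq` and `Dq`
  have hKnorm : Summable fun p => ‖Kq f g H J p‖ := by
    have hinj1 : Injective fun p : (ℕ × ℕ) × ℕ × ℕ => (p, (1 : ℕ)) :=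
      fun p q h => (Prod.mk.injEq _ _ _ _ ▸ h).1
    refine ((hLnorm.comp_injective hinj1).congr fun p => ?_)
    simp [Lq, Dq, hf1, hg1, hH1, hJ1]
  have hDnorm : Summable fun e => ‖Dq f g H J e‖ := by
    have hinj1 : Injective fun e : ℕ => ((((1, 1), (1, 1)) : (ℕ × ℕ) × ℕ × ℕ), e) :=
      fun p q h => (Prod.mk.injEq _ _ _ _ ▸ h).2
    refine ((hLnorm.comp_injective hinj1).congr fun e => ?_)
    simp [Lq, Kq, hf1, hg1, hH1, hJ1]
  -- the first factor of the LHS as `∑' Kq`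
  have hfib : HasSum (fun nn : ℕ × ℕ =>
      if nn.1 = nn.2 then
        (∑ p ∈ nn.1.divisorsAntidiagonal, f p.1 * g p.2) *
          (∑ p ∈ nn.2.divisorsAntidiagonal, H p.1 * J p.2)
      else 0) (∑' p, Kq f g H J p) := by
    have h := (hKnorm.of_norm.hasSum).tsum_fiberwise
      (fun p : (ℕ × ℕ) × ℕ × ℕ => (p.1.1 * p.1.2, p.2.1 * p.2.2))
    have h2 : (fun nn : ℕ × ℕ =>
        ∑' c : (fun p : (ℕ × ℕ) × ℕ × ℕ =>
          (p.1.1 * p.1.2, p.2.1 * p.2.2)) ⁻¹' {nn}, Kq f g H J c) =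
        fun nn : ℕ × ℕ =>
          if nn.1 = nn.2 then
            (∑ p ∈ nn.1.divisorsAntidiagonal, f p.1 * g p.2) *
              (∑ p ∈ nn.2.divisorsAntidiagonal, H p.1 * J p.2)
          else 0 :=
      funext fun nn => fiber_sum hf0 hg0 hH0 hJ0 nn
    rwa [h2] at h
  have hdiag : (∑' nn : ℕ × ℕ,
      if nn.1 = nn.2 then
        (∑ p ∈ nn.1.divisorsAntidiagonal, f p.1 * g p.2) *
          (∑ p ∈ nn.2.divisorsAntidiagonal, H p.1 * J p.2)
      else 0) =
      ∑' n : ℕ, (∑ p ∈ n.divisorsAntidiagonal, f p.1 * g p.2) *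
        (∑ p ∈ n.divisorsAntidiagonal, H p.1 * J p.2) := by
    refine tsum_eq_tsum_of_ne_zero_bij (fun n => (n.val, n.val)) ?_ ?_ ?_
    · intro n₁ n₂ h
      exact Subtype.ext (congrArg Prod.fst h)
    · intro nn hnn
      simp only [mem_support] at hnn
      by_cases hd : nn.1 = nn.2
      · rw [if_pos hd] at hnn
        rw [← hd] at hnn
        refine ⟨⟨nn.1, ?_⟩, ?_⟩
        · simpa only [mem_support] using hnn
        · exact Prod.ext_iff.mpr ⟨rfl, hd⟩
      · exact absurd (if_neg hd) hnn
    · intro n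
      simp
  have hLHS1 : (∑' n : ℕ, (∑ p ∈ n.divisorsAntidiagonal, f p.1 * g p.2) *
      (∑ p ∈ n.divisorsAntidiagonal, H p.1 * J p.2)) = ∑' p, Kq f g H J p :=
    hdiag.symm.trans hfib.tsum_eq
  have hLHS2 : (∑' n : ℕ, f n * g n * (H n * J n)) = ∑' e, Dq f g H J e := by
    refine tsum_congr fun n => ?_
    simp only [Dq]
    ring
  rw [hLHS1, hLHS2, tsum_mul_tsum_of_summable_norm hKnorm hDnorm, hRHS]
  exact hLG

end RamanujanIdentityAux

/-- Inner-product identity for Dirichlet convolutions of completely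
multiplicative ℓ² functions:
⟨f∗g, h∗j⟩ ⟨fg, hj⟩ = ⟨g,j⟩ ⟨f,h⟩ ⟨f,j⟩ ⟨g,h⟩. -/
theorem inner_conv_eq_of_completelyMultiplicative
    (f g h j : ℕ → ℂ)
    (hf0 : f 0 = 0) (hg0 : g 0 = 0) (hh0 : h 0 = 0) (hj0 : j 0 = 0)
    (hf1 : f 1 = 1) (hg1 : g 1 = 1) (hh1 : h 1 = 1) (hj1 : j 1 = 1)
    (hfm : ∀ m n : ℕ, 0 < m → 0 < n → f (m * n) = f m * f n)
    (hgm : ∀ m n : ℕ, 0 < m → 0 < n → g (m * n) = g m * g n)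
    (hhm : ∀ m n : ℕ, 0 < m → 0 < n → h (m * n) = h m * h n)
    (hjm : ∀ m n : ℕ, 0 < m → 0 < n → j (m * n) = j m * j n)
    (hf2 : Summable fun n => ‖f n‖ ^ 2) (hg2 : Summable fun n => ‖g n‖ ^ 2)
    (hh2 : Summable fun n => ‖h n‖ ^ 2) (hj2 : Summable fun n => ‖j n‖ ^ 2)
    (hfg2 : Summable fun n => ‖∑ d ∈ n.divisors, f d * g (n / d)‖ ^ 2)
    (hhj2 : Summable fun n => ‖∑ d ∈ n.divisors, h d * j (n / d)‖ ^ 2) :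
    (∑' n : ℕ, (∑ d ∈ n.divisors, f d * g (n / d)) *
        conj (∑ d ∈ n.divisors, h d * j (n / d))) *
      (∑' n : ℕ, (f n * g n) * conj (h n * j n)) =
    (∑' n : ℕ, g n * conj (j n)) * (∑' n : ℕ, f n * conj (h n)) *
      (∑' n : ℕ, f n * conj (j n)) * (∑' n : ℕ, g n * conj (h n)) := by
  have key := RamanujanIdentityAux.key f g (fun n => conj (h n)) (fun n => conj (j n))
    hf0 hg0 (by simp [hh0]) (by simp [hj0]) hf1 hg1 (by simp [hh1]) (by simp [hj1])
    hfm hgm (fun m n hm hn => by simp [hhm m n hm hn])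
    (fun m n hm hn => by simp [hjm m n hm hn])
    hf2 hg2 (by simpa using hh2) (by simpa using hj2)
  have e1 : (∑' n : ℕ, (∑ d ∈ n.divisors, f d * g (n / d)) *
      conj (∑ d ∈ n.divisors, h d * j (n / d))) =
      ∑' n : ℕ, (∑ p ∈ n.divisorsAntidiagonal, f p.1 * g p.2) *
        (∑ p ∈ n.divisorsAntidiagonal, conj (h p.1) * conj (j p.2)) := by
    refine tsum_congr fun n => ?_
    rw [Nat.sum_divisorsAntidiagonal (fun x y => f x * g y),
      Nat.sum_divisorsAntidiagonal (fun x y => conj (h x) * conj (j y))]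
    congr 1
    rw [map_sum]
    exact Finset.sum_congr rfl fun d hd => by rw [map_mul]
  have e2 : (∑' n : ℕ, (f n * g n) * conj (h n * j n)) =
      ∑' n : ℕ, f n * g n * (conj (h n) * conj (j n)) := by
    refine tsum_congr fun n => ?_
    rw [map_mul]
  rw [e1, e2, mul_assoc ((∑' n : ℕ, g n * conj (j n)) * (∑' n : ℕ, f n * conj (h n)))]
  exact key
end

section
/- Let f, x : ℕ → ℂ be completely multiplicative functions in ℓ^2 such that f ∗ x ∈ ℓ^2 and the pointwise product f·x ∈ ℓ^2. Then ‖f ∗ x‖_2 · ‖f·x‖_2 = ‖f‖_2 · ‖x‖_2 · |⟨f, x⟩|, where ⟨f, x⟩ = ∑_n f(n) conj(x(n)). -/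
open scoped ComplexConjugate

namespace NormConvAux

noncomputable section

open Finset Function

/-- pointwise product with conjugate -/
def uu (f x : ℕ → ℂ) (n : ℕ) : ℂ := f n * conj (x n)

def ee (f x : ℕ → ℂ) (p : ℕ × ℕ) : ℂ :=
  if Nat.Coprime p.1 p.2 then uu f x p.1 * conj (uu f x p.2) else 0

def GG (f x : ℕ → ℂ) (q : ℕ × ℕ × ℕ × ℕ) : ℂ :=
  ((‖f q.1‖ ^ 2 : ℝ) : ℂ) * (((‖x q.2.1‖ ^ 2 : ℝ) : ℂ) * ee f x q.2.2)

def G2 (f x : ℕ → ℂ) (q : ℕ × ℕ × ℕ) : ℂ :=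
  ((‖uu f x q.1‖ ^ 2 : ℝ) : ℂ) * ee f x q.2

abbrev ST : Type :=
  Σ n : ℕ, {p : (ℕ × ℕ) × ℕ × ℕ // p ∈ n.divisorsAntidiagonal ×ˢ n.divisorsAntidiagonal}

def TT (f x : ℕ → ℂ) (σ : ST) : ℂ :=
  f σ.2.val.1.1 * x σ.2.val.1.2 * (conj (f σ.2.val.2.1) * conj (x σ.2.val.2.2))

def STmk (g t a c : ℕ) (h : g * a * (c * t) ≠ 0) : ST :=
  ⟨g * a * (c * t), ⟨((g * a, c * t), (g * c, a * t)),
    Finset.mem_product.mpr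
      ⟨Nat.mem_divisorsAntidiagonal.mpr ⟨rfl, h⟩,
       Nat.mem_divisorsAntidiagonal.mpr ⟨by ring, h⟩⟩⟩⟩

lemma mul_conj'' (z : ℂ) : z * conj z = ((‖z‖ ^ 2 : ℝ) : ℂ) := by
  rw [Complex.mul_conj']; push_cast; ring

lemma gcd_mul_coprime {a c : ℕ} (g : ℕ) (hcop : Nat.Coprime a c) :
    Nat.gcd (g * a) (g * c) = g := by
  rw [Nat.gcd_mul_left, hcop.gcd_eq_one, mul_one]

lemma decomp {a b c d : ℕ} (ha : a ≠ 0) (hc : c ≠ 0) (h : a * b = c * d) :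
    ∃ g t a' c', Nat.Coprime a' c' ∧ a = g * a' ∧ b = c' * t ∧ c = g * c' ∧ d = a' * t := by
  have hg : 0 < Nat.gcd a c := Nat.gcd_pos_of_pos_left c (Nat.pos_of_ne_zero ha)
  have ea : Nat.gcd a c * (a / Nat.gcd a c) = a := Nat.mul_div_cancel' (Nat.gcd_dvd_left a c)
  have ec : Nat.gcd a c * (c / Nat.gcd a c) = c := Nat.mul_div_cancel' (Nat.gcd_dvd_right a c)
  set g := Nat.gcd a c with hgdef
  set a' := a / g with ha'def
  set c' := c / g with hc'def
  have hcop : Nat.Coprime a' c' := Nat.coprime_div_gcd_div_gcd hg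
  have hc'0 : c' ≠ 0 := by
    rintro h0
    rw [h0, mul_zero] at ec
    exact hc ec.symm
  have h2 : a' * b = c' * d := by
    apply Nat.eq_of_mul_eq_mul_left hg
    calc g * (a' * b) = g * a' * b := (mul_assoc _ _ _).symm
      _ = a * b := by rw [ea]
      _ = c * d := h
      _ = g * (c' * d) := by rw [← ec, mul_assoc]
  have hdvd : c' ∣ b := Nat.Coprime.dvd_of_dvd_mul_left hcop.symm ⟨d, h2⟩
  have eb : c' * (b / c') = b := Nat.mul_div_cancel' hdvd
  refine ⟨g, b / c', a', c', hcop, ea.symm, eb.symm, ec.symm, ?_⟩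
  have hkey : c' * d = c' * (a' * (b / c')) := by
    calc c' * d = a' * b := h2.symm
      _ = a' * (c' * (b / c')) := by rw [eb]
      _ = c' * (a' * (b / c')) := by ring
  exact Nat.eq_of_mul_eq_mul_left (Nat.pos_of_ne_zero hc'0) hkey

section main

variable {f x : ℕ → ℂ}

lemma mult_total (hf0 : f 0 = 0)
    (hfm : ∀ m n : ℕ, 0 < m → 0 < n → f (m * n) = f m * f n) :
    ∀ m n : ℕ, f (m * n) = f m * f n := by
  intro m n
  rcases Nat.eq_zero_or_pos m with rfl | hm
  · simp [hf0]
  rcases Nat.eq_zero_or_pos n with rfl | hn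
  · simp [hf0]
  · exact hfm m n hm hn

lemma GG_value (hf0 : f 0 = 0) (hx0 : x 0 = 0)
    (hfm : ∀ m n : ℕ, 0 < m → 0 < n → f (m * n) = f m * f n)
    (hxm : ∀ m n : ℕ, 0 < m → 0 < n → x (m * n) = x m * x n)
    {a c : ℕ} (hcop : Nat.Coprime a c) (g t : ℕ) :
    f (g * a) * x (c * t) * (conj (f (g * c)) * conj (x (a * t))) = GG f x (g, t, a, c) := by
  have hf' := mult_total hf0 hfm
  have hx' := mult_total hx0 hxm
  simp only [GG, ee]
  rw [if_pos hcop]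
  simp only [uu, hf', hx', map_mul, Complex.conj_conj, ← mul_conj'']
  ring

lemma G2_value (hf0 : f 0 = 0) (hx0 : x 0 = 0)
    (hfm : ∀ m n : ℕ, 0 < m → 0 < n → f (m * n) = f m * f n)
    (hxm : ∀ m n : ℕ, 0 < m → 0 < n → x (m * n) = x m * x n)
    {a c : ℕ} (hcop : Nat.Coprime a c) (e : ℕ) :
    uu f x (e * a) * conj (uu f x (e * c)) = G2 f x (e, a, c) := by
  have hf' := mult_total hf0 hfm
  have hx' := mult_total hx0 hxm
  simp only [G2, ee]
  rw [if_pos hcop]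
  simp only [uu, hf', hx', map_mul, Complex.conj_conj, ← mul_conj'']
  ring

lemma uu_ne_zero (hf0 : f 0 = 0) {n : ℕ} (h : uu f x n ≠ 0) : n ≠ 0 := by
  rintro rfl
  exact h (by simp [uu, hf0])

lemma GG_support (hf0 : f 0 = 0) (hx0 : x 0 = 0) {q : ℕ × ℕ × ℕ × ℕ}
    (h : GG f x q ≠ 0) :
    q.1 ≠ 0 ∧ q.2.1 ≠ 0 ∧ q.2.2.1 ≠ 0 ∧ q.2.2.2 ≠ 0 ∧ Nat.Coprime q.2.2.1 q.2.2.2 := by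
  obtain ⟨g, t, a, c⟩ := q
  simp only [GG, ee] at h ⊢
  by_cases hcop : Nat.Coprime a c
  · rw [if_pos hcop] at h
    have h1 : f g ≠ 0 := by intro h0; apply h; simp [h0]
    have h2 : x t ≠ 0 := by intro h0; apply h; simp [h0]
    have h3 : uu f x a ≠ 0 := by intro h0; apply h; simp [h0]
    have h4 : uu f x c ≠ 0 := by intro h0; apply h; simp [h0]
    exact ⟨fun hg => h1 (hg ▸ hf0), fun ht => h2 (ht ▸ hx0),
      uu_ne_zero hf0 h3, uu_ne_zero hf0 h4, hcop⟩
  · rw [if_neg hcop] at h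
    simp at h

lemma G2_support (hf0 : f 0 = 0) {q : ℕ × ℕ × ℕ}
    (h : G2 f x q ≠ 0) :
    q.1 ≠ 0 ∧ q.2.1 ≠ 0 ∧ q.2.2 ≠ 0 ∧ Nat.Coprime q.2.1 q.2.2 := by
  obtain ⟨e, a, c⟩ := q
  simp only [G2, ee] at h ⊢
  by_cases hcop : Nat.Coprime a c
  · rw [if_pos hcop] at h
    have h1 : uu f x e ≠ 0 := by intro h0; apply h; simp [h0]
    have h3 : uu f x a ≠ 0 := by intro h0; apply h; simp [h0]
    have h4 : uu f x c ≠ 0 := by intro h0; apply h; simp [h0]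
    exact ⟨uu_ne_zero hf0 h1, uu_ne_zero hf0 h3, uu_ne_zero hf0 h4, hcop⟩
  · rw [if_neg hcop] at h
    simp at h

/-- The parametrization map from the support of `GG` to the sigma type `ST`. -/
def iG (hf0 : f 0 = 0) (hx0 : x 0 = 0) (q : Function.support (GG f x)) : ST :=
  STmk q.val.1 q.val.2.1 q.val.2.2.1 q.val.2.2.2 (by
    obtain ⟨h1, h2, h3, h4, h5⟩ := GG_support hf0 hx0 (Function.mem_support.mp q.2)
    exact mul_ne_zero (mul_ne_zero h1 h3) (mul_ne_zero h4 h2))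

lemma iG_inj (hf0 : f 0 = 0) (hx0 : x 0 = 0) :
    Function.Injective (iG (f := f) (x := x) hf0 hx0) := by
  rintro ⟨⟨g, t, a, c⟩, hq⟩ ⟨⟨g', t', a', c'⟩, hq'⟩ hEq
  obtain ⟨hg, ht, ha, hc, hcop⟩ := GG_support hf0 hx0 (Function.mem_support.mp hq)
  obtain ⟨hg', ht', ha', hc', hcop'⟩ := GG_support hf0 hx0 (Function.mem_support.mp hq')
  have hvals := congrArg (fun σ : ST => σ.2.val) hEq
  simp only [iG, STmk, Prod.mk.injEq] at hvals
  obtain ⟨⟨e1, e2⟩, e3, e4⟩ := hvals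
  have hgg : g = g' := by
    have h1 : Nat.gcd (g * a) (g * c) = Nat.gcd (g' * a') (g' * c') := by rw [e1, e3]
    rwa [gcd_mul_coprime g hcop, gcd_mul_coprime g' hcop'] at h1
  subst hgg
  have haa : a = a' := Nat.eq_of_mul_eq_mul_left (Nat.pos_of_ne_zero hg) e1
  subst haa
  have hcc : c = c' := Nat.eq_of_mul_eq_mul_left (Nat.pos_of_ne_zero hg) e3
  subst hcc
  have htt : t = t' := Nat.eq_of_mul_eq_mul_left (Nat.pos_of_ne_zero hc) e2
  subst htt
  rfl

lemma iG_val (hf0 : f 0 = 0) (hx0 : x 0 = 0)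
    (hfm : ∀ m n : ℕ, 0 < m → 0 < n → f (m * n) = f m * f n)
    (hxm : ∀ m n : ℕ, 0 < m → 0 < n → x (m * n) = x m * x n) :
    ∀ q, TT f x (iG (f := f) (x := x) hf0 hx0 q) = GG f x q.val := by
  rintro ⟨⟨g, t, a, c⟩, hq⟩
  obtain ⟨-, -, -, -, hcop⟩ := GG_support hf0 hx0 (Function.mem_support.mp hq)
  exact GG_value hf0 hx0 hfm hxm hcop g t

lemma iG_range (hf0 : f 0 = 0) (hx0 : x 0 = 0)
    (hfm : ∀ m n : ℕ, 0 < m → 0 < n → f (m * n) = f m * f n)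
    (hxm : ∀ m n : ℕ, 0 < m → 0 < n → x (m * n) = x m * x n) :
    Function.support (TT f x) ⊆ Set.range (iG (f := f) (x := x) hf0 hx0) := by
  rintro ⟨n, ⟨⟨⟨a, b⟩, ⟨c, d⟩⟩, hmem⟩⟩ hσ
  rw [Function.mem_support] at hσ
  rw [Finset.mem_product] at hmem
  obtain ⟨hm1, hm2⟩ := hmem
  obtain ⟨hab, hn0⟩ := Nat.mem_divisorsAntidiagonal.mp hm1
  obtain ⟨hcd, -⟩ := Nat.mem_divisorsAntidiagonal.mp hm2
  have hTne : f a * x b * (conj (f c) * conj (x d)) ≠ 0 := hσ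
  have ha0 : a ≠ 0 := by rintro rfl; exact hTne (by simp [hf0])
  have hc0 : c ≠ 0 := by rintro rfl; exact hTne (by simp [hf0])
  obtain ⟨g, t, a', c', hcop, ea, eb, ec, ed⟩ := decomp ha0 hc0 (by rw [hab, hcd])
  have hGne : GG f x (g, t, a', c') ≠ 0 := by
    rw [← GG_value hf0 hx0 hfm hxm hcop g t, ← ea, ← eb, ← ec, ← ed]
    exact hTne
  refine ⟨⟨(g, t, a', c'), Function.mem_support.mpr hGne⟩, ?_⟩
  apply Sigma.subtype_ext
  · show g * a' * (c' * t) = n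
    rw [← ea, ← eb]; exact hab
  · show ((g * a', c' * t), (g * c', a' * t)) = ((a, b), (c, d))
    rw [← ea, ← eb, ← ec, ← ed]

/-- The parametrization map from the support of `G2` to `ℕ × ℕ`. -/
def i2 (q : Function.support (G2 f x)) : ℕ × ℕ :=
  (q.val.1 * q.val.2.1, q.val.1 * q.val.2.2)

lemma i2_inj (hf0 : f 0 = 0) : Function.Injective (i2 (f := f) (x := x)) := by
  rintro ⟨⟨e, a, c⟩, hq⟩ ⟨⟨e', a', c'⟩, hq'⟩ hEq
  obtain ⟨he, ha, hc, hcop⟩ := G2_support hf0 (Function.mem_support.mp hq)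
  obtain ⟨he', ha', hc', hcop'⟩ := G2_support hf0 (Function.mem_support.mp hq')
  simp only [i2, Prod.mk.injEq] at hEq
  obtain ⟨e1, e2⟩ := hEq
  have hee : e = e' := by
    have h1 : Nat.gcd (e * a) (e * c) = Nat.gcd (e' * a') (e' * c') := by rw [e1, e2]
    rwa [gcd_mul_coprime e hcop, gcd_mul_coprime e' hcop'] at h1
  subst hee
  have haa : a = a' := Nat.eq_of_mul_eq_mul_left (Nat.pos_of_ne_zero he) e1
  subst haa
  have hcc : c = c' := Nat.eq_of_mul_eq_mul_left (Nat.pos_of_ne_zero he) e2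
  subst hcc
  rfl

lemma i2_val (hf0 : f 0 = 0) (hx0 : x 0 = 0)
    (hfm : ∀ m n : ℕ, 0 < m → 0 < n → f (m * n) = f m * f n)
    (hxm : ∀ m n : ℕ, 0 < m → 0 < n → x (m * n) = x m * x n) :
    ∀ q : Function.support (G2 f x),
      uu f x (i2 (f := f) (x := x) q).1 * conj (uu f x (i2 (f := f) (x := x) q).2)
        = G2 f x q.val := by
  rintro ⟨⟨e, a, c⟩, hq⟩
  obtain ⟨-, -, -, hcop⟩ := G2_support hf0 (Function.mem_support.mp hq)
  exact G2_value hf0 hx0 hfm hxm hcop e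

lemma i2_range (hf0 : f 0 = 0) (hx0 : x 0 = 0)
    (hfm : ∀ m n : ℕ, 0 < m → 0 < n → f (m * n) = f m * f n)
    (hxm : ∀ m n : ℕ, 0 < m → 0 < n → x (m * n) = x m * x n) :
    Function.support (fun p : ℕ × ℕ => uu f x p.1 * conj (uu f x p.2))
      ⊆ Set.range (i2 (f := f) (x := x)) := by
  rintro ⟨a, c⟩ hp
  rw [Function.mem_support] at hp
  have hu1 : uu f x a ≠ 0 := fun h0 => hp (by simp [h0])
  have hu2 : uu f x c ≠ 0 := fun h0 => hp (by simp [h0])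
  have ha0 : a ≠ 0 := uu_ne_zero hf0 hu1
  have hc0 : c ≠ 0 := uu_ne_zero hf0 hu2
  have hg : 0 < Nat.gcd a c := Nat.gcd_pos_of_pos_left c (Nat.pos_of_ne_zero ha0)
  have ea : Nat.gcd a c * (a / Nat.gcd a c) = a := Nat.mul_div_cancel' (Nat.gcd_dvd_left a c)
  have ec : Nat.gcd a c * (c / Nat.gcd a c) = c := Nat.mul_div_cancel' (Nat.gcd_dvd_right a c)
  have hcop : Nat.Coprime (a / Nat.gcd a c) (c / Nat.gcd a c) :=
    Nat.coprime_div_gcd_div_gcd hg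
  have hGne : G2 f x (Nat.gcd a c, a / Nat.gcd a c, c / Nat.gcd a c) ≠ 0 := by
    rw [← G2_value hf0 hx0 hfm hxm hcop (Nat.gcd a c), ea, ec]
    exact hp
  refine ⟨⟨(Nat.gcd a c, a / Nat.gcd a c, c / Nat.gcd a c), Function.mem_support.mpr hGne⟩, ?_⟩
  simp only [i2]
  rw [ea, ec]

end main

end

end NormConvAux

set_option maxHeartbeats 2000000 in
open NormConvAux in
/-- For completely multiplicative f, x ∈ ℓ² with f∗x ∈ ℓ² and f·x ∈ ℓ²:
‖f ∗ x‖₂ · ‖f·x‖₂ = ‖f‖₂ · ‖x‖₂ · |⟨f, x⟩|. -/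
theorem norm_conv_mul_norm_pointwise
    (f x : ℕ → ℂ)
    (hf0 : f 0 = 0) (hx0 : x 0 = 0)
    (hf1 : f 1 = 1) (hx1 : x 1 = 1)
    (hfm : ∀ m n : ℕ, 0 < m → 0 < n → f (m * n) = f m * f n)
    (hxm : ∀ m n : ℕ, 0 < m → 0 < n → x (m * n) = x m * x n)
    (hf2 : Summable fun n => ‖f n‖ ^ 2) (hx2 : Summable fun n => ‖x n‖ ^ 2)
    (hfx2 : Summable fun n => ‖∑ d ∈ n.divisors, f d * x (n / d)‖ ^ 2)
    (hmul2 : Summable fun n => ‖f n * x n‖ ^ 2) :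
    (∑' n : ℕ, ‖∑ d ∈ n.divisors, f d * x (n / d)‖ ^ 2) ^ ((1 : ℝ) / 2) *
        (∑' n : ℕ, ‖f n * x n‖ ^ 2) ^ ((1 : ℝ) / 2) =
      (∑' n : ℕ, ‖f n‖ ^ 2) ^ ((1 : ℝ) / 2) *
        (∑' n : ℕ, ‖x n‖ ^ 2) ^ ((1 : ℝ) / 2) *
        ‖∑' n : ℕ, f n * conj (x n)‖ := by
  classical
  -- basic summability facts
  have hnorm_uu : ∀ n, ‖uu f x n‖ = ‖f n‖ * ‖x n‖ := by
    intro n; simp [uu, norm_mul, RCLike.norm_conj]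
  have hu_norm : Summable (fun n => ‖uu f x n‖) := by
    have hb : Summable (fun n => (‖f n‖ ^ 2 + ‖x n‖ ^ 2) / 2) := (hf2.add hx2).div_const 2
    refine Summable.of_nonneg_of_le (fun n => norm_nonneg _) (fun n => ?_) hb
    rw [hnorm_uu]
    nlinarith [sq_nonneg (‖f n‖ - ‖x n‖), norm_nonneg (f n), norm_nonneg (x n)]
  have hu2 : Summable (fun n => ‖uu f x n‖ ^ 2) := by
    refine hmul2.congr fun n => ?_
    rw [hnorm_uu, norm_mul]
  have he_norm_bound : ∀ p : ℕ × ℕ, ‖ee f x p‖ ≤ ‖uu f x p.1‖ * ‖uu f x p.2‖ := by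
    intro p
    unfold ee
    split
    · rw [norm_mul, RCLike.norm_conj]
    · simp [mul_nonneg, norm_nonneg]
  have he_sum_norm : Summable (fun p : ℕ × ℕ => ‖uu f x p.1‖ * ‖uu f x p.2‖) :=
    hu_norm.mul_of_nonneg hu_norm (fun _ => norm_nonneg _) (fun _ => norm_nonneg _)
  have hee : Summable (ee f x) :=
    Summable.of_norm_bounded he_sum_norm he_norm_bound
  have hnorm_ofReal : ∀ r : ℝ, 0 ≤ r → ‖(r : ℂ)‖ = r := by
    intro r hr
    rw [Complex.norm_real]
    exact Real.norm_of_nonneg hr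
  have hxe : Summable (fun r : ℕ × ℕ × ℕ => ((‖x r.1‖ ^ 2 : ℝ) : ℂ) * ee f x r.2) := by
    refine Summable.of_norm_bounded
      (g := fun r : ℕ × ℕ × ℕ => ‖x r.1‖ ^ 2 * (‖uu f x r.2.1‖ * ‖uu f x r.2.2‖)) ?_ ?_
    · exact hx2.mul_of_nonneg he_sum_norm (fun _ => sq_nonneg _)
        (fun p => mul_nonneg (norm_nonneg _) (norm_nonneg _))
    · intro r
      rw [norm_mul, hnorm_ofReal _ (sq_nonneg _)]
      exact mul_le_mul_of_nonneg_left (he_norm_bound _) (sq_nonneg _)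
  have hGG : Summable (GG f x) := by
    refine Summable.of_norm_bounded
      (g := fun q : ℕ × ℕ × ℕ × ℕ => ‖f q.1‖ ^ 2 *
        (‖x q.2.1‖ ^ 2 * (‖uu f x q.2.2.1‖ * ‖uu f x q.2.2.2‖))) ?_ ?_
    · exact hf2.mul_of_nonneg
        (hx2.mul_of_nonneg he_sum_norm (fun _ => sq_nonneg _)
          (fun p => mul_nonneg (norm_nonneg _) (norm_nonneg _)))
        (fun _ => sq_nonneg _)
        (fun r => mul_nonneg (sq_nonneg _) (mul_nonneg (norm_nonneg _) (norm_nonneg _)))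
    · intro q
      unfold GG
      rw [norm_mul, norm_mul, hnorm_ofReal _ (sq_nonneg _), hnorm_ofReal _ (sq_nonneg _)]
      exact mul_le_mul_of_nonneg_left
        (mul_le_mul_of_nonneg_left (he_norm_bound _) (sq_nonneg _)) (sq_nonneg _)
  have hG2 : Summable (G2 f x) := by
    refine Summable.of_norm_bounded
      (g := fun q : ℕ × ℕ × ℕ => ‖uu f x q.1‖ ^ 2 * (‖uu f x q.2.1‖ * ‖uu f x q.2.2‖)) ?_ ?_
    · exact hu2.mul_of_nonneg he_sum_norm (fun _ => sq_nonneg _)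
        (fun p => mul_nonneg (norm_nonneg _) (norm_nonneg _))
    · intro q
      unfold G2
      rw [norm_mul, hnorm_ofReal _ (sq_nonneg _)]
      exact mul_le_mul_of_nonneg_left (he_norm_bound _) (sq_nonneg _)
  have hu : Summable (uu f x) := hu_norm.of_norm
  have huc : Summable (fun n => conj (uu f x n)) := by
    refine Summable.of_norm ?_
    refine hu_norm.congr fun n => ?_
    rw [RCLike.norm_conj]
  have hT2 : Summable (fun z : ℕ × ℕ => uu f x z.1 * conj (uu f x z.2)) := by
    refine summable_mul_of_summable_norm (f := uu f x) (g := fun n => conj (uu f x n))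
      hu_norm ?_
    refine hu_norm.congr fun n => ?_
    rw [RCLike.norm_conj]
  -- cast summabilities
  have hAc : Summable (fun n => ((‖f n‖ ^ 2 : ℝ) : ℂ)) := by exact_mod_cast hf2
  have hBc : Summable (fun n => ((‖x n‖ ^ 2 : ℝ) : ℂ)) := by exact_mod_cast hx2
  have hUc : Summable (fun n => ((‖uu f x n‖ ^ 2 : ℝ) : ℂ)) := by exact_mod_cast hu2
  -- Lemma B (inner product side)
  have F1 : (∑' p : ℕ × ℕ, uu f x p.1 * conj (uu f x p.2)) = ∑' q : ℕ × ℕ × ℕ, G2 f x q :=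
    tsum_eq_tsum_of_ne_zero_bij (i2 (f := f) (x := x)) (i2_inj hf0)
      (i2_range hf0 hx0 hfm hxm) (i2_val hf0 hx0 hfm hxm)
  have F2 : (∑' n, uu f x n) * conj (∑' n, uu f x n)
      = ∑' p : ℕ × ℕ, uu f x p.1 * conj (uu f x p.2) := by
    have hconj : conj (∑' n, uu f x n) = ∑' n, conj (uu f x n) := by
      rw [starRingEnd_apply, tsum_star]
      exact tsum_congr fun n => by rw [starRingEnd_apply]
    rw [hconj]
    exact Summable.tsum_mul_tsum (f := uu f x) (g := fun n => conj (uu f x n)) hu huc hT2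
  have F3 : (∑' q : ℕ × ℕ × ℕ, G2 f x q)
      = (∑' n, ((‖uu f x n‖ ^ 2 : ℝ) : ℂ)) * ∑' p : ℕ × ℕ, ee f x p :=
    (Summable.tsum_mul_tsum (f := fun n => ((‖uu f x n‖ ^ 2 : ℝ) : ℂ)) (g := ee f x) hUc hee hG2).symm
  -- Lemma A (convolution side)
  have E1 : (∑' σ : ST, TT f x σ) = ∑' q : ℕ × ℕ × ℕ × ℕ, GG f x q :=
    tsum_eq_tsum_of_ne_zero_bij (iG (f := f) (x := x) hf0 hx0) (iG_inj hf0 hx0)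
      (iG_range hf0 hx0 hfm hxm) (iG_val hf0 hx0 hfm hxm)
  -- summability of TT
  have hGsub : Summable ((GG f x) ∘ (Subtype.val : Function.support (GG f x) → _)) := by
    refine (Function.Injective.summable_iff Subtype.val_injective ?_).mpr hGG
    intro q hq
    refine Function.notMem_support.mp ?_
    simpa using hq
  have hTTi : Summable ((TT f x) ∘ iG (f := f) (x := x) hf0 hx0) :=
    hGsub.congr fun q => (iG_val hf0 hx0 hfm hxm q).symm
  have hTT : Summable (TT f x) := by
    refine (Function.Injective.summable_iff (iG_inj hf0 hx0) ?_).mp hTTi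
    intro σ hσ
    by_contra h0
    exact hσ (iG_range hf0 hx0 hfm hxm (Function.mem_support.mpr h0))
  -- computing the sigma sum fiberwise
  have E2 : (∑' σ : ST, TT f x σ)
      = ∑' n : ℕ, ((‖∑ d ∈ n.divisors, f d * x (n / d)‖ ^ 2 : ℝ) : ℂ) := by
    rw [Summable.tsum_sigma hTT]
    refine tsum_congr fun n => ?_
    have hsub : (∑' p : {p : (ℕ × ℕ) × ℕ × ℕ //
          p ∈ n.divisorsAntidiagonal ×ˢ n.divisorsAntidiagonal}, TT f x ⟨n, p⟩)
        = ∑ p ∈ n.divisorsAntidiagonal ×ˢ n.divisorsAntidiagonal,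
            (f p.1.1 * x p.1.2 * (conj (f p.2.1) * conj (x p.2.2))) := by
      refine (tsum_congr fun p => ?_).trans
        (Finset.tsum_subtype (n.divisorsAntidiagonal ×ˢ n.divisorsAntidiagonal)
          (fun p => f p.1.1 * x p.1.2 * (conj (f p.2.1) * conj (x p.2.2))))
      rfl
    rw [hsub, Finset.sum_product]
    rw [show (∑ a ∈ n.divisorsAntidiagonal, ∑ b ∈ n.divisorsAntidiagonal,
          f a.1 * x a.2 * (conj (f b.1) * conj (x b.2)))
        = (∑ a ∈ n.divisorsAntidiagonal, f a.1 * x a.2) *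
          (∑ b ∈ n.divisorsAntidiagonal, conj (f b.1) * conj (x b.2)) from
      (Finset.sum_mul_sum _ _ _ _).symm]
    have h1 : (∑ a ∈ n.divisorsAntidiagonal, f a.1 * x a.2)
        = ∑ d ∈ n.divisors, f d * x (n / d) :=
      Nat.sum_divisorsAntidiagonal (f := fun i j => f i * x j)
    have h2 : (∑ b ∈ n.divisorsAntidiagonal, conj (f b.1) * conj (x b.2))
        = conj (∑ d ∈ n.divisors, f d * x (n / d)) := by
      rw [← h1, map_sum]
      exact Finset.sum_congr rfl fun p _ => by rw [map_mul]
    rw [h1, h2, mul_conj'']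
  -- factoring the GG sum
  have e3a : (∑' n : ℕ, ((‖f n‖ ^ 2 : ℝ) : ℂ)) *
      (∑' r : ℕ × ℕ × ℕ, ((‖x r.1‖ ^ 2 : ℝ) : ℂ) * ee f x r.2)
      = ∑' q : ℕ × ℕ × ℕ × ℕ, GG f x q :=
    Summable.tsum_mul_tsum (f := fun n => ((‖f n‖ ^ 2 : ℝ) : ℂ))
      (g := fun r : ℕ × ℕ × ℕ => ((‖x r.1‖ ^ 2 : ℝ) : ℂ) * ee f x r.2) hAc hxe hGG
  have e3b : (∑' n : ℕ, ((‖x n‖ ^ 2 : ℝ) : ℂ)) * (∑' p : ℕ × ℕ, ee f x p)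
      = ∑' r : ℕ × ℕ × ℕ, ((‖x r.1‖ ^ 2 : ℝ) : ℂ) * ee f x r.2 :=
    Summable.tsum_mul_tsum (f := fun n => ((‖x n‖ ^ 2 : ℝ) : ℂ)) (g := ee f x) hBc hee hxe
  have E3 : (∑' q : ℕ × ℕ × ℕ × ℕ, GG f x q)
      = (∑' n : ℕ, ((‖f n‖ ^ 2 : ℝ) : ℂ)) *
        ((∑' n : ℕ, ((‖x n‖ ^ 2 : ℝ) : ℂ)) * ∑' p : ℕ × ℕ, ee f x p) := by
    rw [← e3a, ← e3b]
  -- the key complex identity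
  have KC : ((∑' n : ℕ, ‖∑ d ∈ n.divisors, f d * x (n / d)‖ ^ 2 : ℝ) : ℂ) *
        ((∑' n : ℕ, ‖uu f x n‖ ^ 2 : ℝ) : ℂ)
      = ((∑' n : ℕ, ‖f n‖ ^ 2 : ℝ) : ℂ) * ((∑' n : ℕ, ‖x n‖ ^ 2 : ℝ) : ℂ) *
        ((‖∑' n : ℕ, uu f x n‖ ^ 2 : ℝ) : ℂ) := by
    have l1 : ((∑' n : ℕ, ‖∑ d ∈ n.divisors, f d * x (n / d)‖ ^ 2 : ℝ) : ℂ)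
        = ((∑' n : ℕ, ‖f n‖ ^ 2 : ℝ) : ℂ) *
          ((∑' n : ℕ, ‖x n‖ ^ 2 : ℝ) : ℂ) * ∑' p : ℕ × ℕ, ee f x p := by
      rw [Complex.ofReal_tsum, ← E2, E1, E3, Complex.ofReal_tsum, Complex.ofReal_tsum,
        mul_assoc]
    have l2 : ((∑' n : ℕ, ‖uu f x n‖ ^ 2 : ℝ) : ℂ) * (∑' p : ℕ × ℕ, ee f x p)
        = ((‖∑' n : ℕ, uu f x n‖ ^ 2 : ℝ) : ℂ) := by
      rw [Complex.ofReal_tsum, ← F3, ← F1, ← F2, mul_conj'']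
    calc ((∑' n : ℕ, ‖∑ d ∈ n.divisors, f d * x (n / d)‖ ^ 2 : ℝ) : ℂ) *
          ((∑' n : ℕ, ‖uu f x n‖ ^ 2 : ℝ) : ℂ)
        = ((∑' n : ℕ, ‖f n‖ ^ 2 : ℝ) : ℂ) * ((∑' n : ℕ, ‖x n‖ ^ 2 : ℝ) : ℂ) *
            (((∑' n : ℕ, ‖uu f x n‖ ^ 2 : ℝ) : ℂ) * ∑' p : ℕ × ℕ, ee f x p) := by
          rw [l1]; ring
      _ = _ := by rw [l2]
  have KR : (∑' n : ℕ, ‖∑ d ∈ n.divisors, f d * x (n / d)‖ ^ 2) *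
        (∑' n : ℕ, ‖uu f x n‖ ^ 2)
      = (∑' n : ℕ, ‖f n‖ ^ 2) * (∑' n : ℕ, ‖x n‖ ^ 2) *
        ‖∑' n : ℕ, uu f x n‖ ^ 2 := by
    exact_mod_cast KC
  -- final real computation
  have hUeq : (∑' n : ℕ, ‖f n * x n‖ ^ 2) = ∑' n : ℕ, ‖uu f x n‖ ^ 2 :=
    tsum_congr fun n => by rw [hnorm_uu, norm_mul]
  have huueq : (∑' n : ℕ, f n * conj (x n)) = ∑' n : ℕ, uu f x n := rfl
  rw [hUeq, huueq]
  have hCr0 : (0 : ℝ) ≤ ∑' n : ℕ, ‖∑ d ∈ n.divisors, f d * x (n / d)‖ ^ 2 :=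
    tsum_nonneg fun n => sq_nonneg _
  have hUr0 : (0 : ℝ) ≤ ∑' n : ℕ, ‖uu f x n‖ ^ 2 := tsum_nonneg fun n => sq_nonneg _
  have hA0 : (0 : ℝ) ≤ ∑' n : ℕ, ‖f n‖ ^ 2 := tsum_nonneg fun n => sq_nonneg _
  have hB0 : (0 : ℝ) ≤ ∑' n : ℕ, ‖x n‖ ^ 2 := tsum_nonneg fun n => sq_nonneg _
  rw [← Real.mul_rpow hCr0 hUr0, ← Real.mul_rpow hA0 hB0]
  have hNN : ‖∑' n : ℕ, uu f x n‖ = (‖∑' n : ℕ, uu f x n‖ ^ 2) ^ ((1 : ℝ) / 2) := by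
    rw [← Real.rpow_natCast ‖∑' n : ℕ, uu f x n‖ 2, ← Real.rpow_mul (norm_nonneg _)]
    norm_num
  rw [hNN, ← Real.mul_rpow (mul_nonneg hA0 hB0) (sq_nonneg _), KR]
end

section
/- Let f, x : ℕ → ℂ be completely multiplicative functions in ℓ^2 with f ∗ x ∈ ℓ^2. Then ‖f ∗ x‖_2 ≤ ‖f‖_2 · ‖x‖_2 · |⟨f, x⟩|, since ‖f·x‖_2 ≥ |f(1)x(1)| = 1. -/
open scoped ComplexConjugate

/-!
With `φ = f · conj x`, every solution of `a * b = c * d` is uniquely `a = g s`, `b = t u`,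
`c = g t`, `d = s u` with `gcd s t = 1`, so complete multiplicativity gives
`‖f ∗ x‖² = ‖f‖² ‖x‖² S`, where `S = ∑_{gcd s t = 1} φ s * conj (φ t)`. Writing pairs as
`(a, c) = (g s, g t)` in the same way gives `|⟨f, x⟩|² = ‖φ‖² S`. Hence
`‖f ∗ x‖² ‖φ‖² = ‖f‖² ‖x‖² |⟨f, x⟩|²`, and `‖φ‖² ≥ |φ 1|² = 1`.
-/

lemma map_mul_of_map_zero {M : Type*} [MulZeroClass M] {φ : ℕ → M} (h0 : φ 0 = 0)
    (h : ∀ m n : ℕ, 0 < m → 0 < n → φ (m * n) = φ m * φ n) (m n : ℕ) :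
    φ (m * n) = φ m * φ n := by
  rcases Nat.eq_zero_or_pos m with rfl | hm
  · simp [h0]
  rcases Nat.eq_zero_or_pos n with rfl | hn
  · simp [h0]
  exact h m n hm hn

lemma summable_norm_mul_of_summable_sq {ι R : Type*} [SeminormedRing R] {f g : ι → R}
    (hf : Summable (‖f ·‖ ^ 2)) (hg : Summable (‖g ·‖ ^ 2)) : Summable fun i => ‖f i * g i‖ := by
  refine .of_nonneg_of_le (fun _ => norm_nonneg _) (fun i => ?_) ((hf.add hg).div_const 2)
  have := two_mul_le_add_sq ‖f i‖ ‖g i‖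
  have := norm_mul_le (f i) (g i)
  linarith

lemma summable_sq_of_nonneg {ι : Type*} {a : ι → ℝ} (h0 : 0 ≤ a) (ha : Summable a) :
    Summable (a · ^ 2) := by
  refine .of_nonneg_of_le (fun _ => sq_nonneg _) (fun i => ?_) (ha.mul_left (∑' j, a j))
  rw [sq]
  exact mul_le_mul_of_nonneg_right (ha.le_tsum i fun j _ => h0 j) (h0 i)

lemma Nat.gcd_mul_left_of_coprime (g : ℕ) {s t : ℕ} (h : s.Coprime t) :
    Nat.gcd (g * s) (g * t) = g := by
  rw [Nat.gcd_mul_left, h, mul_one]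

section Parametrization

variable {α : Type*} [AddCommMonoid α] [TopologicalSpace α]

theorem hasSum_iff_hasSum_gcd_param {h : ℕ × ℕ → α} {v : α} (h0 : h (0, 0) = 0) :
    HasSum h v ↔ HasSum (fun w : ℕ × ℕ × ℕ =>
      if w.2.1.Coprime w.2.2 then h (w.1 * w.2.1, w.1 * w.2.2) else 0) v := by
  refine hasSum_iff_hasSum_of_ne_zero_bij (fun w => (w.1.1 * w.1.2.1, w.1.1 * w.1.2.2))
    ?_ ?_ ?_
  · rintro ⟨⟨g, s, t⟩, hw⟩ ⟨⟨g', s', t'⟩, hw'⟩ he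
    obtain ⟨hst, hw⟩ := ite_ne_right_iff.mp hw
    obtain ⟨hst', -⟩ := ite_ne_right_iff.mp hw'
    obtain ⟨e1, e2⟩ := Prod.mk.inj he
    dsimp only at hst hw hst' e1 e2
    obtain rfl : g = g' := by
      rw [← Nat.gcd_mul_left_of_coprime g hst, ← Nat.gcd_mul_left_of_coprime g' hst', e1, e2]
    have hg : 0 < g := Nat.pos_of_ne_zero fun hg => hw (by simpa [hg] using h0)
    obtain rfl := Nat.eq_of_mul_eq_mul_left hg e1
    obtain rfl := Nat.eq_of_mul_eq_mul_left hg e2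
    rfl
  · rintro ⟨a, c⟩ hac
    obtain ⟨s, t, hst, ha, hc⟩ := Nat.exists_coprime a c
    have hpar : (a.gcd c * s, a.gcd c * t) = (a, c) := by rw [mul_comm, ← ha, mul_comm, ← hc]
    refine ⟨⟨(a.gcd c, s, t), ?_⟩, hpar⟩
    exact ite_ne_right_iff.mpr ⟨hst, by rwa [hpar]⟩
  · rintro ⟨w, hw⟩
    exact (if_pos (ite_ne_right_iff.mp hw).1).symm

theorem hasSum_iff_hasSum_mul_eq_mul_param {h : (ℕ × ℕ) × ℕ × ℕ → α} {v : α}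
    (h0 : ∀ z : (ℕ × ℕ) × ℕ × ℕ, z.1.1 * z.1.2 = 0 → h z = 0) :
    HasSum (fun z : (ℕ × ℕ) × ℕ × ℕ => if z.1.1 * z.1.2 = z.2.1 * z.2.2 then h z else 0) v ↔
      HasSum (fun w : (ℕ × ℕ) × ℕ × ℕ => if w.2.1.Coprime w.2.2 then
        h ((w.1.1 * w.2.1, w.2.2 * w.1.2), (w.1.1 * w.2.2, w.2.1 * w.1.2)) else 0) v := by
  refine hasSum_iff_hasSum_of_ne_zero_bij
    (fun w => ((w.1.1.1 * w.1.2.1, w.1.2.2 * w.1.1.2), (w.1.1.1 * w.1.2.2, w.1.2.1 * w.1.1.2)))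
    ?_ ?_ ?_
  · rintro ⟨⟨⟨g, u⟩, s, t⟩, hw⟩ ⟨⟨⟨g', u'⟩, s', t'⟩, hw'⟩ he
    obtain ⟨hst, hw⟩ := ite_ne_right_iff.mp hw
    obtain ⟨hst', -⟩ := ite_ne_right_iff.mp hw'
    simp only [Prod.mk.injEq] at he
    obtain ⟨⟨e1, e2⟩, e3, -⟩ := he
    dsimp only at hst hw hst'
    have hne : g * s * (t * u) ≠ 0 := fun h' => hw (h0 _ h')
    simp only [mul_ne_zero_iff] at hne
    obtain rfl : g = g' := by
      rw [← Nat.gcd_mul_left_of_coprime g hst, ← Nat.gcd_mul_left_of_coprime g' hst', e1, e3]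
    obtain rfl := Nat.eq_of_mul_eq_mul_left (Nat.pos_of_ne_zero hne.1.1) e1
    obtain rfl := Nat.eq_of_mul_eq_mul_left (Nat.pos_of_ne_zero hne.1.1) e3
    obtain rfl := Nat.eq_of_mul_eq_mul_left (Nat.pos_of_ne_zero hne.2.1) e2
    rfl
  · rintro ⟨⟨a, b⟩, c, d⟩ hz
    obtain ⟨habcd, hz⟩ := ite_ne_right_iff.mp hz
    dsimp only at habcd hz
    have hab : a * b ≠ 0 := fun hab => hz (h0 _ hab)
    obtain ⟨s, t, hst, ha, hc⟩ := Nat.exists_coprime a c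
    set g := a.gcd c
    have hcd : c * d ≠ 0 := habcd ▸ hab
    have hg : g ≠ 0 := right_ne_zero_of_mul (ha ▸ left_ne_zero_of_mul hab)
    have ht : t ≠ 0 := left_ne_zero_of_mul (hc ▸ left_ne_zero_of_mul hcd)
    have hsb : s * b = t * d := by
      apply Nat.eq_of_mul_eq_mul_left (Nat.pos_of_ne_zero hg)
      rw [← mul_assoc, ← mul_assoc, mul_comm g s, mul_comm g t, ← ha, ← hc, habcd]
    obtain ⟨u, rfl⟩ : t ∣ b := hst.symm.dvd_of_dvd_mul_left (hsb ▸ dvd_mul_right t d)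
    obtain rfl : d = s * u := by
      apply Nat.eq_of_mul_eq_mul_left (Nat.pos_of_ne_zero ht)
      rw [← hsb]; ring
    have hpar : ((g * s, t * u), (g * t, s * u)) = ((a, t * u), (c, s * u)) := by
      rw [mul_comm g s, mul_comm g t, ← ha, ← hc]
    refine ⟨⟨((g, u), (s, t)), ?_⟩, hpar⟩
    exact ite_ne_right_iff.mpr ⟨hst, by rwa [hpar]⟩
  · rintro ⟨w, hw⟩
    rw [if_pos (by ring), if_pos (ite_ne_right_iff.mp hw).1]

end Parametrization

theorem hasSum_sum_divisorsAntidiagonal_mul_sum {R : Type*} [NormedRing R] [CompleteSpace R]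
    {F G : ℕ × ℕ → R} (hF : ∀ p : ℕ × ℕ, p.1 * p.2 = 0 → F p = 0) {v : R}
    (h : HasSum (fun z : (ℕ × ℕ) × ℕ × ℕ =>
      if z.1.1 * z.1.2 = z.2.1 * z.2.2 then F z.1 * G z.2 else 0) v) :
    HasSum (fun n : ℕ =>
      (∑ p ∈ n.divisorsAntidiagonal, F p) * ∑ q ∈ n.divisorsAntidiagonal, G q) v := by
  refine (h.tsum_fiberwise fun z => z.1.1 * z.1.2).congr_fun fun n => ?_
  rw [tsum_subtype _ fun z : (ℕ × ℕ) × ℕ × ℕ =>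
    if z.1.1 * z.1.2 = z.2.1 * z.2.2 then F z.1 * G z.2 else 0]
  rw [tsum_eq_sum (s := n.divisorsAntidiagonal ×ˢ n.divisorsAntidiagonal),
    Finset.sum_mul_sum, Finset.sum_product]
  · refine Finset.sum_congr rfl fun p hp => Finset.sum_congr rfl fun q hq => ?_
    have hp' : (p, q) ∈ (fun z => z.1.1 * z.1.2) ⁻¹' {n} := (Nat.mem_divisorsAntidiagonal.mp hp).1
    rw [Set.indicator_of_mem hp', if_pos (hp'.trans (Nat.mem_divisorsAntidiagonal.mp hq).1.symm)]
  · intro z hz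
    by_contra hne
    obtain ⟨hzn, hne⟩ := Set.indicator_apply_ne_zero.mp hne
    obtain ⟨hzz, hne⟩ := ite_ne_right_iff.mp hne
    have hn : n ≠ 0 := by
      rw [← hzn]; exact fun h0 => left_ne_zero_of_mul hne (hF _ h0)
    exact hz (Finset.mem_product.mpr ⟨Nat.mem_divisorsAntidiagonal.mpr ⟨hzn, hn⟩,
      Nat.mem_divisorsAntidiagonal.mpr ⟨hzz ▸ hzn, hn⟩⟩)

noncomputable def coprimePairTerm (φ : ℕ → ℂ) (q : ℕ × ℕ) : ℂ :=
  if q.1.Coprime q.2 then φ q.1 * conj (φ q.2) else 0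

lemma summable_norm_coprimePairTerm {φ : ℕ → ℂ} (hφ : Summable (‖φ ·‖)) :
    Summable (‖coprimePairTerm φ ·‖) := by
  have hconj : Summable fun n => ‖conj (φ n)‖ := by simpa using hφ
  refine .of_nonneg_of_le (fun _ => norm_nonneg _) (fun q => ?_) (hφ.mul_norm hconj)
  unfold coprimePairTerm
  split_ifs <;> simp [mul_nonneg]

theorem tsum_mul_conj_tsum_eq {φ : ℕ → ℂ} (h0 : φ 0 = 0) (hmul : ∀ m n, φ (m * n) = φ m * φ n)
    (hφ : Summable (‖φ ·‖)) :
    (∑' n, φ n) * conj (∑' n, φ n) =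
      ((∑' n, ‖φ n‖ ^ 2 : ℝ) : ℂ) * ∑' q, coprimePairTerm φ q := by
  have hconj : Summable fun n => ‖conj (φ n)‖ := by simpa using hφ
  have hφ2 := summable_sq_of_nonneg (fun n => norm_nonneg (φ n)) hφ
  have hK := summable_norm_coprimePairTerm hφ
  have hsum_pairs := summable_mul_of_summable_norm (R := ℂ) hφ hconj
  have hpairs := hφ.of_norm.hasSum.mul (Complex.hasSum_conj'.mpr hφ.of_norm.hasSum) hsum_pairs
  have hsplit : (fun w : ℕ × ℕ × ℕ => if w.2.1.Coprime w.2.2 then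
      φ (w.1 * w.2.1) * conj (φ (w.1 * w.2.2)) else 0) =
      fun w => ((‖φ w.1‖ ^ 2 : ℝ) : ℂ) * coprimePairTerm φ w.2 := by
    funext w
    unfold coprimePairTerm
    split_ifs
    · rw [hmul, hmul, map_mul, Complex.ofReal_pow, ← Complex.mul_conj']
      ring
    · rw [mul_zero]
  have hφ2' : Summable fun n => ‖((‖φ n‖ ^ 2 : ℝ) : ℂ)‖ := by simpa using hφ2
  have hsum_prod := summable_mul_of_summable_norm (R := ℂ) hφ2' hK
  have hprod := (Complex.hasSum_ofReal.mpr hφ2.hasSum).mul hK.of_norm.hasSum hsum_prod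
  have hparam := (hasSum_iff_hasSum_gcd_param (by simp [h0])).mp hpairs
  rw [hsplit] at hparam
  exact hparam.unique hprod

theorem hasSum_norm_sq_sum_divisorsAntidiagonal {f x : ℕ → ℂ} (hf0 : f 0 = 0) (hx0 : x 0 = 0)
    (hfm : ∀ m n, f (m * n) = f m * f n) (hxm : ∀ m n, x (m * n) = x m * x n)
    (hf2 : Summable (‖f ·‖ ^ 2)) (hx2 : Summable (‖x ·‖ ^ 2)) :
    HasSum (fun n : ℕ => ((‖∑ p ∈ n.divisorsAntidiagonal, f p.1 * x p.2‖ ^ 2 : ℝ) : ℂ))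
      (((∑' n, ‖f n‖ ^ 2) * (∑' n, ‖x n‖ ^ 2) : ℝ) *
        ∑' q, coprimePairTerm (fun n => f n * conj (x n)) q) := by
  have hK := summable_norm_coprimePairTerm
    (summable_norm_mul_of_summable_sq hf2 (g := fun n => conj (x n)) (by simpa using hx2))
  have hFX : Summable fun w : ℕ × ℕ => ‖f w.1‖ ^ 2 * ‖x w.2‖ ^ 2 :=
    hf2.mul_of_nonneg hx2 (fun _ => by positivity) (fun _ => by positivity)
  have hFX' : Summable fun w : ℕ × ℕ => ‖((‖f w.1‖ ^ 2 * ‖x w.2‖ ^ 2 : ℝ) : ℂ)‖ := by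
    simpa using hFX
  have hsum_prod := summable_mul_of_summable_norm (R := ℂ) hFX' hK
  have hprod := (Complex.hasSum_ofReal.mpr (hf2.hasSum.mul hx2.hasSum hFX)).mul hK.of_norm.hasSum
    hsum_prod
  have hsplit : (fun w : (ℕ × ℕ) × ℕ × ℕ => if w.2.1.Coprime w.2.2 then
      f (w.1.1 * w.2.1) * x (w.2.2 * w.1.2) * conj (f (w.1.1 * w.2.2) * x (w.2.1 * w.1.2))
      else 0) =
      fun w => ((‖f w.1.1‖ ^ 2 * ‖x w.1.2‖ ^ 2 : ℝ) : ℂ) *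
        coprimePairTerm (fun n => f n * conj (x n)) w.2 := by
    funext w
    unfold coprimePairTerm
    split_ifs
    · simp only [hfm, hxm, map_mul, Complex.conj_conj, Complex.ofReal_mul, Complex.ofReal_pow,
        ← Complex.mul_conj']
      ring
    · rw [mul_zero]
  have hquad := (hasSum_iff_hasSum_mul_eq_mul_param
    (h := fun z => f z.1.1 * x z.1.2 * conj (f z.2.1 * x z.2.2))
    (fun z hz => by rcases Nat.mul_eq_zero.mp hz with h | h <;> simp [h, hf0, hx0])).mpr
    (hsplit ▸ hprod)
  have hfibers := hasSum_sum_divisorsAntidiagonal_mul_sum (F := fun p => f p.1 * x p.2)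
    (G := fun p => conj (f p.1 * x p.2))
    (fun p hp => by rcases Nat.mul_eq_zero.mp hp with h | h <;> simp [h, hf0, hx0]) hquad
  refine hfibers.congr_fun fun n => ?_
  rw [← map_sum, Complex.mul_conj', Complex.ofReal_pow]

theorem tsum_norm_sq_dirichletConv_mul_eq {f x : ℕ → ℂ} (hf0 : f 0 = 0) (hx0 : x 0 = 0)
    (hfm : ∀ m n, f (m * n) = f m * f n) (hxm : ∀ m n, x (m * n) = x m * x n)
    (hf2 : Summable (‖f ·‖ ^ 2)) (hx2 : Summable (‖x ·‖ ^ 2)) :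
    (∑' n : ℕ, ‖∑ d ∈ n.divisors, f d * x (n / d)‖ ^ 2) * ∑' n, ‖f n * conj (x n)‖ ^ 2 =
      (∑' n, ‖f n‖ ^ 2) * (∑' n, ‖x n‖ ^ 2) * ‖∑' n, f n * conj (x n)‖ ^ 2 := by
  have hφ := summable_norm_mul_of_summable_sq hf2 (g := fun n => conj (x n)) (by simpa using hx2)
  have hI := tsum_mul_conj_tsum_eq (by simp [hf0])
    (fun m n => by simp only [hfm, hxm, map_mul]; ring) hφ
  have hA := (hasSum_norm_sq_sum_divisorsAntidiagonal hf0 hx0 hfm hxm hf2 hx2).tsum_eq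
  simp only [Nat.sum_divisorsAntidiagonal fun d e => f d * x e] at hA
  rw [Complex.mul_conj'] at hI
  apply Complex.ofReal_injective
  rw [← Complex.ofReal_tsum] at hA
  simp only [Complex.ofReal_mul, Complex.ofReal_pow] at hA hI ⊢
  rw [hA, hI]
  ring

lemma rpow_half_le_of_le_mul_sq {a b c r : ℝ} (hb : 0 ≤ b) (hc : 0 ≤ c) (hr : 0 ≤ r)
    (h : a ≤ b * c * r ^ 2) : a ^ (1 / 2 : ℝ) ≤ b ^ (1 / 2 : ℝ) * c ^ (1 / 2 : ℝ) * r := by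
  simp only [← Real.sqrt_eq_rpow]
  rw [← Real.sqrt_mul hb, ← Real.sqrt_sq hr, ← Real.sqrt_mul (mul_nonneg hb hc)]
  exact Real.sqrt_le_sqrt h

theorem norm_conv_le_of_completelyMultiplicative_general
    (f x : ℕ → ℂ)
    (hf0 : f 0 = 0) (hx0 : x 0 = 0)
    (hf1 : f 1 = 1) (hx1 : x 1 = 1)
    (hfm : ∀ m n : ℕ, 0 < m → 0 < n → f (m * n) = f m * f n)
    (hxm : ∀ m n : ℕ, 0 < m → 0 < n → x (m * n) = x m * x n)
    (hf2 : Summable fun n => ‖f n‖ ^ 2) (hx2 : Summable fun n => ‖x n‖ ^ 2) :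
    (∑' n : ℕ, ‖∑ d ∈ n.divisors, f d * x (n / d)‖ ^ 2) ^ ((1 : ℝ) / 2) ≤
      (∑' n : ℕ, ‖f n‖ ^ 2) ^ ((1 : ℝ) / 2) *
        (∑' n : ℕ, ‖x n‖ ^ 2) ^ ((1 : ℝ) / 2) *
        ‖∑' n : ℕ, f n * conj (x n)‖ := by
  have hφ2 : Summable fun n => ‖f n * conj (x n)‖ ^ 2 :=
    summable_sq_of_nonneg (fun _ => norm_nonneg _)
      (summable_norm_mul_of_summable_sq hf2 (g := fun n => conj (x n)) (by simpa using hx2))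
  have hφ2_ge : 1 ≤ ∑' n, ‖f n * conj (x n)‖ ^ 2 := by
    simpa [hf1, hx1] using hφ2.le_tsum 1 fun _ _ => sq_nonneg _
  have hid := tsum_norm_sq_dirichletConv_mul_eq hf0 hx0 (map_mul_of_map_zero hf0 hfm)
    (map_mul_of_map_zero hx0 hxm) hf2 hx2
  exact rpow_half_le_of_le_mul_sq (tsum_nonneg fun _ => sq_nonneg _)
    (tsum_nonneg fun _ => sq_nonneg _) (norm_nonneg _)
    (le_of_mul_le_of_one_le hid.le (by positivity) hφ2_ge)

/-- For completely multiplicative f, x ∈ ℓ² with f∗x ∈ ℓ²: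
‖f ∗ x‖₂ ≤ ‖f‖₂ · ‖x‖₂ · |⟨f, x⟩|. -/
theorem norm_conv_le_of_completelyMultiplicative
    (f x : ℕ → ℂ)
    (hf0 : f 0 = 0) (hx0 : x 0 = 0)
    (hf1 : f 1 = 1) (hx1 : x 1 = 1)
    (hfm : ∀ m n : ℕ, 0 < m → 0 < n → f (m * n) = f m * f n)
    (hxm : ∀ m n : ℕ, 0 < m → 0 < n → x (m * n) = x m * x n)
    (hf2 : Summable fun n => ‖f n‖ ^ 2) (hx2 : Summable fun n => ‖x n‖ ^ 2)
    (hfx2 : Summable fun n => ‖∑ d ∈ n.divisors, f d * x (n / d)‖ ^ 2) :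
    (∑' n : ℕ, ‖∑ d ∈ n.divisors, f d * x (n / d)‖ ^ 2) ^ ((1 : ℝ) / 2) ≤
      (∑' n : ℕ, ‖f n‖ ^ 2) ^ ((1 : ℝ) / 2) *
        (∑' n : ℕ, ‖x n‖ ^ 2) ^ ((1 : ℝ) / 2) *
        ‖∑' n : ℕ, f n * conj (x n)‖ :=
  norm_conv_le_of_completelyMultiplicative_general f x hf0 hx0 hf1 hx1 hfm hxm hf2 hx2
end

section
/- Let 1 < p < 2. There exists a constant C (depending only on p and f) such that for every completely multiplicative x ∈ ℓ^p with values |x(t)| < 1 at all primes t, and every completely multiplicative f ∈ ℓ^2, one has ‖f ∗ x‖_2 ≤ C · ‖x‖_p. In particular, the Dirichlet convolution operator x ↦ f ∗ x is bounded from the set of completely multiplicative sequences in ℓ^p to ℓ^2 whenever f is completely multiplicative and f ∈ ℓ^2. -/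
set_option maxHeartbeats 1600000

open Finset Real

/-! ### Auxiliary lemmas -/

private lemma cmul_pow {g : ℕ → ℂ} (hg1 : g 1 = 1)
    (hgm : ∀ m n : ℕ, 0 < m → 0 < n → g (m * n) = g m * g n)
    {t : ℕ} (ht : 0 < t) : ∀ k : ℕ, g (t ^ k) = g t ^ k := by
  intro k
  induction k with
  | zero => simpa using hg1
  | succ k ih => rw [pow_succ, hgm _ _ (pow_pos ht k) ht, ih, pow_succ]

private lemma norm_lt_one_of_summable_sq {g : ℕ → ℂ} (hg1 : g 1 = 1)
    (hgm : ∀ m n : ℕ, 0 < m → 0 < n → g (m * n) = g m * g n)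
    (hg : Summable fun n => ‖g n‖ ^ 2) {t : ℕ} (ht : t.Prime) : ‖g t‖ < 1 := by
  have h1 : Summable fun k : ℕ => ‖g (t ^ k)‖ ^ 2 :=
    hg.comp_injective (Nat.pow_right_injective ht.two_le)
  have h2 : Summable fun k : ℕ => (‖g t‖ ^ 2) ^ k := by
    refine h1.congr fun k => ?_
    rw [cmul_pow hg1 hgm ht.pos, norm_pow]
    ring
  have h3 := summable_geometric_iff_norm_lt_one.mp h2
  rw [Real.norm_eq_abs, abs_of_nonneg (by positivity)] at h3
  nlinarith [norm_nonneg (g t)]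

private def cseq (a b : ℝ) (k : ℕ) : ℝ := ∑ j ∈ Finset.range (k + 1), a ^ j * b ^ (k - j)

private lemma cseq_nonneg {a b : ℝ} (ha : 0 ≤ a) (hb : 0 ≤ b) (k : ℕ) : 0 ≤ cseq a b k :=
  Finset.sum_nonneg fun j _ => by positivity

private lemma cseq_zero (a b : ℝ) : cseq a b 0 = 1 := by simp [cseq]

private lemma cseq_one (a b : ℝ) : cseq a b 1 = b + a := by
  simp [cseq, Finset.sum_range_succ]

private lemma cseq_rec (a b : ℝ) (k : ℕ) :
    cseq a b (k + 2) = b ^ (k + 2) + a * b ^ (k + 1) + a ^ 2 * cseq a b k := by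
  unfold cseq
  rw [Finset.sum_range_succ', Finset.sum_range_succ']
  have h1 : ∀ j ∈ Finset.range (k + 1),
      a ^ (j + 1 + 1) * b ^ (k + 2 - (j + 1 + 1)) = a ^ 2 * (a ^ j * b ^ (k - j)) := by
    intro j hj
    have h2 : k + 2 - (j + 1 + 1) = k - j := by omega
    rw [h2]; ring
  rw [Finset.sum_congr rfl h1, ← Finset.mul_sum]
  norm_num
  ring

private lemma key_sq {a : ℝ} (u w : ℝ) (ha : 0 ≤ a) (ha1 : a < 1) :
    (u + a ^ 2 * w) ^ 2 ≤ u ^ 2 / (1 - a ^ 2) + a ^ 2 * w ^ 2 := by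
  have hA : 0 < 1 - a ^ 2 := by nlinarith
  rw [div_add' _ _ _ (ne_of_gt hA), le_div_iff₀ hA]
  nlinarith [mul_nonneg (mul_nonneg ha ha) (sq_nonneg (u - (1 - a ^ 2) * w))]

private lemma sum_cseq_sq_le {a b : ℝ} (ha : 0 ≤ a) (ha1 : a < 1) (hb : 0 ≤ b) (hb1 : b < 1) :
    ∀ K : ℕ, ∑ k ∈ Finset.range K, cseq a b k ^ 2
      ≤ (1 + (a + b) ^ 2 / (1 - b ^ 2)) / (1 - a ^ 2) ^ 2 := by
  have hA : 0 < 1 - a ^ 2 := by nlinarith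
  have hB : 0 < 1 - b ^ 2 := by nlinarith
  obtain ⟨V, hV⟩ : ∃ V : ℝ, V = 1 + (a + b) ^ 2 / (1 - b ^ 2) := ⟨_, rfl⟩
  rw [← hV]
  have hV1 : 1 + (a + b) ^ 2 ≤ V := by
    rw [hV]
    have h : (a + b) ^ 2 ≤ (a + b) ^ 2 / (1 - b ^ 2) := by
      rw [le_div_iff₀ hB]; nlinarith [sq_nonneg (a + b)]
    linarith
  have hV0 : (0:ℝ) < V := by nlinarith [sq_nonneg (a + b)]
  have hgeo : ∀ K : ℕ, ∑ k ∈ Finset.range K, (b ^ 2) ^ k ≤ (1 - b ^ 2)⁻¹ := by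
    intro K
    have hs : Summable fun k : ℕ => (b ^ 2) ^ k :=
      summable_geometric_of_lt_one (by positivity) (by nlinarith)
    calc ∑ k ∈ Finset.range K, (b ^ 2) ^ k ≤ ∑' k : ℕ, (b ^ 2) ^ k :=
          Summable.sum_le_tsum _ (fun i _ => by positivity) hs
      _ = (1 - b ^ 2)⁻¹ := tsum_geometric_of_lt_one (by positivity) (by nlinarith)
  have main : ∀ K : ℕ, (∑ k ∈ Finset.range K, cseq a b k ^ 2 ≤ V / (1 - a ^ 2) ^ 2) ∧
      (∑ k ∈ Finset.range (K + 1), cseq a b k ^ 2 ≤ V / (1 - a ^ 2) ^ 2) := by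
    intro K
    induction K with
    | zero =>
      constructor
      · simp only [Finset.range_zero, Finset.sum_empty]; positivity
      · rw [zero_add, Finset.sum_range_one, cseq_zero, le_div_iff₀ (by positivity)]
        nlinarith
    | succ K ih =>
      refine ⟨ih.2, ?_⟩
      have hsplit : ∑ k ∈ Finset.range (K + 1 + 1), cseq a b k ^ 2
          = (∑ k ∈ Finset.range K, cseq a b (k + 1 + 1) ^ 2) + cseq a b (0 + 1) ^ 2
            + cseq a b 0 ^ 2 := by
        rw [Finset.sum_range_succ', Finset.sum_range_succ']
      have hterm : ∀ k ∈ Finset.range K, cseq a b (k + 1 + 1) ^ 2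
          ≤ (b ^ 2) ^ k * ((a + b) ^ 2 * b ^ 2) / (1 - a ^ 2) + a ^ 2 * cseq a b k ^ 2 := by
        intro k _
        have hrec := cseq_rec a b k
        have h1 := key_sq (a := a) (b ^ (k + 2) + a * b ^ (k + 1)) (cseq a b k) ha ha1
        have h2 : (b ^ (k + 2) + a * b ^ (k + 1)) ^ 2 = (b ^ 2) ^ k * ((a + b) ^ 2 * b ^ 2) := by
          ring
      -- careful: check exponents
        calc cseq a b (k + 1 + 1) ^ 2
            = (b ^ (k + 2) + a * b ^ (k + 1) + a ^ 2 * cseq a b k) ^ 2 := by rw [hrec]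
          _ ≤ (b ^ (k + 2) + a * b ^ (k + 1)) ^ 2 / (1 - a ^ 2) + a ^ 2 * cseq a b k ^ 2 := h1
          _ = (b ^ 2) ^ k * ((a + b) ^ 2 * b ^ 2) / (1 - a ^ 2) + a ^ 2 * cseq a b k ^ 2 := by
              rw [h2]
      have hsum1 : ∑ k ∈ Finset.range K, cseq a b (k + 1 + 1) ^ 2
          ≤ (1 - b ^ 2)⁻¹ * ((a + b) ^ 2 * b ^ 2) / (1 - a ^ 2)
            + a ^ 2 * (V / (1 - a ^ 2) ^ 2) := by
        calc ∑ k ∈ Finset.range K, cseq a b (k + 1 + 1) ^ 2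
            ≤ ∑ k ∈ Finset.range K,
              ((b ^ 2) ^ k * ((a + b) ^ 2 * b ^ 2) / (1 - a ^ 2) + a ^ 2 * cseq a b k ^ 2) :=
              Finset.sum_le_sum hterm
          _ = (∑ k ∈ Finset.range K, (b ^ 2) ^ k) * ((a + b) ^ 2 * b ^ 2) / (1 - a ^ 2)
              + a ^ 2 * ∑ k ∈ Finset.range K, cseq a b k ^ 2 := by
              rw [Finset.sum_add_distrib, ← Finset.mul_sum, ← Finset.sum_div, ← Finset.sum_mul]
          _ ≤ (1 - b ^ 2)⁻¹ * ((a + b) ^ 2 * b ^ 2) / (1 - a ^ 2)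
              + a ^ 2 * (V / (1 - a ^ 2) ^ 2) := by
              gcongr
              · exact hgeo K
              · exact ih.1
      have hdiff : V / (1 - a ^ 2) - (1 + (b + a) ^ 2
            + (1 - b ^ 2)⁻¹ * ((a + b) ^ 2 * b ^ 2) / (1 - a ^ 2))
          = a ^ 2 * (1 + (a + b) ^ 2) / (1 - a ^ 2) := by
        rw [hV]; field_simp; ring
      have hid : V / (1 - a ^ 2) + a ^ 2 * (V / (1 - a ^ 2) ^ 2) = V / (1 - a ^ 2) ^ 2 := by
        field_simp; ring
      have hpos : 0 ≤ a ^ 2 * (1 + (a + b) ^ 2) / (1 - a ^ 2) := by positivity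
      rw [hsplit, cseq_zero, cseq_one]
      nlinarith [hsum1]
  intro K
  exact (main K).1

/-- Bernoulli-type: `(1-t)^s ≤ 1 - s*t/2` for `0 < s ≤ 1`, `0 ≤ t ≤ 1`. -/
private lemma rpow_one_sub_le {s t : ℝ} (hs0 : 0 < s) (hs1 : s ≤ 1)
    (ht0 : 0 ≤ t) (ht1 : t ≤ 1) : (1 - t) ^ s ≤ 1 - s * t / 2 := by
  have hse : (1:ℝ) ≤ 1 / s := by rw [le_div_iff₀ hs0]; linarith
  have hst : -1 ≤ -(s * t / 2) := by nlinarith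
  have bern := one_add_mul_self_le_rpow_one_add hst hse
  have e1 : 1 + 1 / s * -(s * t / 2) = 1 - t / 2 := by field_simp; ring
  have e2 : 1 + -(s * t / 2) = 1 - s * t / 2 := by ring
  rw [e1, e2] at bern
  have h2 : (1 - t : ℝ) ≤ (1 - s * t / 2) ^ (1 / s) := le_trans (by linarith) bern
  have h3 := Real.rpow_le_rpow (by linarith) h2 hs0.le
  rwa [← Real.rpow_mul (by nlinarith), one_div_mul_cancel (ne_of_gt hs0),
    Real.rpow_one] at h3

/-- Young-type inequality: `2ab ≤ (s/2) b^p + C a²`. -/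
private lemma young_aux {p s a b : ℝ} (hp1 : 1 < p) (hp2 : p < 2) (hs0 : 0 < s)
    (ha : 0 ≤ a) (ha1 : a ≤ 1) (hb : 0 ≤ b) :
    2 * a * b ≤ s / 2 * b ^ p + (2 * (8 / s) ^ (1 / (p - 1))) * a ^ 2 := by
  have hp0 : (0:ℝ) < p := by linarith
  have hK0 : (0:ℝ) ≤ (8 / s) ^ (1 / (p - 1)) := Real.rpow_nonneg (by positivity) _
  have hbp : (0:ℝ) ≤ b ^ p := Real.rpow_nonneg hb _
  have hq0 : (0:ℝ) < p - 1 := by linarith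
  rcases eq_or_lt_of_le ha with ha0 | ha0
  · rw [← ha0]; nlinarith [mul_nonneg hK0 (sq_nonneg a), mul_nonneg hs0.le hbp]
  rcases eq_or_lt_of_le hb with hb0 | hb0
  · rw [← hb0, Real.zero_rpow (ne_of_gt hp0)]
    nlinarith [mul_nonneg hK0 (sq_nonneg a)]
  by_cases hab : b ^ (p - 1) ≤ 8 / s * a
  · -- case 1 : small b
    have hb_eq : (b ^ (p - 1)) ^ (1 / (p - 1)) = b := by
      rw [← Real.rpow_mul hb, mul_one_div, div_self (ne_of_gt hq0), Real.rpow_one]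
    have hb_le : b ≤ (8 / s * a) ^ (1 / (p - 1)) := by
      rw [← hb_eq]
      exact Real.rpow_le_rpow (Real.rpow_nonneg hb _) hab (by positivity)
    have hmul : (8 / s * a) ^ (1 / (p - 1))
        = (8 / s) ^ (1 / (p - 1)) * a ^ (1 / (p - 1)) :=
      Real.mul_rpow (by positivity) ha
    have haa : a ^ (1 / (p - 1)) ≤ a := by
      have h1 : (1:ℝ) ≤ 1 / (p - 1) := by rw [le_div_iff₀ hq0]; linarith
      calc a ^ (1 / (p - 1)) ≤ a ^ (1:ℝ) :=
            Real.rpow_le_rpow_of_exponent_ge ha0 ha1 h1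
        _ = a := Real.rpow_one a
    have hble : b ≤ (8 / s) ^ (1 / (p - 1)) * a := by
      calc b ≤ (8 / s) ^ (1 / (p - 1)) * a ^ (1 / (p - 1)) := by rw [← hmul]; exact hb_le
        _ ≤ (8 / s) ^ (1 / (p - 1)) * a := mul_le_mul_of_nonneg_left haa hK0
    nlinarith
  · -- case 2 : large b
    push_neg at hab
    have hsne : s ≠ 0 := ne_of_gt hs0
    have ha_lt : a ≤ s / 8 * b ^ (p - 1) := by
      have h := mul_le_mul_of_nonneg_right hab.le (show (0:ℝ) ≤ s / 8 by positivity)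
      have e : 8 / s * a * (s / 8) = a := by field_simp
      rw [e] at h
      linarith [h]
    have hbp_eq : b ^ (p - 1) * b = b ^ p := by
      nth_rewrite 2 [← Real.rpow_one b]
      rw [← Real.rpow_add hb0]
      ring_nf
    have hbq : (0:ℝ) ≤ b ^ (p - 1) := Real.rpow_nonneg hb _
    have h2 : 2 * a * b ≤ 2 * (s / 8 * b ^ (p - 1)) * b :=
      mul_le_mul_of_nonneg_right (by nlinarith) hb
    have h3 : 2 * (s / 8 * b ^ (p - 1)) * b = s / 4 * b ^ p := by
      rw [← hbp_eq]; ring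
    nlinarith

private noncomputable def Cp (p : ℝ) : ℝ := 2 * (8 / ((2 - p) / p)) ^ (1 / (p - 1)) + 1

private lemma one_le_Cp {p : ℝ} (hp1 : 1 < p) (hp2 : p < 2) : 1 ≤ Cp p := by
  unfold Cp
  have hs0 : (0:ℝ) < (2 - p) / p := div_pos (by linarith) (by linarith)
  have := Real.rpow_nonneg (le_of_lt (div_pos (show (0:ℝ) < 8 by norm_num) hs0)) (1 / (p - 1))
  linarith

private lemma Cp_nonneg {p : ℝ} (hp1 : 1 < p) (hp2 : p < 2) : 0 ≤ Cp p :=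
  le_trans zero_le_one (one_le_Cp hp1 hp2)

private lemma V_mul_rpow_le {p a b : ℝ} (hp1 : 1 < p) (hp2 : p < 2)
    (ha : 0 ≤ a) (ha1 : a ≤ 1) (hb : 0 ≤ b) (hb1 : b < 1) :
    (1 + (a + b) ^ 2 / (1 - b ^ 2)) * (1 - b ^ p) ^ (2 / p) ≤ 1 + Cp p * a ^ 2 := by
  have hp0 : (0:ℝ) < p := by linarith
  have hs0 : (0:ℝ) < (2 - p) / p := div_pos (by linarith) (by linarith)
  have hs1 : (2 - p) / p ≤ 1 := by rw [div_le_one hp0]; linarith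
  have hB : (0:ℝ) < 1 - b ^ 2 := by nlinarith
  have ht0 : (0:ℝ) ≤ b ^ p := Real.rpow_nonneg hb _
  have ht1 : b ^ p < 1 := Real.rpow_lt_one hb hb1 hp0
  have hv0 : (0:ℝ) < 1 - b ^ p := by linarith
  -- b^2 ≤ b^p
  have hbt : b ^ 2 ≤ b ^ p := by
    rcases eq_or_lt_of_le hb with hb0 | hb0
    · rw [← hb0, Real.zero_rpow (ne_of_gt hp0)]
      norm_num
    · have h := Real.rpow_le_rpow_of_exponent_ge hb0 hb1.le hp2.le
      rwa [show ((2:ℝ) = ((2:ℕ):ℝ)) by norm_num, Real.rpow_natCast] at h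
  have hvB : 1 - b ^ p ≤ 1 - b ^ 2 := by linarith
  -- the exponent split  2/p = 1 + (2-p)/p
  have hexp : (2:ℝ) / p = 1 + (2 - p) / p := by field_simp; ring
  have hw0 : (0:ℝ) ≤ (1 - b ^ p) ^ ((2 - p) / p) := Real.rpow_nonneg hv0.le _
  have hw1 : (1 - b ^ p) ^ ((2 - p) / p) ≤ 1 :=
    Real.rpow_le_one hv0.le (by linarith) hs0.le
  have hsplit : (1 - b ^ p) ^ (2 / p)
      = (1 - b ^ p) * (1 - b ^ p) ^ ((2 - p) / p) := by
    rw [hexp, Real.rpow_add hv0, Real.rpow_one]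
  -- bernoulli bound
  have hbern : (1 - b ^ p) ^ ((2 - p) / p) ≤ 1 - (2 - p) / p * b ^ p / 2 :=
    rpow_one_sub_le hs0 hs1 ht0 ht1.le
  -- young bound
  have hyoung : 2 * a * b ≤ (2 - p) / p / 2 * b ^ p + (Cp p - 1) * a ^ 2 := by
    have := young_aux (s := (2 - p) / p) hp1 hp2 hs0 ha ha1 hb
    unfold Cp
    linarith
  -- main chain
  obtain ⟨w, hw⟩ : ∃ w : ℝ, w = (1 - b ^ p) ^ ((2 - p) / p) := ⟨_, rfl⟩
  rw [hsplit, ← hw]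
  rw [← hw] at hw0 hw1 hbern
  have l1 : (1 + (a + b) ^ 2 / (1 - b ^ 2)) * ((1 - b ^ p) * w)
      = (1 - b ^ 2 + (a + b) ^ 2) * w * ((1 - b ^ p) / (1 - b ^ 2)) := by
    field_simp
  have hq1 : (1 - b ^ p) / (1 - b ^ 2) ≤ 1 := by
    rw [div_le_one hB]; linarith
  have hq0 : (0:ℝ) ≤ (1 - b ^ p) / (1 - b ^ 2) := by positivity
  have hXw : (0:ℝ) ≤ (1 - b ^ 2 + (a + b) ^ 2) * w :=
    mul_nonneg (by nlinarith [sq_nonneg (a + b)]) hw0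
  have l2 : (1 - b ^ 2 + (a + b) ^ 2) * w * ((1 - b ^ p) / (1 - b ^ 2))
      ≤ (1 - b ^ 2 + (a + b) ^ 2) * w := by
    nlinarith [mul_nonneg hXw (sub_nonneg.mpr hq1)]
  have l3 : (1 - b ^ 2 + (a + b) ^ 2) * w = w + a ^ 2 * w + 2 * a * b * w := by ring
  have l4 : a ^ 2 * w ≤ a ^ 2 := by nlinarith [mul_nonneg (sq_nonneg a) (sub_nonneg.mpr hw1)]
  have l5 : 2 * a * b * w ≤ 2 * a * b := by nlinarith [mul_nonneg (mul_nonneg ha hb) (sub_nonneg.mpr hw1)]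
  have hCp1 : 0 ≤ Cp p - 1 := by
    have := one_le_Cp hp1 hp2
    linarith
  rw [l1]
  calc (1 - b ^ 2 + (a + b) ^ 2) * w * ((1 - b ^ p) / (1 - b ^ 2))
      ≤ (1 - b ^ 2 + (a + b) ^ 2) * w := l2
    _ = w + a ^ 2 * w + 2 * a * b * w := l3
    _ ≤ w + a ^ 2 + 2 * a * b := by linarith
    _ ≤ (1 - (2 - p) / p * b ^ p / 2) + a ^ 2
        + ((2 - p) / p / 2 * b ^ p + (Cp p - 1) * a ^ 2) := by linarith
    _ = 1 + Cp p * a ^ 2 := by ring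

private lemma cm_coprime {f : ℕ → ℂ} (hf0 : f 0 = 0) (hf1 : f 1 = 1)
    (hfm : ∀ m n : ℕ, 0 < m → 0 < n → f (m * n) = f m * f n) :
    ∀ {m n : ℕ}, Nat.Coprime m n → f (m * n) = f m * f n := by
  intro m n hmn
  rcases Nat.eq_zero_or_pos m with hm | hm
  · subst hm
    have hn1 : n = 1 := Nat.coprime_zero_left n |>.mp hmn
    subst hn1
    simp [hf0, hf1]
  rcases Nat.eq_zero_or_pos n with hn | hn
  · subst hn
    have hm1 : m = 1 := Nat.coprime_zero_right m |>.mp hmn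
    subst hm1
    simp [hf0, hf1]
  exact hfm m n hm hn

private def mkAF (f : ℕ → ℂ) (h : f 0 = 0) : ArithmeticFunction ℂ := ZeroHom.mk f h

@[simp] private lemma mkAF_apply (f : ℕ → ℂ) (h : f 0 = 0) (n : ℕ) : mkAF f h n = f n := rfl

private lemma conv_eq_mul {f x : ℕ → ℂ} (hf0 : f 0 = 0) (hx0 : x 0 = 0) (n : ℕ) :
    (mkAF f hf0 * mkAF x hx0) n
      = ∑ d ∈ n.divisors, f d * x (n / d) := by
  rw [ArithmeticFunction.mul_apply]
  simp only [mkAF_apply]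
  exact Nat.sum_divisorsAntidiagonal (fun i j => f i * x j)

private lemma conv_one {f x : ℕ → ℂ} (hf1 : f 1 = 1) (hx1 : x 1 = 1) :
    ∑ d ∈ Nat.divisors 1, f d * x (1 / d) = 1 := by
  simp [hf1, hx1]

private lemma conv_coprime_mul {f x : ℕ → ℂ} (hf0 : f 0 = 0) (hf1 : f 1 = 1)
    (hfm : ∀ m n : ℕ, 0 < m → 0 < n → f (m * n) = f m * f n)
    (hx0 : x 0 = 0) (hx1 : x 1 = 1)
    (hxm : ∀ m n : ℕ, 0 < m → 0 < n → x (m * n) = x m * x n) :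
    ∀ {m n : ℕ}, Nat.Coprime m n →
      (∑ d ∈ Nat.divisors (m * n), f d * x (m * n / d))
        = (∑ d ∈ Nat.divisors m, f d * x (m / d))
          * ∑ d ∈ Nat.divisors n, f d * x (n / d) := by
  intro m n hmn
  have hF : (mkAF f hf0).IsMultiplicative :=
    ⟨hf1, fun {a b} hab => cm_coprime hf0 hf1 hfm hab⟩
  have hX : (mkAF x hx0).IsMultiplicative :=
    ⟨hx1, fun {a b} hab => cm_coprime hx0 hx1 hxm hab⟩
  have hmul := (hF.mul hX).2 hmn
  rw [conv_eq_mul hf0 hx0, conv_eq_mul hf0 hx0, conv_eq_mul hf0 hx0] at hmul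
  exact hmul

private lemma conv_prime_pow_le {f x : ℕ → ℂ} (hf1 : f 1 = 1)
    (hfm : ∀ m n : ℕ, 0 < m → 0 < n → f (m * n) = f m * f n)
    (hx1 : x 1 = 1)
    (hxm : ∀ m n : ℕ, 0 < m → 0 < n → x (m * n) = x m * x n)
    {t : ℕ} (ht : t.Prime) (k : ℕ) :
    ‖∑ d ∈ Nat.divisors (t ^ k), f d * x (t ^ k / d)‖ ≤ cseq ‖f t‖ ‖x t‖ k := by
  have cmf : ∀ j : ℕ, f (t ^ j) = f t ^ j := by
    intro j
    induction j with
    | zero => simpa using hf1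
    | succ j ih => rw [pow_succ, hfm _ _ (pow_pos ht.pos j) ht.pos, ih, pow_succ]
  have cmx : ∀ j : ℕ, x (t ^ j) = x t ^ j := by
    intro j
    induction j with
    | zero => simpa using hx1
    | succ j ih => rw [pow_succ, hxm _ _ (pow_pos ht.pos j) ht.pos, ih, pow_succ]
  rw [Nat.sum_divisors_prime_pow ht]
  refine le_trans (norm_sum_le _ _) ?_
  unfold cseq
  apply Finset.sum_le_sum
  intro j hj
  have hjk : j ≤ k := by
    have := Finset.mem_range.mp hj; omega
  rw [Nat.pow_div hjk ht.pos, cmf, cmx, norm_mul, norm_pow, norm_pow]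
private lemma sum_d_le {f : ℕ → ℂ} (hf1 : f 1 = 1)
    (hfm : ∀ m n : ℕ, 0 < m → 0 < n → f (m * n) = f m * f n)
    (hf2 : Summable fun n => ‖f n‖ ^ 2) (P : Finset ℕ) (hP : ∀ t ∈ P, t.Prime) :
    ∑ t ∈ P, ‖f t‖ ^ 2 / (1 - ‖f t‖ ^ 2) ≤ ∑' n : ℕ, ‖f n‖ ^ 2 := by
  classical
  set ι : ↑P × ℕ → ℕ := fun q => (q.1 : ℕ) ^ (q.2 + 1) with hι_def
  have hι : Function.Injective ι := by
    rintro ⟨⟨t, htP⟩, k⟩ ⟨⟨u, huP⟩, j⟩ heq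
    simp only [hι_def] at heq
    have htp := hP t htP
    have hup := hP u huP
    have htu : t = u := by
      have hdvd : t ∣ u ^ (j + 1) := heq ▸ dvd_pow_self t (Nat.succ_ne_zero k)
      have h2 := htp.prime.dvd_of_dvd_pow hdvd
      exact (Nat.prime_dvd_prime_iff_eq htp hup).mp h2
    subst htu
    have hkj : k + 1 = j + 1 := Nat.pow_right_injective htp.two_le heq
    have hk : k = j := by omega
    subst hk
    rfl
  have hcomp : Summable fun q : ↑P × ℕ => ‖f (ι q)‖ ^ 2 := hf2.comp_injective hι
  have hle : ∑' q : ↑P × ℕ, ‖f (ι q)‖ ^ 2 ≤ ∑' n : ℕ, ‖f n‖ ^ 2 :=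
    Summable.tsum_le_tsum_of_inj ι hι (fun c _ => by positivity) (fun q => le_rfl) hcomp hf2
  have hpr : ∑' q : ↑P × ℕ, ‖f (ι q)‖ ^ 2
      = ∑' t : ↑P, ∑' k : ℕ, ‖f ((t : ℕ) ^ (k + 1))‖ ^ 2 :=
    Summable.tsum_prod' hcomp fun b => hcomp.prod_factor b
  have hinner : ∀ t : ↑P, ∑' k : ℕ, ‖f ((t : ℕ) ^ (k + 1))‖ ^ 2
      = ‖f (t : ℕ)‖ ^ 2 / (1 - ‖f (t : ℕ)‖ ^ 2) := by
    rintro ⟨t, htP⟩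
    have htp := hP t htP
    have ha1 : ‖f t‖ < 1 := norm_lt_one_of_summable_sq hf1 hfm hf2 htp
    have ha0 : (0:ℝ) ≤ ‖f t‖ := norm_nonneg _
    have hterm : ∀ k : ℕ, ‖f (t ^ (k + 1))‖ ^ 2 = ‖f t‖ ^ 2 * (‖f t‖ ^ 2) ^ k := by
      intro k
      rw [cmul_pow hf1 hfm htp.pos, norm_pow]
      ring
    simp only [hterm]
    rw [tsum_mul_left, tsum_geometric_of_lt_one (by positivity) (by nlinarith)]
    rw [div_eq_mul_inv]
  calc ∑ t ∈ P, ‖f t‖ ^ 2 / (1 - ‖f t‖ ^ 2)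
      = ∑' t : ↑P, ‖f (t:ℕ)‖ ^ 2 / (1 - ‖f (t:ℕ)‖ ^ 2) :=
        (Finset.tsum_subtype P fun u => ‖f u‖ ^ 2 / (1 - ‖f u‖ ^ 2)).symm
    _ = ∑' q : ↑P × ℕ, ‖f (ι q)‖ ^ 2 := by
        rw [hpr]
        exact tsum_congr fun t => (hinner t).symm
    _ ≤ ∑' n : ℕ, ‖f n‖ ^ 2 := hle

private lemma A_le_exp {a C2 : ℝ} (ha : 0 ≤ a) (ha1 : a < 1) (hC : 0 ≤ C2) :
    (1 + C2 * a ^ 2) / (1 - a ^ 2) ^ 2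
      ≤ Real.exp ((C2 + 2) * (a ^ 2 / (1 - a ^ 2))) := by
  have hA : (0:ℝ) < 1 - a ^ 2 := by nlinarith
  have hd0 : (0:ℝ) ≤ a ^ 2 / (1 - a ^ 2) := by positivity
  have hd2 : a ^ 2 ≤ a ^ 2 / (1 - a ^ 2) := by
    rw [le_div_iff₀ hA]; nlinarith [sq_nonneg a]
  have h1 : 1 + C2 * a ^ 2 ≤ Real.exp (C2 * (a ^ 2 / (1 - a ^ 2))) := by
    have := Real.add_one_le_exp (C2 * (a ^ 2 / (1 - a ^ 2)))
    nlinarith [mul_le_mul_of_nonneg_left hd2 hC]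
  have h2 : (1 - a ^ 2)⁻¹ ≤ Real.exp (a ^ 2 / (1 - a ^ 2)) := by
    have he : (1 - a ^ 2)⁻¹ = 1 + a ^ 2 / (1 - a ^ 2) := by
      field_simp
      ring
    rw [he]
    linarith [Real.add_one_le_exp (a ^ 2 / (1 - a ^ 2))]
  have hinv : (0:ℝ) ≤ (1 - a ^ 2)⁻¹ := by positivity
  have h3 : (1 + C2 * a ^ 2) / (1 - a ^ 2) ^ 2
      = (1 + C2 * a ^ 2) * (1 - a ^ 2)⁻¹ * (1 - a ^ 2)⁻¹ := by
    rw [div_eq_mul_inv,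
      show ((1 - a ^ 2) ^ 2)⁻¹ = (1 - a ^ 2)⁻¹ * (1 - a ^ 2)⁻¹ by rw [sq, mul_inv],
      ← mul_assoc]
  rw [h3]
  have e1 : Real.exp ((C2 + 2) * (a ^ 2 / (1 - a ^ 2)))
      = Real.exp (C2 * (a ^ 2 / (1 - a ^ 2))) * Real.exp (a ^ 2 / (1 - a ^ 2))
        * Real.exp (a ^ 2 / (1 - a ^ 2)) := by
    rw [← Real.exp_add, ← Real.exp_add]
    ring_nf
  rw [e1]
  have hx0 : (0:ℝ) ≤ 1 + C2 * a ^ 2 := by positivity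
  have hex : (0:ℝ) ≤ Real.exp (C2 * (a ^ 2 / (1 - a ^ 2))) := (Real.exp_pos _).le
  have step1 : (1 + C2 * a ^ 2) * (1 - a ^ 2)⁻¹
      ≤ Real.exp (C2 * (a ^ 2 / (1 - a ^ 2))) * Real.exp (a ^ 2 / (1 - a ^ 2)) :=
    mul_le_mul h1 h2 hinv hex
  have step2 := mul_le_mul step1 h2 hinv
    (mul_nonneg hex (Real.exp_pos _).le)
  exact step2

/-- finite Euler factor product is at most the full sum, for nonneg multiplicative g. -/
private lemma euler_prod_le_tsum {g : ℕ → ℝ} (hg1 : g 1 = 1)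
    (hmul : ∀ {m n : ℕ}, Nat.Coprime m n → g (m * n) = g m * g n)
    (hnn : ∀ n, 0 ≤ g n) (hsum : Summable g) (s : Finset ℕ) :
    ∏ t ∈ s.filter Nat.Prime, ∑' k : ℕ, g (t ^ k) ≤ ∑' n : ℕ, g n := by
  have hloc : ∀ {t : ℕ}, t.Prime → Summable fun k : ℕ => ‖g (t ^ k)‖ := by
    intro t ht
    have := hsum.comp_injective (Nat.pow_right_injective ht.one_lt)
    exact this.abs.congr fun k => (Real.norm_eq_abs _).symm
  have EP := EulerProduct.summable_and_hasSum_factoredNumbers_prod_filter_prime_tsum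
    hg1 hmul hloc s
  have h1 : ∏ t ∈ s.filter Nat.Prime, ∑' k : ℕ, g (t ^ k)
      = ∑' m : Nat.factoredNumbers s, g ↑m := EP.2.tsum_eq.symm
  rw [h1, _root_.tsum_subtype]
  refine Summable.tsum_le_tsum (fun n => Set.indicator_le_self' (fun n _ => hnn n) n) ?_ hsum
  exact (summable_subtype_iff_indicator (s := Nat.factoredNumbers s)).mp EP.2.summable
  -- maybe set indicator summable from EP.2.summable

/-- partial sums of nonneg multiplicative g are bounded by a finite Euler product. -/
private lemma sum_le_euler_prod {g : ℕ → ℝ} (hg0 : g 0 = 0) (hg1 : g 1 = 1)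
    (hmul : ∀ {m n : ℕ}, Nat.Coprime m n → g (m * n) = g m * g n)
    (hnn : ∀ n, 0 ≤ g n)
    (hloc : ∀ {t : ℕ}, t.Prime → Summable fun k : ℕ => g (t ^ k))
    (F : Finset ℕ) :
    ∑ n ∈ F, g n
      ≤ ∏ t ∈ (Finset.range (F.sup id + 1)).filter Nat.Prime, ∑' k : ℕ, g (t ^ k) := by
  have hloc' : ∀ {t : ℕ}, t.Prime → Summable fun k : ℕ => ‖g (t ^ k)‖ := by
    intro t ht
    exact (hloc ht).abs.congr fun k => (Real.norm_eq_abs _).symm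
  set N := F.sup id + 1 with hN
  have EP := EulerProduct.summable_and_hasSum_factoredNumbers_prod_filter_prime_tsum
    hg1 hmul hloc' (Finset.range N)
  have hind : Summable (Set.indicator (Nat.factoredNumbers (Finset.range N)) g) :=
    (summable_subtype_iff_indicator (s := Nat.factoredNumbers (Finset.range N))).mp
      EP.2.summable
  have hmem : ∀ n ∈ F, g n ≤ Set.indicator (Nat.factoredNumbers (Finset.range N)) g n := by
    intro n hnF
    rcases Nat.eq_zero_or_pos n with h0 | h0
    · subst h0
      rw [hg0]
      exact Set.indicator_nonneg (fun m _ => hnn m) 0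
    · have hnmem : n ∈ Nat.factoredNumbers (Finset.range N) := by
        refine Nat.mem_factoredNumbers.mpr ⟨Nat.pos_iff_ne_zero.mp h0, fun q hq => ?_⟩
        refine Finset.mem_range.mpr ?_
        have h1 : q ≤ n := Nat.le_of_mem_primeFactorsList hq
        have h2 : n ≤ F.sup id := Finset.le_sup (f := id) hnF
        omega
      rw [Set.indicator_of_mem hnmem]
  calc ∑ n ∈ F, g n ≤ ∑ n ∈ F, Set.indicator (Nat.factoredNumbers (Finset.range N)) g n :=
        Finset.sum_le_sum hmem
    _ ≤ ∑' n : ℕ, Set.indicator (Nat.factoredNumbers (Finset.range N)) g n :=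
        Summable.sum_le_tsum F (fun n _ => Set.indicator_nonneg (fun m _ => hnn m) n) hind
    _ = ∑' m : Nat.factoredNumbers (Finset.range N), g ↑m := (_root_.tsum_subtype _ g).symm
    _ = ∏ t ∈ (Finset.range N).filter Nat.Prime, ∑' k : ℕ, g (t ^ k) := EP.2.tsum_eq

/-- For 1 < p < 2 and f completely multiplicative in ℓ², the Dirichlet
convolution operator is bounded from the set of completely multiplicative
sequences in ℓ^p into ℓ²: there is a constant C with ‖f ∗ x‖₂ ≤ C ‖x‖_p. -/
theorem dirichlet_conv_bounded_on_completelyMultiplicative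
    (p : ℝ) (hp1 : 1 < p) (hp2 : p < 2)
    (f : ℕ → ℂ) (hf0 : f 0 = 0) (hf1 : f 1 = 1)
    (hfm : ∀ m n : ℕ, 0 < m → 0 < n → f (m * n) = f m * f n)
    (hf2 : Summable fun n => ‖f n‖ ^ 2) :
    ∃ C : ℝ, ∀ x : ℕ → ℂ, x 0 = 0 → x 1 = 1 →
      (∀ m n : ℕ, 0 < m → 0 < n → x (m * n) = x m * x n) →
      (Summable fun n => ‖x n‖ ^ p) →
      (∀ t : ℕ, t.Prime → ‖x t‖ < 1) →
      (Summable fun n => ‖∑ d ∈ n.divisors, f d * x (n / d)‖ ^ 2) ∧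
        (∑' n : ℕ, ‖∑ d ∈ n.divisors, f d * x (n / d)‖ ^ 2) ^ ((1 : ℝ) / 2) ≤
          C * (∑' n : ℕ, ‖x n‖ ^ p) ^ (1 / p) := by
  have hp0 : (0:ℝ) < p := by linarith
  set M : ℝ := ∑' n : ℕ, ‖f n‖ ^ 2 with hM
  have hM0 : 0 ≤ M := tsum_nonneg fun n => by positivity
  have hCp0 : 0 ≤ Cp p := Cp_nonneg hp1 hp2
  refine ⟨Real.exp ((Cp p + 2) * M * (1 / 2)), ?_⟩
  intro x hx0 hx1 hxm hxsum hxlt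
  set G : ℕ → ℝ := fun n => ‖∑ d ∈ n.divisors, f d * x (n / d)‖ ^ 2 with hG
  set Gx : ℕ → ℝ := fun n => ‖x n‖ ^ p with hGx
  set X : ℝ := ∑' n : ℕ, Gx n with hX
  have hX0 : 0 ≤ X := tsum_nonneg fun n => by positivity
  -- basic properties of G
  have hG0 : G 0 = 0 := by simp [hG]
  have hG1 : G 1 = 1 := by
    rw [hG]
    simp only []
    rw [conv_one hf1 hx1, norm_one, one_pow]
  have hGnn : ∀ n, 0 ≤ G n := fun n => by positivity
  have hGmul : ∀ {m n : ℕ}, Nat.Coprime m n → G (m * n) = G m * G n := by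
    intro m n hmn
    simp only [hG]
    rw [conv_coprime_mul hf0 hf1 hfm hx0 hx1 hxm hmn, norm_mul, mul_pow]
  -- basic properties of Gx
  have hGx1 : Gx 1 = 1 := by simp [hGx, hx1]
  have hGxnn : ∀ n, 0 ≤ Gx n := fun n => by
    simp only [hGx]; exact Real.rpow_nonneg (norm_nonneg _) _
  have hGxmul : ∀ {m n : ℕ}, Nat.Coprime m n → Gx (m * n) = Gx m * Gx n := by
    intro m n hmn
    simp only [hGx]
    rw [cm_coprime hx0 hx1 hxm hmn, norm_mul,
      Real.mul_rpow (norm_nonneg _) (norm_nonneg _)]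
  -- local data at primes
  have hxploc : ∀ {t : ℕ}, t.Prime →
      ∑' k : ℕ, Gx (t ^ k) = (1 - ‖x t‖ ^ p)⁻¹ := by
    intro t ht
    have hb0 : (0:ℝ) ≤ ‖x t‖ := norm_nonneg _
    have hb1 : ‖x t‖ < 1 := hxlt t ht
    have hterm : ∀ k : ℕ, Gx (t ^ k) = (‖x t‖ ^ p) ^ k := by
      intro k
      simp only [hGx]
      rw [cmul_pow hx1 hxm ht.pos, norm_pow, ← Real.rpow_natCast ‖x t‖ k,
        ← Real.rpow_mul hb0, mul_comm, Real.rpow_mul hb0, Real.rpow_natCast]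
    simp only [hterm]
    exact tsum_geometric_of_lt_one (Real.rpow_nonneg hb0 _)
      (Real.rpow_lt_one hb0 hb1 hp0)
  have hxploc_sum : ∀ {t : ℕ}, t.Prime → Summable fun k : ℕ => Gx (t ^ k) := by
    intro t ht
    have hb0 : (0:ℝ) ≤ ‖x t‖ := norm_nonneg _
    have hb1 : ‖x t‖ < 1 := hxlt t ht
    have hterm : ∀ k : ℕ, Gx (t ^ k) = (‖x t‖ ^ p) ^ k := by
      intro k
      simp only [hGx]
      rw [cmul_pow hx1 hxm ht.pos, norm_pow, ← Real.rpow_natCast ‖x t‖ k,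
        ← Real.rpow_mul hb0, mul_comm, Real.rpow_mul hb0, Real.rpow_natCast]
    refine Summable.congr ?_ fun k => (hterm k).symm
    exact summable_geometric_of_lt_one (Real.rpow_nonneg hb0 _)
      (Real.rpow_lt_one hb0 hb1 hp0)
  -- local bound for G at primes
  have hGrange : ∀ {t : ℕ}, t.Prime → ∀ K : ℕ,
      ∑ k ∈ Finset.range K, G (t ^ k)
        ≤ (1 + Cp p * ‖f t‖ ^ 2) / (1 - ‖f t‖ ^ 2) ^ 2
          * ((1 - ‖x t‖ ^ p) ^ (2 / p))⁻¹ := by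
    intro t ht K
    have ha0 : (0:ℝ) ≤ ‖f t‖ := norm_nonneg _
    have ha1 : ‖f t‖ < 1 := norm_lt_one_of_summable_sq hf1 hfm hf2 ht
    have hb0 : (0:ℝ) ≤ ‖x t‖ := norm_nonneg _
    have hb1 : ‖x t‖ < 1 := hxlt t ht
    have hA : (0:ℝ) < 1 - ‖f t‖ ^ 2 := by nlinarith
    have hW0 : (0:ℝ) < (1 - ‖x t‖ ^ p) ^ (2 / p) := by
      have : ‖x t‖ ^ p < 1 := Real.rpow_lt_one hb0 hb1 hp0
      exact Real.rpow_pos_of_pos (by linarith) _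
    have s1 : ∑ k ∈ Finset.range K, G (t ^ k)
        ≤ ∑ k ∈ Finset.range K, cseq ‖f t‖ ‖x t‖ k ^ 2 := by
      refine Finset.sum_le_sum fun k _ => ?_
      simp only [hG]
      have := conv_prime_pow_le hf1 hfm hx1 hxm ht k
      exact pow_le_pow_left₀ (norm_nonneg _) this 2
    have s2 := sum_cseq_sq_le ha0 ha1 hb0 hb1 K
    have s3 := V_mul_rpow_le hp1 hp2 ha0 ha1.le hb0 hb1
    have s4 : 1 + (‖f t‖ + ‖x t‖) ^ 2 / (1 - ‖x t‖ ^ 2)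
        ≤ (1 + Cp p * ‖f t‖ ^ 2) * ((1 - ‖x t‖ ^ p) ^ (2 / p))⁻¹ := by
      rw [← div_eq_mul_inv, le_div_iff₀ hW0]
      exact s3
    calc ∑ k ∈ Finset.range K, G (t ^ k)
        ≤ (1 + (‖f t‖ + ‖x t‖) ^ 2 / (1 - ‖x t‖ ^ 2)) / (1 - ‖f t‖ ^ 2) ^ 2 :=
          le_trans s1 s2
      _ ≤ ((1 + Cp p * ‖f t‖ ^ 2) * ((1 - ‖x t‖ ^ p) ^ (2 / p))⁻¹)
            / (1 - ‖f t‖ ^ 2) ^ 2 := by gcongr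
      _ = (1 + Cp p * ‖f t‖ ^ 2) / (1 - ‖f t‖ ^ 2) ^ 2
            * ((1 - ‖x t‖ ^ p) ^ (2 / p))⁻¹ := by ring
  have hGloc_sum : ∀ {t : ℕ}, t.Prime → Summable fun k : ℕ => G (t ^ k) := by
    intro t ht
    exact summable_of_sum_range_le (fun k => hGnn _) (hGrange ht)
  have hGloc_tsum : ∀ {t : ℕ}, t.Prime →
      ∑' k : ℕ, G (t ^ k)
        ≤ (1 + Cp p * ‖f t‖ ^ 2) / (1 - ‖f t‖ ^ 2) ^ 2
          * ((1 - ‖x t‖ ^ p) ^ (2 / p))⁻¹ := by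
    intro t ht
    exact Real.tsum_le_of_sum_range_le (fun k => hGnn _) (hGrange ht)
  -- the global bound on partial sums of G
  have hFbound : ∀ F : Finset ℕ,
      ∑ n ∈ F, G n ≤ Real.exp ((Cp p + 2) * M) * X ^ (2 / p) := by
    intro F
    set N : ℕ := F.sup id + 1 with hN
    set P : Finset ℕ := (Finset.range N).filter Nat.Prime with hP
    have hPprime : ∀ t ∈ P, t.Prime := fun t htP => (Finset.mem_filter.mp htP).2
    have s1 : ∑ n ∈ F, G n ≤ ∏ t ∈ P, ∑' k : ℕ, G (t ^ k) :=
      sum_le_euler_prod hG0 hG1 hGmul hGnn hGloc_sum F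
    have s2 : ∏ t ∈ P, ∑' k : ℕ, G (t ^ k)
        ≤ ∏ t ∈ P, ((1 + Cp p * ‖f t‖ ^ 2) / (1 - ‖f t‖ ^ 2) ^ 2
            * ((1 - ‖x t‖ ^ p) ^ (2 / p))⁻¹) := by
      refine Finset.prod_le_prod (fun t _ => tsum_nonneg fun k => hGnn _)
        (fun t htP => hGloc_tsum (hPprime t htP))
    have hbfac : ∀ t ∈ P, ((1 - ‖x t‖ ^ p) ^ (2 / p))⁻¹
        = ((1 - ‖x t‖ ^ p)⁻¹) ^ (2 / p) := by
      intro t htP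
      have hb1 : ‖x t‖ < 1 := hxlt t (hPprime t htP)
      have hv0 : (0:ℝ) < 1 - ‖x t‖ ^ p := by
        have : ‖x t‖ ^ p < 1 := Real.rpow_lt_one (norm_nonneg _) hb1 hp0
        linarith
      rw [← Real.inv_rpow hv0.le]
    have s3 : ∏ t ∈ P, ((1 + Cp p * ‖f t‖ ^ 2) / (1 - ‖f t‖ ^ 2) ^ 2
            * ((1 - ‖x t‖ ^ p) ^ (2 / p))⁻¹)
        = (∏ t ∈ P, (1 + Cp p * ‖f t‖ ^ 2) / (1 - ‖f t‖ ^ 2) ^ 2)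
          * ∏ t ∈ P, ((1 - ‖x t‖ ^ p)⁻¹) ^ (2 / p) := by
      rw [← Finset.prod_mul_distrib]
      exact Finset.prod_congr rfl fun t htP => by rw [hbfac t htP]
    have s4 : ∏ t ∈ P, ((1 - ‖x t‖ ^ p)⁻¹) ^ (2 / p)
        = (∏ t ∈ P, (1 - ‖x t‖ ^ p)⁻¹) ^ (2 / p) :=
      Real.finset_prod_rpow P _ (fun t htP => by
        have hb1 : ‖x t‖ < 1 := hxlt t (hPprime t htP)
        have : ‖x t‖ ^ p < 1 := Real.rpow_lt_one (norm_nonneg _) hb1 hp0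
        exact inv_nonneg.mpr (by linarith)) _
    have s5 : ∏ t ∈ P, (1 - ‖x t‖ ^ p)⁻¹ ≤ X := by
      have e1 : ∏ t ∈ P, (1 - ‖x t‖ ^ p)⁻¹ = ∏ t ∈ P, ∑' k : ℕ, Gx (t ^ k) :=
        Finset.prod_congr rfl fun t htP => (hxploc (hPprime t htP)).symm
      rw [e1, hX, hP]
      exact euler_prod_le_tsum hGx1 hGxmul hGxnn hxsum (Finset.range N)
    have s6 : (∏ t ∈ P, (1 - ‖x t‖ ^ p)⁻¹) ^ (2 / p) ≤ X ^ (2 / p) := by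
      refine Real.rpow_le_rpow ?_ s5 (by positivity)
      refine Finset.prod_nonneg fun t htP => ?_
      have hb1 : ‖x t‖ < 1 := hxlt t (hPprime t htP)
      have : ‖x t‖ ^ p < 1 := Real.rpow_lt_one (norm_nonneg _) hb1 hp0
      exact inv_nonneg.mpr (by linarith)
    have s7 : ∏ t ∈ P, (1 + Cp p * ‖f t‖ ^ 2) / (1 - ‖f t‖ ^ 2) ^ 2
        ≤ Real.exp ((Cp p + 2) * M) := by
      have per : ∀ t ∈ P, (1 + Cp p * ‖f t‖ ^ 2) / (1 - ‖f t‖ ^ 2) ^ 2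
          ≤ Real.exp ((Cp p + 2) * (‖f t‖ ^ 2 / (1 - ‖f t‖ ^ 2))) := by
        intro t htP
        exact A_le_exp (norm_nonneg _)
          (norm_lt_one_of_summable_sq hf1 hfm hf2 (hPprime t htP)) hCp0
      calc ∏ t ∈ P, (1 + Cp p * ‖f t‖ ^ 2) / (1 - ‖f t‖ ^ 2) ^ 2
          ≤ ∏ t ∈ P, Real.exp ((Cp p + 2) * (‖f t‖ ^ 2 / (1 - ‖f t‖ ^ 2))) := by
            refine Finset.prod_le_prod (fun t htP => ?_) per
            have ha1 : ‖f t‖ < 1 := norm_lt_one_of_summable_sq hf1 hfm hf2 (hPprime t htP)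
            have : (0:ℝ) < 1 - ‖f t‖ ^ 2 := by nlinarith [norm_nonneg (f t)]
            positivity
        _ = Real.exp (∑ t ∈ P, (Cp p + 2) * (‖f t‖ ^ 2 / (1 - ‖f t‖ ^ 2))) :=
            (Real.exp_sum P _).symm
        _ = Real.exp ((Cp p + 2) * ∑ t ∈ P, ‖f t‖ ^ 2 / (1 - ‖f t‖ ^ 2)) := by
            rw [← Finset.mul_sum]
        _ ≤ Real.exp ((Cp p + 2) * M) := by
            rw [Real.exp_le_exp]
            exact mul_le_mul_of_nonneg_left
              (sum_d_le hf1 hfm hf2 P hPprime) (by linarith)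
    calc ∑ n ∈ F, G n ≤ ∏ t ∈ P, ∑' k : ℕ, G (t ^ k) := s1
      _ ≤ ∏ t ∈ P, ((1 + Cp p * ‖f t‖ ^ 2) / (1 - ‖f t‖ ^ 2) ^ 2
            * ((1 - ‖x t‖ ^ p) ^ (2 / p))⁻¹) := s2
      _ = (∏ t ∈ P, (1 + Cp p * ‖f t‖ ^ 2) / (1 - ‖f t‖ ^ 2) ^ 2)
            * ∏ t ∈ P, ((1 - ‖x t‖ ^ p)⁻¹) ^ (2 / p) := s3
      _ = (∏ t ∈ P, (1 + Cp p * ‖f t‖ ^ 2) / (1 - ‖f t‖ ^ 2) ^ 2)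
            * (∏ t ∈ P, (1 - ‖x t‖ ^ p)⁻¹) ^ (2 / p) := by rw [s4]
      _ ≤ Real.exp ((Cp p + 2) * M) * X ^ (2 / p) := by
          refine mul_le_mul s7 s6 ?_ (Real.exp_pos _).le
          refine Real.rpow_nonneg ?_ _
          refine Finset.prod_nonneg fun t htP => ?_
          have hb1 : ‖x t‖ < 1 := hxlt t (hPprime t htP)
          have : ‖x t‖ ^ p < 1 := Real.rpow_lt_one (norm_nonneg _) hb1 hp0
          exact inv_nonneg.mpr (by linarith)
  -- conclude
  have hGsummable : Summable G := summable_of_sum_le (fun n => hGnn n) hFbound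
  have hGtsum : ∑' n : ℕ, G n ≤ Real.exp ((Cp p + 2) * M) * X ^ (2 / p) :=
    Summable.tsum_le_of_sum_le hGsummable hFbound
  refine ⟨hGsummable, ?_⟩
  have hGt0 : 0 ≤ ∑' n : ℕ, G n := tsum_nonneg hGnn
  have t1 : (∑' n : ℕ, G n) ^ ((1:ℝ)/2)
      ≤ (Real.exp ((Cp p + 2) * M) * X ^ (2 / p)) ^ ((1:ℝ)/2) :=
    Real.rpow_le_rpow hGt0 hGtsum (by norm_num)
  have t2 : (Real.exp ((Cp p + 2) * M) * X ^ (2 / p)) ^ ((1:ℝ)/2)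
      = Real.exp ((Cp p + 2) * M) ^ ((1:ℝ)/2) * (X ^ (2 / p)) ^ ((1:ℝ)/2) :=
    Real.mul_rpow (Real.exp_pos _).le (Real.rpow_nonneg hX0 _)
  have t3 : (X ^ (2 / p)) ^ ((1:ℝ)/2) = X ^ (1 / p) := by
    rw [← Real.rpow_mul hX0]
    congr 1
    ring
  have t4 : Real.exp ((Cp p + 2) * M) ^ ((1:ℝ)/2)
      = Real.exp ((Cp p + 2) * M * (1 / 2)) := (Real.exp_mul _ _).symm
  calc (∑' n : ℕ, G n) ^ ((1:ℝ)/2)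
      ≤ (Real.exp ((Cp p + 2) * M) * X ^ (2 / p)) ^ ((1:ℝ)/2) := t1
    _ = Real.exp ((Cp p + 2) * M * (1 / 2)) * X ^ (1 / p) := by rw [t2, t3, t4]
end

section
/- Let α > 1/2 and 1 < p < 2. If x ∈ ℓ^p(ℕ) is a sequence satisfying |x_n| ≤ C / d(n)^{1/(2-p)} for all n (for some constant C), where d(n) is the number of divisors of n, then the sequence y given by y_n = ∑_{k ∣ n} x_k / (n/k)^α belongs to ℓ^2. -/
/-- Dirichlet convolution of two nonneg summable sequences is summable. -/
theorem divisor_conv_summable (f g : ℕ → ℝ) (hf0 : ∀ n, 0 ≤ f n) (hg0 : ∀ n, 0 ≤ g n)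
    (hf : Summable f) (hg : Summable g) :
    Summable (fun n : ℕ => ∑ d ∈ n.divisors, f d * g (n / d)) := by
  have hprod : Summable (fun p : ℕ × ℕ => f p.1 * g p.2) :=
    hf.mul_of_nonneg hg hf0 hg0
  apply summable_of_sum_le (c := ∑' p : ℕ × ℕ, f p.1 * g p.2)
  · intro n
    exact Finset.sum_nonneg fun d _ => mul_nonneg (hf0 _) (hg0 _)
  · intro u
    have hdisj : (↑u : Set ℕ).PairwiseDisjoint Nat.divisorsAntidiagonal := by
      intro m _ n _ hmn
      simp only [Finset.disjoint_left]
      intro p hpm hpn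
      rw [Nat.mem_divisorsAntidiagonal] at hpm hpn
      exact hmn (hpm.1.symm.trans hpn.1)
    calc ∑ n ∈ u, ∑ d ∈ n.divisors, f d * g (n / d)
        = ∑ n ∈ u, ∑ p ∈ n.divisorsAntidiagonal, f p.1 * g p.2 := by
          refine Finset.sum_congr rfl fun n _ => ?_
          exact (Nat.sum_divisorsAntidiagonal (fun i j => f i * g j)).symm
      _ = ∑ p ∈ u.biUnion Nat.divisorsAntidiagonal, f p.1 * g p.2 :=
          (Finset.sum_biUnion hdisj).symm
      _ ≤ ∑' p : ℕ × ℕ, f p.1 * g p.2 :=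
          Summable.sum_le_tsum _ (fun p _ => mul_nonneg (hf0 _) (hg0 _)) hprod

/-- Submultiplicativity of the divisor-counting function. -/
theorem card_divisors_mul_le (m n : ℕ) (hm : 0 < m) (hn : 0 < n) :
    (m * n).divisors.card ≤ m.divisors.card * n.divisors.card := by
  rw [← Finset.card_product]
  apply Finset.card_le_card_of_injOn (fun k => (Nat.gcd k m, k / Nat.gcd k m))
  · intro k hk
    rw [Finset.mem_coe, Nat.mem_divisors] at hk
    have hk0 : 0 < k := Nat.pos_of_dvd_of_pos hk.1 (Nat.mul_pos hm hn)
    have hg : 0 < Nat.gcd k m := Nat.gcd_pos_of_pos_left m hk0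
    have hgk : Nat.gcd k m ∣ k := Nat.gcd_dvd_left k m
    rw [Finset.mem_coe, Finset.mem_product, Nat.mem_divisors, Nat.mem_divisors]
    refine ⟨⟨Nat.gcd_dvd_right k m, hm.ne'⟩, ?_, hn.ne'⟩
    have hco : Nat.Coprime (k / Nat.gcd k m) (m / Nat.gcd k m) :=
      Nat.coprime_div_gcd_div_gcd hg
    have hdvd : k / Nat.gcd k m ∣ (m / Nat.gcd k m) * n := by
      obtain ⟨c, hc⟩ := hk.1
      refine ⟨c, ?_⟩
      have h1 : Nat.gcd k m * ((m / Nat.gcd k m) * n) = Nat.gcd k m * ((k / Nat.gcd k m) * c) := by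
        rw [← Nat.mul_assoc, ← Nat.mul_assoc, Nat.mul_div_cancel' (Nat.gcd_dvd_right k m),
          Nat.mul_div_cancel' hgk, ← hc]
      exact Nat.eq_of_mul_eq_mul_left hg h1
    exact Nat.Coprime.dvd_of_dvd_mul_left hco hdvd
  · intro k hk l hl hkl
    have h1 : Nat.gcd k m * (k / Nat.gcd k m) = k := Nat.mul_div_cancel' (Nat.gcd_dvd_left k m)
    have h2 : Nat.gcd l m * (l / Nat.gcd l m) = l := Nat.mul_div_cancel' (Nat.gcd_dvd_left l m)
    have h3 := congrArg (fun p : ℕ × ℕ => p.1 * p.2) hkl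
    simpa [h1, h2] using h3

/-- The self-convolution of `n ↦ (n^{-α})²` evaluates to `d(n) · (n^{-α})²`. -/
theorem aux_A_eq (α : ℝ) (d : ℕ) :
    ∑ u ∈ d.divisors, ((u : ℝ) ^ (-α)) ^ 2 * (((d / u : ℕ) : ℝ) ^ (-α)) ^ 2
      = (d.divisors.card : ℝ) * ((d : ℝ) ^ (-α)) ^ 2 := by
  rw [Finset.sum_congr rfl (fun u hu => ?_), Finset.sum_const, nsmul_eq_mul]
  have hud : u ∣ d := (Nat.mem_divisors.mp hu).1
  have hcast : ((u : ℝ) * ((d / u : ℕ) : ℝ)) = (d : ℝ) := by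
    rw [← Nat.cast_mul, Nat.mul_div_cancel' hud]
  rw [← mul_pow, ← Real.mul_rpow (Nat.cast_nonneg u) (Nat.cast_nonneg _), hcast]

/-- If α > 1/2, 1 < p < 2, x ∈ ℓ^p and |x_n| ≤ C / d(n)^{1/(2-p)}, then
y_n = ∑_{d ∣ n} x_{n/d} / d^α lies in ℓ². -/
theorem conv_in_l2_of_small_on_divisors
    (α p : ℝ) (hα : 1 / 2 < α) (hp1 : 1 < p) (hp2 : p < 2)
    (x : ℕ → ℂ) (hx0 : x 0 = 0)
    (hx : Summable fun n => ‖x n‖ ^ p)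
    (C : ℝ)
    (hxd : ∀ n : ℕ, 0 < n → ‖x n‖ ≤ C / (n.divisors.card : ℝ) ^ (1 / (2 - p))) :
    Summable fun n : ℕ =>
      ‖∑ d ∈ n.divisors, x (n / d) / (d : ℂ) ^ (α : ℂ)‖ ^ 2 := by
  have h2p : (0:ℝ) < 2 - p := by linarith
  have hC : 0 ≤ C := by
    have h1 := hxd 1 one_pos
    have h2 : ((Nat.divisors 1).card : ℝ) ^ ((1:ℝ) / (2 - p)) = 1 := by
      simp [Nat.divisors_one]
    rw [h2, div_one] at h1
    exact le_trans (norm_nonneg _) h1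
  -- the weight sequences
  set F : ℕ → ℝ := fun d => ((d : ℝ) ^ (-α)) ^ 2 with hFdef
  set B : ℕ → ℝ := fun e => (e.divisors.card : ℝ) * ‖x e‖ ^ 2 with hBdef
  have hF0 : ∀ d, 0 ≤ F d := fun d => sq_nonneg _
  have hB0 : ∀ e, 0 ≤ B e := fun e => mul_nonneg (Nat.cast_nonneg _) (sq_nonneg _)
  have hF : Summable F := by
    have : F = fun d : ℕ => (d : ℝ) ^ (-α * 2) := by
      funext d
      show ((d : ℝ) ^ (-α)) ^ 2 = _
      rw [← Real.rpow_natCast ((d : ℝ) ^ (-α)) 2, ← Real.rpow_mul (Nat.cast_nonneg d)]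
      norm_num
    rw [this]
    exact Real.summable_nat_rpow.mpr (by linarith)
  have hB : Summable B := by
    refine Summable.of_nonneg_of_le hB0 (fun n => ?_) (hx.mul_left (C ^ (2 - p)))
    rcases Nat.eq_zero_or_pos n with rfl | hn
    · simp [hBdef]
      positivity
    rcases eq_or_lt_of_le (norm_nonneg (x n)) with hxn | hxn
    · rw [hBdef]
      simp only [← hxn]
      simp [Real.zero_rpow (show p ≠ 0 by linarith)]
    · have hD : (0:ℝ) < (n.divisors.card : ℝ) := by
        have : n.divisors.Nonempty := ⟨1, Nat.one_mem_divisors.mpr hn.ne'⟩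
        exact_mod_cast Finset.card_pos.mpr this
      have hDD : ((n.divisors.card : ℝ) ^ ((1:ℝ) / (2 - p))) ^ (2 - p) = (n.divisors.card : ℝ) := by
        rw [← Real.rpow_mul (le_of_lt hD), one_div, inv_mul_cancel₀ h2p.ne', Real.rpow_one]
      have key : ‖x n‖ ^ (2 - p) ≤ C ^ (2 - p) / (n.divisors.card : ℝ) := by
        have h := Real.rpow_le_rpow (norm_nonneg _) (hxd n hn) h2p.le
        rwa [Real.div_rpow hC (Real.rpow_nonneg hD.le _), hDD] at h
      have hsplit : ‖x n‖ ^ (2:ℕ) = ‖x n‖ ^ p * ‖x n‖ ^ (2 - p) := by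
        rw [← Real.rpow_natCast (‖x n‖) 2, ← Real.rpow_add hxn]
        norm_num
      rw [hBdef]
      simp only
      rw [hsplit]
      calc (n.divisors.card : ℝ) * (‖x n‖ ^ p * ‖x n‖ ^ (2 - p))
          ≤ (n.divisors.card : ℝ) * (‖x n‖ ^ p * (C ^ (2 - p) / (n.divisors.card : ℝ))) := by
            apply mul_le_mul_of_nonneg_left _ hD.le
            exact mul_le_mul_of_nonneg_left key (Real.rpow_nonneg (norm_nonneg _) _)
        _ = C ^ (2 - p) * ‖x n‖ ^ p := by field_simp
  -- the dominating sequence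
  set A : ℕ → ℝ := fun d => ∑ u ∈ d.divisors, F u * F (d / u) with hAdef
  have hA0 : ∀ d, 0 ≤ A d := fun d => Finset.sum_nonneg fun u _ => mul_nonneg (hF0 _) (hF0 _)
  have hA : Summable A := divisor_conv_summable F F hF0 hF0 hF hF
  have hg : Summable (fun n : ℕ => ∑ d ∈ n.divisors, A d * B (n / d)) :=
    divisor_conv_summable A B hA0 hB0 hA hB
  refine Summable.of_nonneg_of_le (fun n => sq_nonneg _) (fun n => ?_) hg
  rcases Nat.eq_zero_or_pos n with rfl | hn
  · simp
  -- pointwise bound for positive n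
  have key1 : ‖∑ d ∈ n.divisors, x (n / d) / (d : ℂ) ^ (α : ℂ)‖
      ≤ ∑ d ∈ n.divisors, (d : ℝ) ^ (-α) * ‖x (n / d)‖ := by
    refine (norm_sum_le _ _).trans (le_of_eq (Finset.sum_congr rfl fun d hd => ?_))
    have hd0 : 0 < d := Nat.pos_of_mem_divisors hd
    rw [norm_div, Complex.norm_natCast_cpow_of_pos hd0, Complex.ofReal_re,
      Real.rpow_neg (Nat.cast_nonneg d)]
    ring
  calc ‖∑ d ∈ n.divisors, x (n / d) / (d : ℂ) ^ (α : ℂ)‖ ^ 2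
      ≤ (∑ d ∈ n.divisors, (d : ℝ) ^ (-α) * ‖x (n / d)‖) ^ 2 :=
        pow_le_pow_left₀ (norm_nonneg _) key1 2
    _ ≤ (n.divisors.card : ℝ) * ∑ d ∈ n.divisors, ((d : ℝ) ^ (-α) * ‖x (n / d)‖) ^ 2 :=
        sq_sum_le_card_mul_sum_sq
    _ ≤ ∑ d ∈ n.divisors, A d * B (n / d) := by
        rw [Finset.mul_sum]
        refine Finset.sum_le_sum fun d hd => ?_
        have hd0 : 0 < d := Nat.pos_of_mem_divisors hd
        have hnd : d ∣ n := (Nat.mem_divisors.mp hd).1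
        have he0 : 0 < n / d := Nat.div_pos (Nat.le_of_dvd hn hnd) hd0
        have hcard : (n.divisors.card : ℝ)
            ≤ (d.divisors.card : ℝ) * ((n / d).divisors.card : ℝ) := by
          have h := card_divisors_mul_le d (n / d) hd0 he0
          rw [Nat.mul_div_cancel' hnd] at h
          exact_mod_cast h
        have hAd : A d = (d.divisors.card : ℝ) * F d := by
          rw [hAdef]
          exact aux_A_eq α d
        rw [hAd, hBdef, hFdef]
        simp only
        calc (n.divisors.card : ℝ) * ((d : ℝ) ^ (-α) * ‖x (n / d)‖) ^ 2
            = (n.divisors.card : ℝ) * (((d : ℝ) ^ (-α)) ^ 2 * ‖x (n / d)‖ ^ 2) := by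
              rw [mul_pow]
          _ ≤ ((d.divisors.card : ℝ) * ((n / d).divisors.card : ℝ))
                * (((d : ℝ) ^ (-α)) ^ 2 * ‖x (n / d)‖ ^ 2) :=
              mul_le_mul_of_nonneg_right hcard (by positivity)
          _ = (d.divisors.card : ℝ) * ((d : ℝ) ^ (-α)) ^ 2
                * (((n / d).divisors.card : ℝ) * ‖x (n / d)‖ ^ 2) := by ring
end

section
/- Let α > 1/2 and p ∈ (1, 2), and let x ∈ ℓ^p be supported on powers of two (x_n = 0 unless n is a power of 2). Then the sequence y_n = ∑_{d ∣ n} x_{n/d}/d^α belongs to ℓ^2. -/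
set_option maxHeartbeats 1000000

open Finset Filter

/-- For α > 1/2, 1 < p < 2 and x ∈ ℓ^p supported on powers of two, the
sequence y_n = ∑_{d∣n} x_{n/d}/d^α lies in ℓ². -/
theorem conv_in_l2_of_support_powers_of_two
    (α p : ℝ) (hα : 1 / 2 < α) (hp1 : 1 < p) (hp2 : p < 2)
    (x : ℕ → ℂ) (hx0 : x 0 = 0)
    (hx : Summable fun n => ‖x n‖ ^ p)
    (hsupp : ∀ n : ℕ, x n ≠ 0 → ∃ k : ℕ, n = 2 ^ k) :
    Summable fun n : ℕ =>
      ‖∑ d ∈ n.divisors, x (n / d) / (d : ℂ) ^ (α : ℂ)‖ ^ 2 := by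
  have hα0 : 0 < α := by linarith
  have hp0 : 0 < p := by linarith
  set a : ℕ → ℝ := fun j => ‖x (2 ^ j)‖ with ha_def
  -- a ∈ ℓ²
  have hx2 : Summable fun n => ‖x n‖ ^ 2 := by
    apply Summable.of_norm_bounded_eventually (g := fun n => ‖x n‖ ^ p) hx
    rw [Nat.cofinite_eq_atTop]
    have h1 : ∀ᶠ n in atTop, ‖x n‖ ^ p < 1 :=
      hx.tendsto_atTop_zero.eventually (gt_mem_nhds one_pos)
    filter_upwards [h1] with n hn
    have hnn : (0:ℝ) ≤ ‖x n‖ := norm_nonneg _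
    rcases eq_or_lt_of_le hnn with h0 | h0
    · simp [← h0, Real.zero_rpow hp0.ne', hp0.ne']
    · have hle1 : ‖x n‖ ≤ 1 := by
        by_contra hgt
        push_neg at hgt
        exact absurd hn (not_lt.mpr (Real.one_le_rpow hgt.le hp0.le))
      have h2 : ‖x n‖ ^ (2:ℕ) ≤ ‖x n‖ ^ p := by
        rw [← Real.rpow_natCast ‖x n‖ 2]
        exact Real.rpow_le_rpow_of_exponent_ge h0 hle1 (by push_cast; linarith)
      rw [Real.norm_of_nonneg (pow_nonneg hnn 2)]
      exact h2
  have ha2 : Summable fun j => a j ^ 2 :=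
    hx2.comp_injective (Nat.pow_right_injective le_rfl)
  have hann : ∀ j, 0 ≤ a j := fun j => norm_nonneg _
  set q : ℝ := (2:ℝ) ^ (-α) with hq_def
  have hq0 : 0 < q := Real.rpow_pos_of_pos two_pos _
  have hq1 : q < 1 := Real.rpow_lt_one_of_one_lt_of_neg one_lt_two (by linarith)
  set B : ℝ := (1 - q)⁻¹ with hB_def
  have hgeom : Summable fun k : ℕ => q ^ k := summable_geometric_of_lt_one hq0.le hq1
  have hBsum : ∀ N : ℕ, ∑ k ∈ range N, q ^ k ≤ B := by
    intro N
    have := hgeom.sum_le_tsum (range N) (fun k _ => le_of_lt (pow_pos hq0 k))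
    rwa [tsum_geometric_of_lt_one hq0.le hq1] at this
  set T : ℕ → ℝ := fun l => ∑ j ∈ range (l + 1), a j * q ^ (l - j) with hT_def
  have hTnn : ∀ l, 0 ≤ T l := fun l =>
    Finset.sum_nonneg fun j _ => mul_nonneg (hann j) (le_of_lt (pow_pos hq0 _))
  set U : ℕ → ℝ := fun l => ∑ j ∈ range (l + 1), a j ^ 2 * q ^ (l - j) with hU_def
  have hUnn : ∀ l, 0 ≤ U l := fun l =>
    Finset.sum_nonneg fun j _ => mul_nonneg (sq_nonneg _) (le_of_lt (pow_pos hq0 _))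
  have hU : Summable U := by
    have hprod : Summable fun z : ℕ × ℕ => (a z.1 ^ 2) * (q ^ z.2) :=
      ha2.mul_of_nonneg hgeom (fun j => sq_nonneg _) (fun k => le_of_lt (pow_pos hq0 k))
    have h2 : Summable fun l : ℕ => ∑ kl ∈ Finset.HasAntidiagonal.antidiagonal l, a kl.1 ^ 2 * q ^ kl.2 :=
      summable_sum_mul_antidiagonal_of_summable_mul
        (f := fun i => a i ^ 2) (g := fun k => q ^ k) hprod
    refine h2.congr fun l => ?_
    rw [Finset.Nat.sum_antidiagonal_eq_sum_range_succ_mk]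
  -- Cauchy-Schwarz: T l ^ 2 ≤ B * U l
  have hCS : ∀ l, T l ^ 2 ≤ B * U l := by
    intro l
    set s : ℝ := Real.sqrt q with hs_def
    have hs2 : s ^ 2 = q := Real.sq_sqrt hq0.le
    have hTeq : T l = ∑ j ∈ range (l + 1), (a j * s ^ (l - j)) * s ^ (l - j) := by
      refine Finset.sum_congr rfl fun j _ => ?_
      rw [mul_assoc, ← pow_add, ← two_mul, pow_mul, hs2]
    have key := Finset.sum_mul_sq_le_sq_mul_sq (range (l + 1))
      (fun j => a j * s ^ (l - j)) (fun j => s ^ (l - j))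
    rw [← hTeq] at key
    have h1 : ∑ j ∈ range (l + 1), (a j * s ^ (l - j)) ^ 2 = U l := by
      refine Finset.sum_congr rfl fun j _ => ?_
      rw [mul_pow, ← pow_mul, mul_comm (l - j) 2, pow_mul, hs2]
    have h2 : ∑ j ∈ range (l + 1), (s ^ (l - j)) ^ 2 = ∑ k ∈ range (l + 1), q ^ k := by
      rw [← Finset.sum_range_reflect]
      refine Finset.sum_congr rfl fun j hj => ?_
      rw [Finset.mem_range] at hj
      have hidx : l - (l + 1 - 1 - j) = j := by omega
      rw [hidx, ← pow_mul, mul_comm j 2, pow_mul, hs2]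
    rw [h1, h2] at key
    calc T l ^ 2 ≤ U l * ∑ k ∈ range (l + 1), q ^ k := key
      _ ≤ U l * B := mul_le_mul_of_nonneg_left (hBsum _) (hUnn l)
      _ = B * U l := mul_comm _ _
  have hT2 : Summable fun l => T l ^ 2 :=
    Summable.of_nonneg_of_le (fun l => sq_nonneg _) hCS (hU.mul_left B)
  -- factorization fact
  have hfact : ∀ l r : ℕ, (2 ^ l * (2 * r + 1)).factorization 2 = l := by
    intro l r
    rw [Nat.factorization_mul (pow_ne_zero _ two_ne_zero) (by omega)]
    simp [Nat.Prime.factorization_pow Nat.prime_two,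
      Nat.factorization_eq_zero_of_not_dvd (show ¬(2:ℕ) ∣ 2 * r + 1 by omega)]
  -- key pointwise bound
  have key : ∀ l r : ℕ,
      ‖∑ d ∈ (2 ^ l * (2 * r + 1)).divisors,
        x ((2 ^ l * (2 * r + 1)) / d) / (d : ℂ) ^ (α : ℂ)‖
      ≤ ((2 * r + 1 : ℕ) : ℝ) ^ (-α) * T l := by
    intro l r
    set m : ℕ := 2 * r + 1 with hm_def
    set n : ℕ := 2 ^ l * m with hn_def
    have hm0 : 0 < m := by omega
    have hn0 : n ≠ 0 := by positivity
    set G : ℕ → ℝ := fun d => ‖x (n / d) / (d : ℂ) ^ (α : ℂ)‖ with hG_def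
    set e : ℕ → ℕ := fun j => 2 ^ (l - j) * m with he_def
    have hen : ∀ j ≤ l, e j * 2 ^ j = n := by
      intro j hj
      show 2 ^ (l - j) * m * 2 ^ j = 2 ^ l * m
      rw [mul_right_comm, ← pow_add]
      congr 2
      omega
    have hediv : ∀ j ≤ l, n / e j = 2 ^ j := by
      intro j hj
      have he0 : 0 < e j := by positivity
      rw [← hen j hj, Nat.mul_div_cancel_left _ he0]
    have hsub : (range (l + 1)).image e ⊆ n.divisors := by
      intro d hd
      rw [Finset.mem_image] at hd
      obtain ⟨j, hj, rfl⟩ := hd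
      rw [Nat.mem_divisors]
      exact ⟨mul_dvd_mul (pow_dvd_pow 2 (by omega)) dvd_rfl, hn0⟩
    have hvanish : ∀ d ∈ n.divisors, d ∉ (range (l + 1)).image e → G d = 0 := by
      intro d hd hdni
      rw [Nat.mem_divisors] at hd
      by_contra hGne
      have hxne : x (n / d) ≠ 0 := by
        intro h
        apply hGne
        simp [hG_def, h]
      obtain ⟨j, hj⟩ := hsupp _ hxne
      have h2j : (2 ^ j : ℕ) ∣ n := hj ▸ Nat.div_dvd_of_dvd hd.1
      have hjl : j ≤ l := by
        have := (Nat.Prime.pow_dvd_iff_le_factorization Nat.prime_two hn0).mp h2j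
        rwa [hn_def, hm_def, hfact l r] at this
      apply hdni
      rw [Finset.mem_image]
      refine ⟨j, Finset.mem_range.mpr (by omega), ?_⟩
      have hdn : d * (n / d) = n := Nat.mul_div_cancel' hd.1
      rw [hj] at hdn
      exact (Nat.eq_of_mul_eq_mul_right (Nat.pow_pos (n := j) two_pos)
        (hdn.trans (hen j hjl).symm)).symm
    have hinj : ∀ j ∈ range (l + 1), ∀ j' ∈ range (l + 1), e j = e j' → j = j' := by
      intro j hj j' hj' hee
      rw [Finset.mem_range] at hj hj'
      have h1 : (2:ℕ) ^ (l - j) = 2 ^ (l - j') := Nat.eq_of_mul_eq_mul_right hm0 hee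
      have h2 : l - j = l - j' := Nat.pow_right_injective le_rfl h1
      omega
    have heval : ∀ j ∈ range (l + 1), G (e j) = a j * q ^ (l - j) * ((m:ℕ):ℝ) ^ (-α) := by
      intro j hj
      rw [Finset.mem_range] at hj
      have hjl : j ≤ l := by omega
      have he0 : 0 < e j := by positivity
      have he0R : (0:ℝ) < (e j : ℝ) := by exact_mod_cast he0
      have hGnorm : G (e j) = a j / ((e j : ℕ) : ℝ) ^ α := by
        rw [hG_def]
        simp only []
        rw [hediv j hjl, norm_div]
        congr 1
        have hcast : ((e j : ℕ) : ℂ) = (((e j : ℕ) : ℝ) : ℂ) := by norm_cast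
        rw [hcast, Complex.norm_cpow_eq_rpow_re_of_pos he0R,
          Complex.ofReal_re]
      rw [hGnorm, div_eq_mul_inv, ← Real.rpow_neg he0R.le, mul_assoc]
      congr 1
      show ((2 ^ (l - j) * m : ℕ) : ℝ) ^ (-α) = q ^ (l - j) * ((m:ℕ):ℝ) ^ (-α)
      rw [Nat.cast_mul, Nat.cast_pow, Nat.cast_ofNat,
        Real.mul_rpow (by positivity) (by positivity),
        ← Real.rpow_natCast 2 (l - j), ← Real.rpow_mul (by norm_num : (0:ℝ) ≤ 2),
        mul_comm ((l - j : ℕ) : ℝ) (-α), Real.rpow_mul (by norm_num : (0:ℝ) ≤ 2),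
        Real.rpow_natCast]
    calc ‖∑ d ∈ n.divisors, x (n / d) / (d : ℂ) ^ (α : ℂ)‖
        ≤ ∑ d ∈ n.divisors, G d := norm_sum_le _ _
      _ = ∑ d ∈ (range (l + 1)).image e, G d := (Finset.sum_subset hsub hvanish).symm
      _ = ∑ j ∈ range (l + 1), G (e j) := Finset.sum_image hinj
      _ = ∑ j ∈ range (l + 1), a j * q ^ (l - j) * ((m:ℕ):ℝ) ^ (-α) :=
          Finset.sum_congr rfl heval
      _ = ((m:ℕ):ℝ) ^ (-α) * T l := by rw [← Finset.sum_mul, mul_comm]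
  -- final assembly
  set f : ℕ × ℕ → ℕ := fun z => 2 ^ z.1 * (2 * z.2 + 1) with hf_def
  have hfinj : Function.Injective f := by
    rintro ⟨l, r⟩ ⟨l', r'⟩ h
    simp only [hf_def] at h
    have hl : l = l' := by
      have h2 := congrArg (fun k => Nat.factorization k 2) h
      simpa only [hfact] using h2
    subst hl
    have hr : 2 * r + 1 = 2 * r' + 1 :=
      Nat.eq_of_mul_eq_mul_left (pow_pos two_pos l) h
    exact Prod.ext rfl (by omega)
  have hcover : ∀ n : ℕ, n ∉ Set.range f →
      ‖∑ d ∈ n.divisors, x (n / d) / (d : ℂ) ^ (α : ℂ)‖ ^ 2 = 0 := by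
    intro n hn
    rcases eq_or_ne n 0 with rfl | hn0
    · simp
    · exfalso
      apply hn
      have h1 : ¬ 2 ∣ ordCompl[2] n := Nat.not_dvd_ordCompl Nat.prime_two hn0
      obtain ⟨r, hr⟩ : Odd (ordCompl[2] n) := Nat.odd_iff.mpr (Nat.two_dvd_ne_zero.mp h1)
      refine ⟨(n.factorization 2, r), ?_⟩
      show 2 ^ n.factorization 2 * (2 * r + 1) = n
      rw [← hr]
      exact Nat.ordProj_mul_ordCompl_eq_self n 2
  rw [← Function.Injective.summable_iff hfinj hcover]
  have hc : Summable fun r : ℕ => (((2 * r + 1 : ℕ) : ℝ) ^ (-α)) ^ 2 := by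
    have hbase : Summable fun r : ℕ => ((r:ℝ)) ^ (-(2 * α)) :=
      Real.summable_nat_rpow.mpr (by linarith)
    have hshift : Summable fun r : ℕ => (((r + 1 : ℕ)):ℝ) ^ (-(2 * α)) := by
      have := (summable_nat_add_iff 1).mpr hbase
      refine this.congr fun r => ?_
      norm_cast
    apply hshift.of_nonneg_of_le (fun r => sq_nonneg _)
    intro r
    have heq : (((2 * r + 1 : ℕ) : ℝ) ^ (-α)) ^ 2 = ((2 * r + 1 : ℕ) : ℝ) ^ (-(2 * α)) := by
      rw [← Real.rpow_natCast (((2 * r + 1 : ℕ) : ℝ) ^ (-α)) 2,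
        ← Real.rpow_mul (by positivity)]
      congr 1
      push_cast
      ring
    rw [heq]
    apply Real.rpow_le_rpow_of_nonpos (by positivity)
    · push_cast; linarith
    · linarith
  have hmaj : Summable fun z : ℕ × ℕ => (T z.1 ^ 2) * ((((2 * z.2 + 1 : ℕ)):ℝ) ^ (-α)) ^ 2 :=
    hT2.mul_of_nonneg hc (fun l => sq_nonneg _) (fun r => sq_nonneg _)
  apply Summable.of_nonneg_of_le (fun z => sq_nonneg _) _ hmaj
  intro z
  show ‖∑ d ∈ (f z).divisors, x ((f z) / d) / (d : ℂ) ^ (α : ℂ)‖ ^ 2 ≤ _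
  have hk := key z.1 z.2
  calc ‖∑ d ∈ (f z).divisors, x ((f z) / d) / (d : ℂ) ^ (α : ℂ)‖ ^ 2
      ≤ (((2 * z.2 + 1 : ℕ) : ℝ) ^ (-α) * T z.1) ^ 2 :=
        pow_le_pow_left₀ (norm_nonneg _) hk 2
    _ = (T z.1 ^ 2) * ((((2 * z.2 + 1 : ℕ)):ℝ) ^ (-α)) ^ 2 := by ring
end

section
/- Let α > 1/2, 1 < p < 2, β = p/((2-p)(2α-1)), and let S ⊆ ℕ satisfy ∑_{n ∈ S} 1/d(n)^{p/(2-p)} < ∞. Let x ∈ ℓ^2 be supported on S with |x_n| ≤ 1 for all n. Define γ_n = ∑_{d ∣ n, n/d ∈ S, d ≥ d(n)^β} x_{n/d}/d^α. Then γ ∈ ℓ^2. -/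
/-!
By Cauchy–Schwarz, `|γ_n|² ≤ ∑_{m₁, m₂} |x_{m₁}|² (n/m₁)^{-α} (n/m₂)^{-α}`, the sum running over
the `m ∈ S` dividing `n` with cofactor `n/m ≥ d(n)^β`. Summing over `n` first, for a fixed pair with
`m₁ ≤ m₂` the `n` are distinct multiples `k m₂` with `k ≥ d(n)^β ≥ d(m₂)^β`, and the term is at most
`k^{-2α}`; comparison with `∫ t^{-2α} dt` bounds this inner sum by a constant times
`d(m₂)^{-β(2α-1)} = d(m₂)^{-p/(2-p)}`. Hence `∑ |γ_n|² ≤ C ‖x‖₂² ∑_{m ∈ S} d(m)^{-p/(2-p)}`.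
-/

open Finset

lemma sum_Icc_rpow_neg_le {e : ℝ} (he : 1 < e) {q : ℕ} (hq : 1 ≤ q) (N : ℕ) :
    ∑ j ∈ Icc q N, (j : ℝ) ^ (-e) ≤ (q : ℝ) ^ (-e) + (q : ℝ) ^ (1 - e) / (e - 1) := by
  have hq₀ : (0 : ℝ) < q := by exact_mod_cast hq
  rcases lt_or_ge N q with hN | hN
  · rw [Icc_eq_empty_of_lt hN, sum_empty]
    exact add_nonneg (by positivity) (div_nonneg (by positivity) (by linarith))
  have hanti : AntitoneOn (fun s : ℝ => s ^ (-e)) (Set.Icc (q : ℝ) N) := fun s hs t _ hst =>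
    Real.rpow_le_rpow_of_nonpos (hq₀.trans_le hs.1) hst (by linarith)
  have htail := hanti.sum_Ico_le_integral (integrableOn_Ioi_rpow_of_lt (by linarith) hq₀)
    fun s hs => (Real.rpow_pos_of_pos (hq₀.trans hs) _).le
  rw [integral_Ioi_rpow_of_lt (by linarith) hq₀, show -e + 1 = 1 - e by ring,
    neg_div, ← div_neg, neg_sub] at htail
  rw [← Ico_add_one_right_eq_Icc, sum_eq_sum_Ico_succ_bot (by omega), ← sum_Ico_add']
  exact add_le_add_right (mod_cast htail) _

lemma sum_rpow_neg_le_of_forall_le {e t : ℝ} (he : 1 < e) (ht : 1 ≤ t) {F : Finset ℕ}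
    (hF : ∀ j ∈ F, t ≤ j) :
    ∑ j ∈ F, (j : ℝ) ^ (-e) ≤ e / (e - 1) * t ^ (1 - e) := by
  have ht₀ : 0 < t := by linarith
  have hq : t ≤ ⌈t⌉₊ := Nat.le_ceil t
  have hsub : F ⊆ Icc ⌈t⌉₊ (F.sup id) := fun j hj =>
    mem_Icc.2 ⟨Nat.ceil_le.2 (hF j hj), le_sup (f := id) hj⟩
  calc ∑ j ∈ F, (j : ℝ) ^ (-e)
      ≤ ∑ j ∈ Icc ⌈t⌉₊ (F.sup id), (j : ℝ) ^ (-e) :=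
        sum_le_sum_of_subset_of_nonneg hsub fun _ _ _ => by positivity
    _ ≤ (⌈t⌉₊ : ℝ) ^ (-e) + (⌈t⌉₊ : ℝ) ^ (1 - e) / (e - 1) :=
        sum_Icc_rpow_neg_le he (Nat.one_le_cast.1 (ht.trans hq)) _
    _ ≤ t ^ (1 - e) + t ^ (1 - e) / (e - 1) := by
        gcongr ?_ + ?_ / _
        · exact (Real.rpow_le_rpow_of_nonpos ht₀ hq (by linarith)).trans
            (Real.rpow_le_rpow_of_exponent_le ht (by linarith))
        · exact Real.rpow_le_rpow_of_nonpos ht₀ hq (by linarith)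
    _ = e / (e - 1) * t ^ (1 - e) := by
        field_simp [show e - 1 ≠ 0 by linarith]
        ring

lemma sum_rpow_neg_div_le {e t : ℝ} (he : 1 < e) (ht : 1 ≤ t) {m : ℕ} {F : Finset ℕ}
    (hF : ∀ n ∈ F, m ∣ n ∧ t ≤ (n / m : ℕ)) :
    ∑ n ∈ F, ((n / m : ℕ) : ℝ) ^ (-e) ≤ e / (e - 1) * t ^ (1 - e) := by
  rw [← sum_image (f := fun k : ℕ => (k : ℝ) ^ (-e)) fun a ha b hb hab =>
    (Nat.div_left_inj (hF a ha).1 (hF b hb).1).1 hab]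
  exact sum_rpow_neg_le_of_forall_le he ht fun j hj => by
    obtain ⟨n, hn, rfl⟩ := mem_image.1 hj
    exact (hF n hn).2

lemma sum_rpow_neg_div_mul_le {α t : ℝ} (hα : 1 / 2 < α) (ht : 1 ≤ t) {m₁ m₂ : ℕ}
    {F : Finset ℕ} (hF : ∀ n ∈ F, m₁ ∣ n ∧ m₂ ∣ n ∧ t ≤ (n / m₁ : ℕ) ∧ t ≤ (n / m₂ : ℕ)) :
    ∑ n ∈ F, ((n / m₁ : ℕ) : ℝ) ^ (-α) * ((n / m₂ : ℕ) : ℝ) ^ (-α)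
      ≤ 2 * α / (2 * α - 1) * t ^ (1 - 2 * α) := by
  wlog h : m₁ ≤ m₂ generalizing m₁ m₂
  · simpa only [mul_comm] using this (fun n hn =>
      ⟨(hF n hn).2.1, (hF n hn).1, (hF n hn).2.2.2, (hF n hn).2.2.1⟩) (le_of_not_ge h)
  refine (sum_le_sum fun n hn => ?_).trans
    (sum_rpow_neg_div_le (by linarith) ht fun n hn => ⟨(hF n hn).2.1, (hF n hn).2.2.2⟩)
  obtain ⟨-, -, ht₁, ht₂⟩ := hF n hn
  have hm₁ : 0 < m₁ := Nat.pos_of_ne_zero fun h₀ => by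
    simp only [h₀, Nat.div_zero, Nat.cast_zero] at ht₁
    linarith
  have hk : (0 : ℝ) < (n / m₂ : ℕ) := by linarith
  calc ((n / m₁ : ℕ) : ℝ) ^ (-α) * ((n / m₂ : ℕ) : ℝ) ^ (-α)
      ≤ ((n / m₂ : ℕ) : ℝ) ^ (-α) * ((n / m₂ : ℕ) : ℝ) ^ (-α) := by
        refine mul_le_mul_of_nonneg_right (Real.rpow_le_rpow_of_nonpos hk ?_ (by linarith))
          (by positivity)
        exact_mod_cast Nat.div_le_div_left h hm₁
    _ = ((n / m₂ : ℕ) : ℝ) ^ (-(2 * α)) := by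
        rw [← Real.rpow_add hk]
        ring_nf

lemma sum_sum_sum_comm_biUnion {ι κ M : Type*} [DecidableEq κ] [AddCommMonoid M]
    (F : Finset ι) (A : ι → Finset κ) (f : ι → κ → κ → M) :
    ∑ n ∈ F, ∑ m₁ ∈ A n, ∑ m₂ ∈ A n, f n m₁ m₂ =
      ∑ m₁ ∈ F.biUnion A, ∑ m₂ ∈ F.biUnion A, ∑ n ∈ F with m₁ ∈ A n ∧ m₂ ∈ A n, f n m₁ m₂ := by
  rw [sum_comm' (t' := F.biUnion A) (s' := fun m₁ => F.filter (m₁ ∈ A ·))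
    (fun n m₁ => by simp only [mem_filter, mem_biUnion]; grind)]
  refine sum_congr rfl fun m₁ _ => sum_comm' fun n m₂ => ?_
  simp only [mem_filter, mem_biUnion]
  grind

lemma sq_sum_mul_le_sum_sum {ι κ : Type*} [DecidableEq κ] (F : Finset ι) (A : ι → Finset κ)
    (a : κ → ℝ) (w : ι → κ → ℝ) (hw : ∀ n m, 0 ≤ w n m) :
    ∑ n ∈ F, (∑ m ∈ A n, a m * w n m) ^ 2 ≤
      ∑ m₁ ∈ F.biUnion A, ∑ m₂ ∈ F.biUnion A,
        a m₁ ^ 2 * ∑ n ∈ F with m₁ ∈ A n ∧ m₂ ∈ A n, w n m₁ * w n m₂ := by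
  simp only [mul_sum]
  rw [← sum_sum_sum_comm_biUnion]
  refine sum_le_sum fun n _ => ?_
  have hcs := sum_sq_le_sum_mul_sum_of_sq_le_mul (A n) (r := fun m => a m * w n m)
    (f := fun m => a m ^ 2 * w n m) (g := w n) (fun m _ => mul_nonneg (sq_nonneg _) (hw n m))
    (fun m _ => hw n m) (fun m _ => (by ring : _ = _).le)
  simpa only [sum_mul_sum, mul_assoc] using hcs

lemma Nat.sum_divisors_filter_div {M : Type*} [AddCommMonoid M] (n : ℕ) (P : ℕ → ℕ → Prop)
    [∀ a b, Decidable (P a b)] (f : ℕ → ℕ → M) :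
    ∑ d ∈ n.divisors with P (n / d) d, f (n / d) d =
      ∑ m ∈ n.divisors with P m (n / m), f m (n / m) := by
  rw [sum_filter, sum_filter, ← Nat.sum_div_divisors]
  refine sum_congr rfl fun _ hd => ?_
  rw [Nat.div_div_self (Nat.dvd_of_mem_divisors hd) (Nat.ne_zero_of_mem_divisors hd)]

lemma norm_div_natCast_cpow {d : ℕ} (hd : 0 < d) (z : ℂ) (α : ℝ) :
    ‖z / (d : ℂ) ^ (α : ℂ)‖ = ‖z‖ * (d : ℝ) ^ (-α) := by
  rw [norm_div, Complex.norm_natCast_cpow_of_pos hd, Complex.ofReal_re,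
    Real.rpow_neg (Nat.cast_nonneg _), div_eq_mul_inv]

open Classical in
noncomputable def largeCofactorDivisors (S : Set ℕ) (β : ℝ) (n : ℕ) : Finset ℕ :=
  n.divisors.filter fun m => m ∈ S ∧ (n.divisors.card : ℝ) ^ β ≤ (n / m : ℕ)

lemma mem_largeCofactorDivisors {S : Set ℕ} {β : ℝ} {n m : ℕ} :
    m ∈ largeCofactorDivisors S β n ↔
      m ∈ n.divisors ∧ m ∈ S ∧ (n.divisors.card : ℝ) ^ β ≤ (n / m : ℕ) := by
  simp only [largeCofactorDivisors, mem_filter]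

lemma sum_rpow_neg_div_mul_le_indicator {α β κ : ℝ} (hα : 1 / 2 < α) (hβ : 0 ≤ β)
    (hκ : β * (2 * α - 1) = κ) (S : Set ℕ) (F : Finset ℕ) (m₁ m₂ : ℕ) :
    ∑ n ∈ F with m₁ ∈ largeCofactorDivisors S β n ∧ m₂ ∈ largeCofactorDivisors S β n,
        ((n / m₁ : ℕ) : ℝ) ^ (-α) * ((n / m₂ : ℕ) : ℝ) ^ (-α)
      ≤ 2 * α / (2 * α - 1) * S.indicator (fun m => 1 / (m.divisors.card : ℝ) ^ κ) m₂ := by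
  have hC : 0 ≤ 2 * α / (2 * α - 1) := div_nonneg (by linarith) (by linarith)
  rcases (F.filter fun n => m₁ ∈ largeCofactorDivisors S β n ∧
    m₂ ∈ largeCofactorDivisors S β n).eq_empty_or_nonempty with hF | ⟨n₀, hn₀⟩
  · rw [hF, sum_empty]
    exact mul_nonneg hC (Set.indicator_nonneg (fun _ _ => by positivity) _)
  have hm₂ := mem_largeCofactorDivisors.1 (mem_filter.1 hn₀).2.2
  have hd₂ : (1 : ℝ) ≤ m₂.divisors.card := Nat.one_le_cast.2 <| card_pos.2
    ⟨m₂, Nat.mem_divisors_self _ (Nat.pos_of_mem_divisors hm₂.1).ne'⟩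
  rw [Set.indicator_of_mem hm₂.2.1, one_div, ← Real.rpow_neg (by positivity), ← hκ,
    show -(β * (2 * α - 1)) = β * (1 - 2 * α) by ring, Real.rpow_mul (by positivity)]
  refine sum_rpow_neg_div_mul_le hα (Real.one_le_rpow hd₂ hβ) fun n hn => ?_
  rw [mem_filter, mem_largeCofactorDivisors, mem_largeCofactorDivisors] at hn
  obtain ⟨-, ⟨h₁, -, ht₁⟩, ⟨h₂, -, ht₂⟩⟩ := hn
  have hd : (m₂.divisors.card : ℝ) ^ β ≤ (n.divisors.card : ℝ) ^ β := by
    gcongr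
    exacts [Nat.ne_zero_of_mem_divisors h₂, Nat.dvd_of_mem_divisors h₂]
  exact ⟨Nat.dvd_of_mem_divisors h₁, Nat.dvd_of_mem_divisors h₂, hd.trans ht₁, hd.trans ht₂⟩

open Classical in
lemma norm_sum_div_cpow_le_sum_largeCofactorDivisors (S : Set ℕ) (α β : ℝ) (x : ℕ → ℂ) (n : ℕ) :
    ‖∑ d ∈ n.divisors.filter (fun d => n / d ∈ S ∧ (n.divisors.card : ℝ) ^ β ≤ d),
        x (n / d) / (d : ℂ) ^ (α : ℂ)‖
      ≤ ∑ m ∈ largeCofactorDivisors S β n, ‖x m‖ * ((n / m : ℕ) : ℝ) ^ (-α) :=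
  calc _ ≤ ∑ d ∈ n.divisors.filter (fun d => n / d ∈ S ∧ (n.divisors.card : ℝ) ^ β ≤ d),
          ‖x (n / d)‖ * (d : ℝ) ^ (-α) :=
        (norm_sum_le _ _).trans_eq <| sum_congr rfl fun _ hd =>
          norm_div_natCast_cpow (Nat.pos_of_mem_divisors (mem_filter.1 hd).1) _ _
    _ = _ := Nat.sum_divisors_filter_div n (fun m d => m ∈ S ∧ _ ≤ (d : ℝ))
          fun m d => ‖x m‖ * (d : ℝ) ^ (-α)

open Classical in
theorem gamma_in_l2_general
    (α p β : ℝ) (hα : 1 / 2 < α) (hp1 : 1 < p) (hp2 : p < 2)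
    (hβ : β = p / ((2 - p) * (2 * α - 1)))
    (S : Set ℕ)
    (hS : Summable fun n : S => 1 / ((n : ℕ).divisors.card : ℝ) ^ (p / (2 - p)))
    (x : ℕ → ℂ)
    (hx2 : Summable fun n => ‖x n‖ ^ 2) :
    Summable fun n : ℕ =>
      ‖∑ d ∈ n.divisors.filter
          (fun d => n / d ∈ S ∧ ((n.divisors.card : ℝ)) ^ β ≤ (d : ℝ)),
        x (n / d) / (d : ℂ) ^ (α : ℂ)‖ ^ 2 := by
  have hβ₀ : 0 ≤ β := hβ ▸ div_nonneg (by linarith) (mul_nonneg (by linarith) (by linarith))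
  have hκ : β * (2 * α - 1) = p / (2 - p) := by
    rw [hβ]
    field_simp [show 2 * α - 1 ≠ 0 by linarith]
  set A := largeCofactorDivisors S β
  set b := S.indicator fun m : ℕ => 1 / (m.divisors.card : ℝ) ^ (p / (2 - p))
  have hb : Summable b := summable_subtype_iff_indicator.mp hS
  refine summable_of_sum_le (c := (∑' n, ‖x n‖ ^ 2) * (2 * α / (2 * α - 1) * ∑' m, b m))
    (fun n => by positivity) fun F => ?_
  calc _ ≤ ∑ n ∈ F, (∑ m ∈ A n, ‖x m‖ * ((n / m : ℕ) : ℝ) ^ (-α)) ^ 2 := by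
        gcongr with n
        exact norm_sum_div_cpow_le_sum_largeCofactorDivisors S α β x n
    _ ≤ _ := sq_sum_mul_le_sum_sum F A _ _ fun _ _ => by positivity
    _ ≤ ∑ m₁ ∈ F.biUnion A, ∑ m₂ ∈ F.biUnion A, ‖x m₁‖ ^ 2 * (2 * α / (2 * α - 1) * b m₂) := by
        gcongr with m₁ _ m₂ _
        exact sum_rpow_neg_div_mul_le_indicator hα hβ₀ hκ S F m₁ m₂
    _ = (∑ m ∈ F.biUnion A, ‖x m‖ ^ 2) * (2 * α / (2 * α - 1) * ∑ m ∈ F.biUnion A, b m) := by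
        rw [mul_sum, sum_mul_sum]
    _ ≤ _ := by
        have hC : 0 ≤ 2 * α / (2 * α - 1) := div_nonneg (by linarith) (by linarith)
        have hb₀ : ∀ m, 0 ≤ b m := Set.indicator_nonneg fun _ _ => by positivity
        gcongr ?_ * (_ * ?_)
        · exact mul_nonneg hC (sum_nonneg fun m _ => hb₀ m)
        · exact hx2.sum_le_tsum _ fun _ _ => by positivity
        · exact hb.sum_le_tsum _ fun m _ => hb₀ m

open Classical in
/-- Proposition: with β = p/((2-p)(2α-1)) and S as in the text, the part of
the convolution over large divisors, γ_n = ∑_{d∣n, n/d∈S, d ≥ d(n)^β} x_{n/d}/d^α,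
belongs to ℓ². -/
theorem gamma_in_l2
    (α p β : ℝ) (hα : 1 / 2 < α) (hp1 : 1 < p) (hp2 : p < 2)
    (hβ : β = p / ((2 - p) * (2 * α - 1)))
    (S : Set ℕ) (h0 : 0 ∉ S)
    (hS : Summable fun n : S => 1 / ((n : ℕ).divisors.card : ℝ) ^ (p / (2 - p)))
    (x : ℕ → ℂ) (hx0 : x 0 = 0)
    (hsupp : ∀ n : ℕ, x n ≠ 0 → n ∈ S)
    (hxle : ∀ n : ℕ, ‖x n‖ ≤ 1)
    (hx2 : Summable fun n => ‖x n‖ ^ 2) :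
    Summable fun n : ℕ =>
      ‖∑ d ∈ n.divisors.filter
          (fun d => n / d ∈ S ∧ ((n.divisors.card : ℝ)) ^ β ≤ (d : ℝ)),
        x (n / d) / (d : ℂ) ^ (α : ℂ)‖ ^ 2 :=
  gamma_in_l2_general α p β hα hp1 hp2 hβ S hS x hx2
end

section
/- Let f : ℕ → ℝ be nonnegative with ∑_n f(n)^q < ∞ for some q ∈ [1, ∞). Then the Dirichlet convolution operator D_f : ℓ^1 → ℓ^q defined by (D_f x)(n) = ∑_{k ∣ n} f(n/k) x_k is bounded with operator norm exactly ‖D_f‖_{1,q} = (∑_n f(n)^q)^{1/q}. -/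
open scoped ENNReal NNReal

private lemma aux_jensen_dir (q : ℝ) (hq : 1 ≤ q) (s : Finset ℕ) (w z : ℕ → ℝ≥0∞)
    (C : ℝ≥0∞) (hCtop : C ≠ ⊤) (hC : ∑ k ∈ s, w k ≤ C) :
    (∑ k ∈ s, w k * z k) ^ q ≤ C ^ (q - 1) * ∑ k ∈ s, w k * z k ^ q := by
  have hq0 : (0:ℝ) < q := lt_of_lt_of_le one_pos hq
  set W : ℝ≥0∞ := ∑ k ∈ s, w k with hW
  rcases eq_or_ne W 0 with hW0 | hW0
  · have hwz : ∀ k ∈ s, w k * z k = 0 := by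
      intro k hk
      have hsz : ∑ k ∈ s, w k = 0 := by rw [← hW]; exact hW0
      have hw : w k = 0 := Finset.sum_eq_zero_iff.mp hsz k hk
      simp [hw]
    rw [Finset.sum_eq_zero hwz, ENNReal.zero_rpow_of_pos hq0]
    exact zero_le
  · have hWtop : W ≠ ⊤ := ne_top_of_le_ne_top hCtop hC
    have hww : ∑ k ∈ s, w k / W = 1 := by
      simp_rw [div_eq_mul_inv]
      rw [← Finset.sum_mul, ← hW, ← div_eq_mul_inv, ENNReal.div_self hW0 hWtop]
    have key := ENNReal.rpow_arith_mean_le_arith_mean_rpow s (fun k => w k / W) z hww hq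
    have h1 : ∀ k, (w k / W) * z k = (w k * z k) / W := fun k => by
      simp [div_eq_mul_inv, mul_right_comm]
    have h2 : ∀ k, (w k / W) * z k ^ q = (w k * z k ^ q) / W := fun k => by
      simp [div_eq_mul_inv, mul_right_comm]
    simp only [h1, h2] at key
    have hsd1 : ∑ k ∈ s, w k * z k / W = (∑ k ∈ s, w k * z k) / W := by
      simp_rw [div_eq_mul_inv]; rw [← Finset.sum_mul]
    have hsd2 : ∑ k ∈ s, w k * z k ^ q / W = (∑ k ∈ s, w k * z k ^ q) / W := by
      simp_rw [div_eq_mul_inv]; rw [← Finset.sum_mul]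
    rw [hsd1, hsd2, ENNReal.div_rpow_of_nonneg _ _ hq0.le] at key
    set A := ∑ k ∈ s, w k * z k
    set B := ∑ k ∈ s, w k * z k ^ q
    have hWq0 : W ^ q ≠ 0 := by
      simp [ENNReal.rpow_eq_zero_iff, hW0, hWtop, hq0, not_lt.mpr hq0.le]
    have hWqt : W ^ q ≠ ⊤ := ENNReal.rpow_ne_top_of_nonneg hq0.le hWtop
    have hA : A ^ q ≤ (B / W) * W ^ q := by
      rw [← ENNReal.div_le_iff_le_mul (Or.inl hWq0) (Or.inl hWqt)]
      exact key
    have hBW : (B / W) * W ^ q = W ^ (q - 1) * B := by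
      rw [ENNReal.rpow_sub q 1 hW0 hWtop, ENNReal.rpow_one]
      simp only [div_eq_mul_inv]
      ring_nf
    refine hA.trans (hBW ▸ mul_le_mul' (ENNReal.rpow_le_rpow hC (by linarith)) le_rfl)

private lemma dirichlet_key (q : ℝ) (hq : 1 ≤ q)
    (f : ℕ → ℝ) (hf0 : f 0 = 0) (hfpos : ∀ n, 0 ≤ f n)
    (hf : Summable fun n => f n ^ q)
    (x : ℕ → ℂ) (hx0 : x 0 = 0) (hx : Summable fun n => ‖x n‖) :
    (Summable fun n : ℕ => ‖∑ k ∈ n.divisors, (f (n / k) : ℂ) * x k‖ ^ q) ∧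
      (∑' n : ℕ, ‖∑ k ∈ n.divisors, (f (n / k) : ℂ) * x k‖ ^ q) ^ (1 / q) ≤
        (∑' n : ℕ, f n ^ q) ^ (1 / q) * ∑' n : ℕ, ‖x n‖ := by
  have hq0 : (0:ℝ) < q := lt_of_lt_of_le one_pos hq
  have hq0' : q ≠ 0 := hq0.ne'
  set T : ℕ → ℂ := fun n => ∑ k ∈ n.divisors, (f (n / k) : ℂ) * x k with hT
  set c : ℕ → ℝ≥0∞ := fun k => (‖x k‖₊ : ℝ≥0∞) with hc
  have hxnn : Summable fun n => ‖x n‖₊ := by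
    rw [← NNReal.summable_coe]; simpa using hx
  set C : ℝ≥0∞ := ∑' k, c k with hCdef
  have hCcoe : C = ↑(∑' k, ‖x k‖₊) := (ENNReal.coe_tsum hxnn).symm
  have hCtop : C ≠ ⊤ := by rw [hCcoe]; exact ENNReal.coe_ne_top
  have hCr : C.toReal = ∑' n, ‖x n‖ := by
    rw [hCcoe, ENNReal.coe_toReal, NNReal.coe_tsum]
    simp
  rcases eq_or_ne C 0 with hC0 | hC0
  · have hxz : ∀ k, x k = 0 := by
      intro k
      have := (ENNReal.tsum_eq_zero.mp hC0) k
      simpa [hc] using this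
    have hTz : ∀ n, T n = 0 := fun n => Finset.sum_eq_zero fun k _ => by simp [hxz k]
    have h0 : (fun n : ℕ => ‖T n‖ ^ q) = fun _ => 0 := funext fun n => by
      simp [hTz n, Real.zero_rpow hq0']
    constructor
    · rw [show (fun n : ℕ => ‖∑ k ∈ n.divisors, (f (n / k) : ℂ) * x k‖ ^ q) = fun _ => (0:ℝ) from h0]
      exact summable_zero
    · rw [show (fun n : ℕ => ‖∑ k ∈ n.divisors, (f (n / k) : ℂ) * x k‖ ^ q) = fun _ => (0:ℝ) from h0]
      rw [tsum_zero, Real.zero_rpow (one_div_ne_zero hq0')]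
      exact mul_nonneg (Real.rpow_nonneg (tsum_nonneg fun n => Real.rpow_nonneg (hfpos n) q) _)
        (tsum_nonneg fun n => norm_nonneg _)
  · set F : ℕ → ℝ≥0∞ := fun m => ENNReal.ofReal (f m) with hFdef
    set Φ : ℝ≥0∞ := ∑' m, F m ^ q with hΦdef
    have hΦ : Φ = ENNReal.ofReal (∑' m, f m ^ q) := by
      rw [ENNReal.ofReal_tsum_of_nonneg (fun n => Real.rpow_nonneg (hfpos n) q) hf]
      exact tsum_congr fun m => ENNReal.ofReal_rpow_of_nonneg (hfpos m) hq0.le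
    have hΦtop : Φ ≠ ⊤ := by rw [hΦ]; exact ENNReal.ofReal_ne_top
    -- pointwise bound
    have hpt : ∀ n, (‖T n‖₊ : ℝ≥0∞) ^ q ≤ C ^ (q - 1) * ∑ k ∈ n.divisors, c k * F (n / k) ^ q := by
      intro n
      have h1 : (‖T n‖₊ : ℝ≥0∞) ≤ ∑ k ∈ n.divisors, c k * F (n / k) := by
        rw [← enorm_eq_nnnorm, ← ofReal_norm]
        have hb : ‖T n‖ ≤ ∑ k ∈ n.divisors, f (n / k) * ‖x k‖ := by
          refine (norm_sum_le _ _).trans (le_of_eq (Finset.sum_congr rfl fun k _ => ?_))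
          rw [norm_mul, Complex.norm_real, Real.norm_eq_abs, abs_of_nonneg (hfpos _)]
        refine (ENNReal.ofReal_le_ofReal hb).trans (le_of_eq ?_)
        rw [ENNReal.ofReal_sum_of_nonneg fun k _ => mul_nonneg (hfpos _) (norm_nonneg _)]
        refine Finset.sum_congr rfl fun k _ => ?_
        rw [ENNReal.ofReal_mul (hfpos _), ofReal_norm, enorm_eq_nnnorm, mul_comm]
      calc (‖T n‖₊ : ℝ≥0∞) ^ q ≤ (∑ k ∈ n.divisors, c k * F (n / k)) ^ q :=
            ENNReal.rpow_le_rpow h1 hq0.le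
        _ ≤ C ^ (q - 1) * ∑ k ∈ n.divisors, c k * F (n / k) ^ q :=
            aux_jensen_dir q hq n.divisors c (fun k => F (n / k)) C hCtop
              (ENNReal.sum_le_tsum _)
    -- Fubini
    have hFub : ∑' n, ∑ k ∈ n.divisors, c k * F (n / k) ^ q = Φ * C := by
      have h2 : ∀ n : ℕ, ∑ k ∈ n.divisors, c k * F (n / k) ^ q
          = ∑' p : ((fun p : ℕ × ℕ => p.1 * p.2) ⁻¹' {n}),
              F (p : ℕ × ℕ).1 ^ q * c (p : ℕ × ℕ).2 := by
        intro n
        rcases eq_or_ne n 0 with rfl | hn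
        · have hz : ∀ p : ((fun p : ℕ × ℕ => p.1 * p.2) ⁻¹' {(0:ℕ)}),
              F (p : ℕ × ℕ).1 ^ q * c (p : ℕ × ℕ).2 = 0 := by
            rintro ⟨⟨a, b⟩, hp⟩
            simp only [Set.mem_preimage, Set.mem_singleton_iff, Nat.mul_eq_zero] at hp
            rcases hp with rfl | rfl
            · simp [hFdef, hf0, ENNReal.zero_rpow_of_pos hq0]
            · simp [hc, hx0]
          rw [tsum_congr hz]
          simp
        · rw [show ((fun p : ℕ × ℕ => p.1 * p.2) ⁻¹' {n}) = ↑n.divisorsAntidiagonal by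
              ext p; simp [Nat.mem_divisorsAntidiagonal, hn, eq_comm],
            Finset.tsum_subtype' n.divisorsAntidiagonal (fun p => F p.1 ^ q * c p.2),
            Nat.sum_divisorsAntidiagonal' (f := fun a b => F a ^ q * c b)]
          exact Finset.sum_congr rfl fun k _ => mul_comm _ _
      rw [tsum_congr h2,
        ENNReal.tsum_fiberwise (fun p : ℕ × ℕ => F p.1 ^ q * c p.2) (fun p => p.1 * p.2),
        ENNReal.tsum_prod' (f := fun p : ℕ × ℕ => F p.1 ^ q * c p.2)]
      simp only
      simp_rw [ENNReal.tsum_mul_left]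
      rw [ENNReal.tsum_mul_right]
    set S : ℝ≥0∞ := ∑' n, (‖T n‖₊ : ℝ≥0∞) ^ q with hSdef
    have hSle : S ≤ Φ * C ^ q := by
      calc S ≤ ∑' n, C ^ (q - 1) * ∑ k ∈ n.divisors, c k * F (n / k) ^ q :=
            ENNReal.tsum_le_tsum hpt
        _ = C ^ (q - 1) * (Φ * C) := by rw [ENNReal.tsum_mul_left, hFub]
        _ = Φ * C ^ q := by
            rw [show q = (q - 1) + 1 by ring, ENNReal.rpow_add _ _ hC0 hCtop,
              ENNReal.rpow_one]
            ring_nf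
    have hRtop : Φ * C ^ q ≠ ⊤ :=
      ENNReal.mul_ne_top hΦtop (ENNReal.rpow_ne_top_of_nonneg hq0.le hCtop)
    have hStop : S ≠ ⊤ := (lt_of_le_of_lt hSle (lt_top_iff_ne_top.mpr hRtop)).ne
    have hSc : S = ∑' n, ((‖T n‖₊ ^ q : ℝ≥0) : ℝ≥0∞) :=
      tsum_congr fun n => (ENNReal.coe_rpow_of_nonneg _ hq0.le).symm
    have hsum : Summable fun n => (‖T n‖₊ ^ q : ℝ≥0) :=
      ENNReal.tsum_coe_ne_top_iff_summable.mp (hSc ▸ hStop)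
    have hs1 : (fun n : ℕ => ‖T n‖ ^ q) = fun n => ((‖T n‖₊ ^ q : ℝ≥0) : ℝ) :=
      funext fun n => by rw [NNReal.coe_rpow, coe_nnnorm]
    have hsummable : Summable fun n : ℕ => ‖T n‖ ^ q := hs1 ▸ NNReal.summable_coe.mpr hsum
    refine ⟨hsummable, ?_⟩
    have htsum : (∑' n, ‖T n‖ ^ q) = S.toReal := by
      rw [hs1, ← NNReal.coe_tsum, hSc, ← ENNReal.coe_tsum hsum, ENNReal.coe_toReal]
    have hΦr : (∑' n, f n ^ q) = Φ.toReal := by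
      rw [hΦ, ENNReal.toReal_ofReal (tsum_nonneg fun n => Real.rpow_nonneg (hfpos n) q)]
    rw [htsum, hΦr, ← hCr]
    have h4 : S.toReal ≤ Φ.toReal * C.toReal ^ q := by
      have := ENNReal.toReal_mono hRtop hSle
      rwa [ENNReal.toReal_mul, ← ENNReal.toReal_rpow] at this
    calc S.toReal ^ (1 / q) ≤ (Φ.toReal * C.toReal ^ q) ^ (1 / q) :=
          Real.rpow_le_rpow ENNReal.toReal_nonneg h4 (by positivity)
      _ = Φ.toReal ^ (1 / q) * C.toReal := by
          rw [Real.mul_rpow ENNReal.toReal_nonneg (Real.rpow_nonneg ENNReal.toReal_nonneg q),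
            ← Real.rpow_mul ENNReal.toReal_nonneg, mul_one_div_cancel hq0', Real.rpow_one]

/-- For nonnegative f with ∑ f(n)^q < ∞, the Dirichlet convolution operator
D_f : ℓ¹ → ℓ^q is bounded with operator norm exactly ‖f‖_q. -/
theorem dirichlet_operator_norm_l1_lq
    (q : ℝ) (hq : 1 ≤ q)
    (f : ℕ → ℝ) (hf0 : f 0 = 0) (hfpos : ∀ n, 0 ≤ f n)
    (hf : Summable fun n => f n ^ q) :
    (∀ x : ℕ → ℂ, x 0 = 0 → (Summable fun n => ‖x n‖) →
      (Summable fun n : ℕ =>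
          ‖∑ k ∈ n.divisors, (f (n / k) : ℂ) * x k‖ ^ q) ∧
        (∑' n : ℕ, ‖∑ k ∈ n.divisors, (f (n / k) : ℂ) * x k‖ ^ q) ^ (1 / q) ≤
          (∑' n : ℕ, f n ^ q) ^ (1 / q) * ∑' n : ℕ, ‖x n‖) ∧
    sSup {r : ℝ | ∃ x : ℕ → ℂ, x 0 = 0 ∧ (∑' n : ℕ, ‖x n‖) = 1 ∧
        r = (∑' n : ℕ, ‖∑ k ∈ n.divisors, (f (n / k) : ℂ) * x k‖ ^ q) ^ (1 / q)} =
      (∑' n : ℕ, f n ^ q) ^ (1 / q) := by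
  have hq0 : (0:ℝ) < q := lt_of_lt_of_le one_pos hq
  have hq0' : q ≠ 0 := hq0.ne'
  refine ⟨fun x hx0 hx => dirichlet_key q hq f hf0 hfpos hf x hx0 hx, ?_⟩
  set M := (∑' n : ℕ, f n ^ q) ^ (1 / q) with hM
  have hub : ∀ r ∈ {r : ℝ | ∃ x : ℕ → ℂ, x 0 = 0 ∧ (∑' n : ℕ, ‖x n‖) = 1 ∧
      r = (∑' n : ℕ, ‖∑ k ∈ n.divisors, (f (n / k) : ℂ) * x k‖ ^ q) ^ (1 / q)}, r ≤ M := by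
    rintro r ⟨x, hx0, hx1, rfl⟩
    have hsx : Summable fun n => ‖x n‖ := by
      by_contra h
      rw [tsum_eq_zero_of_not_summable h] at hx1
      norm_num at hx1
    have h := (dirichlet_key q hq f hf0 hfpos hf x hx0 hsx).2
    rwa [hx1, mul_one] at h
  have hmem : M ∈ {r : ℝ | ∃ x : ℕ → ℂ, x 0 = 0 ∧ (∑' n : ℕ, ‖x n‖) = 1 ∧
      r = (∑' n : ℕ, ‖∑ k ∈ n.divisors, (f (n / k) : ℂ) * x k‖ ^ q) ^ (1 / q)} := by
    refine ⟨fun n => if n = 1 then 1 else 0, by norm_num, ?_, ?_⟩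
    · have h1 : ∀ n : ℕ, ‖if n = 1 then (1:ℂ) else 0‖ = if n = 1 then (1:ℝ) else 0 :=
        fun n => by split <;> simp
      rw [tsum_congr h1, tsum_ite_eq]
    · have hTn : ∀ n : ℕ,
          ‖∑ k ∈ n.divisors, (f (n / k) : ℂ) * (if k = 1 then (1:ℂ) else 0)‖ ^ q = f n ^ q := by
        intro n
        have hs : ∑ k ∈ n.divisors, (f (n / k) : ℂ) * (if k = 1 then (1:ℂ) else 0)
            = if 1 ∈ n.divisors then (f (n / 1) : ℂ) else 0 := by
          rw [Finset.sum_congr rfl (fun k _ => by rw [mul_ite, mul_one, mul_zero])]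
          exact Finset.sum_ite_eq' _ _ _
        rw [hs]
        rcases eq_or_ne n 0 with rfl | hn
        · simp [hf0, Real.zero_rpow hq0']
        · rw [if_pos (Nat.one_mem_divisors.mpr hn), Nat.div_one, Complex.norm_real,
            Real.norm_eq_abs, abs_of_nonneg (hfpos n)]
      rw [tsum_congr hTn]
  exact le_antisymm (csSup_le ⟨M, hmem⟩ hub) (le_csSup ⟨M, hub⟩ hmem)
end
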